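/- arXiv:math-ph/0204001 — 7 statements merged into one kernel-verified Lean document; each statement's English description precedes it below -/
import Mathlib

section
/- In the Lax-pair setup, fix k ≤ s ≤ N−1. Let m_s and m_{s+1} be the solutions of the discrete Riemann–Hilbert problems on {π_0,…,π_{s−1}} and {π_0,…,π_s} with jump matrices w(π_x) = [[0, ω(x)],[0,0]] and asymptotics m_s(ζ)·diag(ζ^{−k},ζ^{k}) → I, m_{s+1}(ζ)·diag(ζ^{−k},ζ^{k}) → I as ζ → ∞. Let A_s = [[p_s, q_s],[r_s, −p_s]] be the matrix with A_s² = 0 and m_{s+1}(ζ) = (I + (ζ−π_s)^{−1}A_s)·m_s(ζ), and let M_s be the entire extension of ζ ↦ m_s(σζ)·D(ζ)·m_{s+1}(ζ)^{−1}, D(ζ) = diag(d_1(ζ), d_2(ζ)). Denote by μ^{ij} the entries of M_s(π_{s+1}). If p_s ≠ 0 (so also q_s ≠ 0), then (m_{s+1}(π_{s+1}))_{11} = d_2(π_{s+1})^{−1}·(μ^{22} + (p_s/q_s)·μ^{12})·(m_s(π_s))_{11}. -/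
open Filter Topology Matrix Polynomial

noncomputable section

/-- 2×2 complex matrices. -/
abbrev Mat2 : Type := Matrix (Fin 2) (Fin 2) ℂ

/-- Entrywise complex differentiability (= analyticity) of a matrix-valued function on a set. -/
def EntryDiffOn (m : ℂ → Mat2) (U : Set ℂ) : Prop :=
  ∀ i j, DifferentiableOn ℂ (fun ζ => m ζ i j) U

/-- `m` solves the discrete Riemann–Hilbert problem `(Z, w)`: `m` is analytic off `Z`, has at
most a simple pole at each `x ∈ Z` (i.e. `ζ ↦ (ζ - x) • m ζ` extends analytically to a
neighbourhood of `x`), and the value at `x` of this extension (the residue of `m` at `x`)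
equals the limit of `m(ζ) * w(x)` as `ζ → x`. -/
def SolvesDRHP (Z : Finset ℂ) (w : ℂ → Mat2) (m : ℂ → Mat2) : Prop :=
  EntryDiffOn m ((Z : Set ℂ))ᶜ ∧
  ∀ x ∈ Z, ∃ g : ℂ → Mat2,
    EntryDiffOn g (((Z : Set ℂ))ᶜ ∪ {x}) ∧
    (∀ ζ, ζ ∉ (Z : Set ℂ) → g ζ = (ζ - x) • m ζ) ∧
    Filter.Tendsto (fun ζ => m ζ * w x) (𝓝[≠] x) (𝓝 (g x))

/-- The asymptotic condition `m(ζ) · diag(ζ^{-k}, ζ^k) → I` as `ζ → ∞`. -/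
def AsympId (k : ℕ) (m : ℂ → Mat2) : Prop :=
  Filter.Tendsto (fun ζ : ℂ => m ζ * Matrix.diagonal ![ζ⁻¹ ^ k, ζ ^ k])
    (Bornology.cobounded ℂ) (𝓝 1)

/-- The finite set `{π 0, …, π (s-1)}` regarded as a finite subset of `ℂ`. -/
def Zset (π : ℕ → ℝ) (s : ℕ) : Finset ℂ :=
  (Finset.range s).image fun x => (π x : ℂ)


lemma aux_detOne (Z : Finset ℂ) (w : ℂ → Mat2)
    (hwZ : ∀ x ∈ Z, ∃ a : ℂ, w x = !![(0:ℂ), a; 0, 0])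
    (m : ℂ → Mat2) (hm : SolvesDRHP Z w m) (k : ℕ) (hma : AsympId k m) :
    ∀ ζ, ζ ∉ (Z : Set ℂ) → (m ζ).det = 1 := by
  classical
  -- local extensions of det ∘ m across each x ∈ Z
  have hloc : ∀ x ∈ Z, ∃ h : ℂ → ℂ,
      DifferentiableOn ℂ h (((Z : Set ℂ))ᶜ ∪ {x}) ∧
      ∀ ζ, ζ ∉ (Z : Set ℂ) → h ζ = (m ζ).det := by
    intro x hx
    obtain ⟨g, hg1, hg2, hg3⟩ := hm.2 x hx
    obtain ⟨a, hwa⟩ := hwZ x hx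
    set U : Set ℂ := ((Z : Set ℂ))ᶜ ∪ {x} with hU
    have hUopen : IsOpen U := by
      have : U = ((↑(Z.erase x) : Set ℂ))ᶜ := by
        ext ζ; simp only [hU, Set.mem_union, Set.mem_compl_iff, Finset.mem_coe,
          Set.mem_singleton_iff, Finset.coe_erase, Set.mem_diff, Finset.mem_erase,
          not_and_or, not_not]
      rw [this]
      exact (Z.erase x).finite_toSet.isClosed.isOpen_compl
    have hxU : x ∈ U := Or.inr rfl
    have hUnhds : U ∈ 𝓝 x := hUopen.mem_nhds hxU
    -- entrywise limits of m ζ * w x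
    have hlim : ∀ i j, Tendsto (fun ζ => (m ζ * w x) i j) (𝓝[≠] x) (𝓝 (g x i j)) := by
      intro i j
      exact ((continuous_apply j).comp (continuous_apply i)).continuousAt.tendsto.comp hg3
    have hmw0 : ∀ i (ζ : ℂ), (m ζ * w x) i 0 = 0 := by
      intro i ζ; simp [hwa, Matrix.mul_apply, Fin.sum_univ_two]
    have hmw1 : ∀ i (ζ : ℂ), (m ζ * w x) i 1 = m ζ i 0 * a := by
      intro i ζ; simp [hwa, Matrix.mul_apply, Fin.sum_univ_two]
    -- first column of g vanishes at x
    have hg0 : ∀ i, g x i 0 = 0 := by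
      intro i
      have : Tendsto (fun ζ : ℂ => (0:ℂ)) (𝓝[≠] x) (𝓝 (g x i 0)) := by
        simpa [hmw0] using hlim i 0
      exact tendsto_nhds_unique this tendsto_const_nhds
    -- second column values
    have hgdiffAt : ∀ i j, DifferentiableAt ℂ (fun ζ => g ζ i j) x :=
      fun i j => ((hg1 i j).differentiableAt hUnhds)
    have hev : ∀ᶠ ζ in 𝓝[≠] x, ζ ∉ (Z : Set ℂ) ∧ ζ ≠ x := by
      filter_upwards [self_mem_nhdsWithin, mem_nhdsWithin_of_mem_nhds hUnhds] with ζ h1 h2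
      refine ⟨?_, h1⟩
      rcases h2 with h | h
      · exact h
      · exact absurd h h1
    have hg1col : ∀ i, g x i 1 = deriv (fun ζ => g ζ i 0) x * a := by
      intro i
      have hds : Tendsto (fun ζ => dslope (fun z => g z i 0) x ζ * a) (𝓝[≠] x)
          (𝓝 (deriv (fun ζ => g ζ i 0) x * a)) := by
        have hc : ContinuousAt (dslope (fun z => g z i 0) x) x :=
          continuousAt_dslope_same.2 (hgdiffAt i 0)
        have h2 : Tendsto (dslope (fun z => g z i 0) x) (𝓝[≠] x)
            (𝓝 (dslope (fun z => g z i 0) x x)) :=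
          hc.tendsto.mono_left nhdsWithin_le_nhds
        rw [dslope_same] at h2
        exact h2.mul tendsto_const_nhds
      have heq : ∀ᶠ ζ in 𝓝[≠] x, dslope (fun z => g z i 0) x ζ * a = (m ζ * w x) i 1 := by
        filter_upwards [hev] with ζ ⟨hζZ, hζx⟩
        rw [hmw1, dslope_of_ne _ hζx, slope_def_field, hg2 ζ hζZ, hg0 i]
        simp only [Matrix.smul_apply, smul_eq_mul, sub_zero]
        field_simp
      exact tendsto_nhds_unique (hlim i 1) (hds.congr' heq)
    -- the determinant of g
    set f : ℂ → ℂ := fun ζ => (g ζ).det with hf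
    have hfeq : ∀ ζ, f ζ = g ζ 0 0 * g ζ 1 1 - g ζ 0 1 * g ζ 1 0 := by
      intro ζ; rw [hf]; exact Matrix.det_fin_two _
    have hfx : f x = 0 := by rw [hfeq]; simp [hg0]
    have hderiv : deriv f x = 0 := by
      have h00 := ((hgdiffAt 0 0).hasDerivAt); have h11 := ((hgdiffAt 1 1).hasDerivAt)
      have h01 := ((hgdiffAt 0 1).hasDerivAt); have h10 := ((hgdiffAt 1 0).hasDerivAt)
      have hF : HasDerivAt f ((deriv (fun ζ => g ζ 0 0) x * g x 1 1 +
          g x 0 0 * deriv (fun ζ => g ζ 1 1) x) -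
          (deriv (fun ζ => g ζ 0 1) x * g x 1 0 +
          g x 0 1 * deriv (fun ζ => g ζ 1 0) x)) x := by
        have hfun : f = fun ζ => g ζ 0 0 * g ζ 1 1 - g ζ 0 1 * g ζ 1 0 := funext hfeq
        rw [hfun]; exact (h00.mul h11).sub (h01.mul h10)
      rw [hF.deriv, hg0 0, hg0 1, hg1col 0, hg1col 1]
      ring
    refine ⟨dslope (dslope f x) x, ?_, ?_⟩
    · rw [Complex.differentiableOn_dslope hUnhds, Complex.differentiableOn_dslope hUnhds]
      intro ζ hζ
      have := (((hg1 0 0 ζ hζ).mul (hg1 1 1 ζ hζ)).sub ((hg1 0 1 ζ hζ).mul (hg1 1 0 ζ hζ)))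
      exact this.congr (fun z _ => (hfeq z)) (hfeq ζ)
    · intro ζ hζZ
      have hζx : ζ ≠ x := fun h => hζZ (h ▸ hx)
      have hsub : ζ - x ≠ 0 := sub_ne_zero.2 hζx
      rw [dslope_of_ne _ hζx, slope_def_field, dslope_same, hderiv,
        dslope_of_ne _ hζx, slope_def_field, hfx]
      have : f ζ = (ζ - x) ^ 2 * (m ζ).det := by
        rw [hfeq, hg2 ζ hζZ, Matrix.det_fin_two]
        simp [Matrix.smul_apply]
        ring
      rw [this]
      field_simp
      ring
  -- glue the local extensions into an entire function E
  choose! h hhd hhe using hloc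
  set E : ℂ → ℂ := fun ζ => if hζ : ζ ∈ Z then h ζ ζ else (m ζ).det with hE
  have hEoff : ∀ ζ, ζ ∉ (Z : Set ℂ) → E ζ = (m ζ).det := by
    intro ζ hζ
    simp only [hE]
    rw [dif_neg (by simpa using hζ)]
  have hUo : ∀ x : ℂ, IsOpen (((Z : Set ℂ))ᶜ ∪ {x}) := by
    intro x
    have : ((Z : Set ℂ))ᶜ ∪ {x} = ((↑(Z.erase x) : Set ℂ))ᶜ := by
      ext ζ; simp only [Set.mem_union, Set.mem_compl_iff, Finset.mem_coe,
        Set.mem_singleton_iff, Finset.coe_erase, Set.mem_diff, Finset.mem_erase,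
        not_and_or, not_not]
    rw [this]
    exact (Z.erase x).finite_toSet.isClosed.isOpen_compl
  have hdetm : DifferentiableOn ℂ (fun ζ => (m ζ).det) (((Z : Set ℂ))ᶜ) := by
    intro ζ hζ
    have := (((hm.1 0 0 ζ hζ).mul (hm.1 1 1 ζ hζ)).sub ((hm.1 0 1 ζ hζ).mul (hm.1 1 0 ζ hζ)))
    exact this.congr (fun z _ => Matrix.det_fin_two _) (Matrix.det_fin_two _)
  have hEdiff : Differentiable ℂ E := by
    intro z
    by_cases hz : z ∈ Z
    · have hUnhds : ((Z : Set ℂ))ᶜ ∪ {z} ∈ 𝓝 z := (hUo z).mem_nhds (Or.inr rfl)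
      have hdz : DifferentiableAt ℂ (h z) z := ((hhd z hz).differentiableAt hUnhds)
      refine hdz.congr_of_eventuallyEq ?_
      filter_upwards [hUnhds] with ζ hζ
      rcases hζ with hζ | hζ
      · rw [hEoff ζ hζ, hhe z hz ζ hζ]
      · rw [Set.mem_singleton_iff] at hζ
        subst hζ
        simp only [hE]
        rw [dif_pos hz]
    · have hznhds : ((Z : Set ℂ))ᶜ ∈ 𝓝 z :=
        (Z.finite_toSet.isClosed.isOpen_compl).mem_nhds (by simpa using hz)
      have hdz : DifferentiableAt ℂ (fun ζ => (m ζ).det) z := hdetm.differentiableAt hznhds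
      refine hdz.congr_of_eventuallyEq ?_
      filter_upwards [hznhds] with ζ hζ using hEoff ζ hζ
  -- E tends to 1 at infinity
  have hZb : (↑Z : Set ℂ)ᶜ ∈ Bornology.cobounded ℂ :=
    Z.finite_toSet.isBounded.compl
  have hE1 : Tendsto E (Bornology.cobounded ℂ) (𝓝 1) := by
    have hdet1 : Tendsto (fun ζ : ℂ => (m ζ * Matrix.diagonal ![ζ⁻¹ ^ k, ζ ^ k]).det)
        (Bornology.cobounded ℂ) (𝓝 1) := by
      have hc : Continuous fun A : Mat2 => A.det := continuous_id.matrix_det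
      have := (hc.tendsto (1 : Mat2)).comp hma
      simpa only [Function.comp_def, Matrix.det_one] using this
    refine hdet1.congr' ?_
    have h0 : ({(0:ℂ)} : Set ℂ)ᶜ ∈ Bornology.cobounded ℂ :=
      (Set.finite_singleton (0:ℂ)).isBounded.compl
    filter_upwards [hZb, h0] with ζ hζZ hζ0
    have hζ0' : ζ ≠ 0 := by simpa using hζ0
    rw [Matrix.det_mul, Matrix.det_diagonal, Fin.prod_univ_two]
    simp only [Matrix.cons_val_zero, Matrix.cons_val_one, Matrix.head_cons]
    rw [← mul_pow, inv_mul_cancel₀ hζ0', one_pow, mul_one, hEoff ζ hζZ]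
  -- Liouville: E is bounded, hence constant, hence ≡ 1
  have hrange : Bornology.IsBounded (Set.range E) := by
    have hball : E ⁻¹' Metric.ball 1 1 ∈ Bornology.cobounded ℂ :=
      hE1 (Metric.ball_mem_nhds 1 one_pos)
    have hbc : Bornology.IsBounded (E ⁻¹' Metric.ball 1 1)ᶜ :=
      Bornology.IsCobounded.of_compl (by simp only [compl_compl]; exact hball)
    have hcomp : IsCompact (closure ((E ⁻¹' Metric.ball 1 1)ᶜ)) := hbc.isCompact_closure
    have himg : Bornology.IsBounded (E '' closure ((E ⁻¹' Metric.ball 1 1)ᶜ)) :=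
      (hcomp.image hEdiff.continuous).isBounded
    have hsub : Set.range E ⊆ E '' closure ((E ⁻¹' Metric.ball 1 1)ᶜ) ∪ Metric.ball 1 1 := by
      rintro y ⟨z, rfl⟩
      by_cases hz : z ∈ E ⁻¹' Metric.ball 1 1
      · exact Or.inr hz
      · exact Or.inl ⟨z, subset_closure hz, rfl⟩
    exact (himg.union Metric.isBounded_ball).subset hsub
  have hconst : ∀ z z' : ℂ, E z = E z' := fun z z' =>
    hEdiff.apply_eq_apply_of_bounded hrange z z'
  have hEone : ∀ z : ℂ, E z = 1 := by
    intro z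
    have hc : Tendsto E (Bornology.cobounded ℂ) (𝓝 (E z)) := by
      have : E = fun _ => E z := funext fun z' => hconst z' z
      rw [this]
      exact tendsto_const_nhds
    exact tendsto_nhds_unique hc hE1
  intro ζ hζ
  rw [← hEoff ζ hζ, hEone]
/-- the recurrence for the `(1,1)` matrix elements,
`m_{s+1}^{11} = d₂(π_{s+1})⁻¹ (μ²² + (p/q) μ¹²) m_s^{11}`. -/
theorem stmt6 (N k s : ℕ) (hk1 : 1 ≤ k) (hks : k ≤ s) (hsN : s + 1 ≤ N)
    (π ω : ℕ → ℝ)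
    (hπ : ∀ i ≤ N, ∀ j ≤ N, π i = π j → i = j)
    (hω : ∀ x ≤ N, 0 < ω x)
    (η c₀ : ℂ) (hη : η ≠ 0)
    (σ : ℂ → ℂ) (hσ : ∀ ζ, σ ζ = η * ζ + c₀)
    (hσπ : ∀ x < N, σ (π (x + 1) : ℂ) = (π x : ℂ))
    (d₁ d₂ : ℂ → ℂ) (hd₁ : Differentiable ℂ d₁) (hd₂ : Differentiable ℂ d₂)
    (hd₁0 : d₁ (π 0 : ℂ) = 0)
    (hd : ∀ x, 1 ≤ x → x ≤ N → d₂ (π x : ℂ) ≠ 0 ∧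
      (ω (x - 1) : ℂ) / (ω x : ℂ) = η * d₁ (π x : ℂ) / d₂ (π x : ℂ))
    (w : ℂ → Mat2) (hw : ∀ x ≤ N, w (π x : ℂ) = !![0, (ω x : ℂ); 0, 0])
    (m m' : ℂ → Mat2)
    (hm : SolvesDRHP (Zset π s) w m) (hma : AsympId k m)
    (hm' : SolvesDRHP (Zset π (s + 1)) w m') (hm'a : AsympId k m')
    (p q r : ℂ)
    (hA2 : !![p, q; r, -p] * !![p, q; r, -p] = 0)
    (hrel : ∀ ζ : ℂ, ζ ∉ (Zset π (s + 1) : Set ℂ) →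
      m' ζ = (1 + (ζ - (π s : ℂ))⁻¹ • !![p, q; r, -p]) * m ζ)
    (M : ℂ → Mat2) (hMdiff : ∀ i j, Differentiable ℂ fun ζ => M ζ i j)
    (hMeq : ∀ ζ : ℂ, ζ ∉ (Zset π (s + 1) : Set ℂ) →
      M ζ = m (σ ζ) * Matrix.diagonal ![d₁ ζ, d₂ ζ] * (m' ζ)⁻¹)
    (hp : p ≠ 0) :
    m' (π (s + 1) : ℂ) 0 0 =
      (d₂ (π (s + 1) : ℂ))⁻¹ *
        (M (π (s + 1) : ℂ) 1 1 + p / q * M (π (s + 1) : ℂ) 0 1) *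
        m (π s : ℂ) 0 0 := by
  classical
  set A : Mat2 := !![p, q; r, -p] with hA
  have hpq : p * p + q * r = 0 := by
    have := congrFun (congrFun hA2 0) 0
    simpa [hA, Matrix.mul_apply, Fin.sum_univ_two] using this
  have hq : q ≠ 0 := by
    intro h
    apply hp
    have : p * p = 0 := by linear_combination hpq - r * h
    exact mul_self_eq_zero.1 this
  have hinj : ∀ i ≤ N, ∀ j ≤ N, (π i : ℂ) = (π j : ℂ) → i = j := by
    intro i hi j hj hij
    exact hπ i hi j hj (by exact_mod_cast hij)
  have hnotZ : ∀ t u : ℕ, u ≤ N → t ≤ u → ((π u : ℂ) ∉ (Zset π t : Set ℂ)) := by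
    intro t u hu ht hmem
    simp only [Zset, Finset.coe_image, Set.mem_image, Finset.coe_range, Set.mem_Iio] at hmem
    obtain ⟨x, hx, hxe⟩ := hmem
    have := hinj x (by omega) u hu hxe
    omega
  have hwZ : ∀ t, t ≤ N → ∀ x ∈ Zset π t, ∃ a : ℂ, w x = !![(0:ℂ), a; 0, 0] := by
    intro t ht x hx
    simp only [Zset, Finset.mem_image, Finset.mem_range] at hx
    obtain ⟨j, hj, rfl⟩ := hx
    exact ⟨(ω j : ℂ), hw j (by omega)⟩
  have hsN' : s ≤ N := by omega
  -- determinants are ≡ 1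
  have hdm := aux_detOne (Zset π s) w (hwZ s hsN') m hm k hma
  have hdet_ms : (m (π s : ℂ)).det = 1 := hdm _ (hnotZ s s hsN' le_rfl)
  have hdet_ms1 : (m (π (s+1) : ℂ)).det = 1 := hdm _ (hnotZ s (s+1) hsN (by omega))
  have hnotZ' : (π (s+1) : ℂ) ∉ (Zset π (s+1) : Set ℂ) := hnotZ (s+1) (s+1) hsN le_rfl
  have hrel1 := hrel (π (s+1) : ℂ) hnotZ'
  have hdetn : (m' (π (s+1) : ℂ)).det = 1 := by
    rw [hrel1, Matrix.det_mul, hdet_ms1, mul_one]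
    rw [Matrix.det_fin_two]
    simp only [Matrix.add_apply, Matrix.smul_apply, Matrix.one_apply, hA,
      Matrix.cons_val', Matrix.cons_val_zero, Matrix.cons_val_one, Matrix.head_cons,
      Matrix.head_fin_const, Matrix.empty_val', Matrix.cons_val_fin_one, smul_eq_mul]
    norm_num
    linear_combination (-(((π (s+1) : ℂ) - (π s : ℂ))⁻¹)^2) * hpq
  -- the kernel condition  p m₀₀(π_s) + q m₁₀(π_s) = 0
  set x : ℂ := (π s : ℂ) with hxdef
  have hxZ' : x ∈ Zset π (s+1) :=
    Finset.mem_image.2 ⟨s, Finset.mem_range.2 (by omega), rfl⟩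
  have hxZs : x ∉ (Zset π s : Set ℂ) := hnotZ s s hsN' le_rfl
  have hmCont : ∀ i j, ContinuousAt (fun ζ => m ζ i j) x := by
    intro i j
    have hnh : ((Zset π s : Set ℂ))ᶜ ∈ 𝓝 x :=
      ((Zset π s).finite_toSet.isClosed.isOpen_compl).mem_nhds (by simpa using hxZs)
    exact ((hm.1 i j).differentiableAt hnh).continuousAt
  obtain ⟨g, hg1, hg2, hg3⟩ := hm'.2 x hxZ'
  have hωs : (ω s : ℂ) ≠ 0 := by
    exact_mod_cast ne_of_gt (hω s hsN')
  have hwx : w x = !![0, (ω s : ℂ); 0, 0] := hw s hsN'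
  have hev : ∀ᶠ ζ in 𝓝[≠] x, ζ ∉ (Zset π (s+1) : Set ℂ) ∧ ζ ≠ x := by
    have hU : ((Zset π (s+1) : Set ℂ))ᶜ ∪ {x} ∈ 𝓝 x := by
      refine IsOpen.mem_nhds ?_ (Or.inr rfl)
      have : ((Zset π (s+1) : Set ℂ))ᶜ ∪ {x} = ((↑((Zset π (s+1)).erase x) : Set ℂ))ᶜ := by
        ext ζ; simp only [Set.mem_union, Set.mem_compl_iff, Finset.mem_coe,
          Set.mem_singleton_iff, Finset.coe_erase, Set.mem_diff, Finset.mem_erase,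
          not_and_or, not_not]
      rw [this]
      exact ((Zset π (s+1)).erase x).finite_toSet.isClosed.isOpen_compl
    filter_upwards [self_mem_nhdsWithin, mem_nhdsWithin_of_mem_nhds hU] with ζ h1 h2
    refine ⟨?_, h1⟩
    rcases h2 with h | h
    · exact h
    · exact absurd h h1
  have hAm : ∀ (ζ : ℂ), (A * m ζ) 0 0 = p * m ζ 0 0 + q * m ζ 1 0 := by
    intro ζ
    simp [hA, Matrix.mul_apply, Fin.sum_univ_two]
  have hkernel : p * m x 0 0 + q * m x 1 0 = 0 := by
    -- entry (0,1) of the residue relation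
    have hl01 : Tendsto (fun ζ => (m' ζ * w x) 0 1) (𝓝[≠] x) (𝓝 (g x 0 1)) :=
      by
      have hc : Continuous (fun B : Mat2 => B 0 1) :=
        (continuous_apply (1 : Fin 2)).comp (continuous_apply (0 : Fin 2))
      exact hc.continuousAt.tendsto.comp hg3
    have hform : ∀ᶠ ζ in 𝓝[≠] x, (m' ζ * w x) 0 1 =
        m ζ 0 0 * (ω s : ℂ) + (ζ - x)⁻¹ * ((A * m ζ) 0 0) * (ω s : ℂ) := by
      filter_upwards [hev] with ζ ⟨hζZ, hζx⟩
      rw [hrel ζ hζZ]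
      simp [hwx, Matrix.mul_apply, Fin.sum_univ_two, Matrix.add_apply, Matrix.smul_apply,
        Matrix.one_apply, hA]
      ring
    have hfirst : Tendsto (fun ζ => m ζ 0 0 * (ω s : ℂ)) (𝓝[≠] x)
        (𝓝 (m x 0 0 * (ω s : ℂ))) :=
      ((hmCont 0 0).tendsto.mono_left nhdsWithin_le_nhds).mul tendsto_const_nhds
    have hsecond : Tendsto (fun ζ => (ζ - x)⁻¹ * ((A * m ζ) 0 0) * (ω s : ℂ)) (𝓝[≠] x)
        (𝓝 (g x 0 1 - m x 0 0 * (ω s : ℂ))) := by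
      have := (hl01.congr' hform).sub hfirst
      refine this.congr ?_
      intro ζ; ring
    have hzero : Tendsto (fun ζ => (ζ - x) * ((ζ - x)⁻¹ * ((A * m ζ) 0 0) * (ω s : ℂ)))
        (𝓝[≠] x) (𝓝 0) := by
      have hz : Tendsto (fun ζ : ℂ => ζ - x) (𝓝[≠] x) (𝓝 0) := by
        have : Tendsto (fun ζ : ℂ => ζ - x) (𝓝 x) (𝓝 (x - x)) :=
          (continuous_id.sub continuous_const).continuousAt.tendsto
        rw [sub_self] at this
        exact this.mono_left nhdsWithin_le_nhds
      simpa using hz.mul hsecond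
    have hAmcont : Tendsto (fun ζ => ((A * m ζ) 0 0) * (ω s : ℂ)) (𝓝[≠] x)
        (𝓝 (((A * m x) 0 0) * (ω s : ℂ))) := by
      have : ContinuousAt (fun ζ => ((A * m ζ) 0 0) * (ω s : ℂ)) x := by
        have := ((hmCont 0 0).const_mul p).add ((hmCont 1 0).const_mul q)
        have h2 : ContinuousAt (fun ζ => (A * m ζ) 0 0) x := by
          refine ContinuousAt.congr this ?_
          filter_upwards with ζ using (hAm ζ).symm
        exact h2.mul continuousAt_const
      exact this.tendsto.mono_left nhdsWithin_le_nhds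
    have heq2 : ∀ᶠ ζ in 𝓝[≠] x, (ζ - x) * ((ζ - x)⁻¹ * ((A * m ζ) 0 0) * (ω s : ℂ)) =
        ((A * m ζ) 0 0) * (ω s : ℂ) := by
      filter_upwards [self_mem_nhdsWithin] with ζ hζ
      have hζx : (ζ : ℂ) - x ≠ 0 := sub_ne_zero.2 hζ
      field_simp
    have : ((A * m x) 0 0) * (ω s : ℂ) = 0 :=
      tendsto_nhds_unique hAmcont (hzero.congr' heq2)
    have h0 : (A * m x) 0 0 = 0 := by
      rcases mul_eq_zero.1 this with h | h
      · exact h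
      · exact absurd h hωs
    rw [hAm x] at h0
    exact h0
  -- now the algebra
  have hd₂ne : d₂ (π (s+1) : ℂ) ≠ 0 := (hd (s+1) (by omega) hsN).1
  have hninv : (m' (π (s+1) : ℂ))⁻¹ = (m' (π (s+1) : ℂ)).adjugate := by
    rw [Matrix.inv_def, hdetn, Ring.inverse_one, one_smul]
  have hMval := hMeq (π (s+1) : ℂ) hnotZ'
  rw [hσπ s (by omega), hninv, Matrix.adjugate_fin_two] at hMval
  rw [Matrix.det_fin_two] at hdet_ms
  set n : Mat2 := m' (π (s+1) : ℂ) with hn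
  have hM11 : M (π (s+1) : ℂ) 1 1 =
      m x 1 0 * d₁ (π (s+1) : ℂ) * (-(n 0 1)) + m x 1 1 * d₂ (π (s+1) : ℂ) * n 0 0 := by
    rw [hMval]
    simp [Matrix.mul_apply, Fin.sum_univ_two, Matrix.diagonal]
    rfl
  have hM01 : M (π (s+1) : ℂ) 0 1 =
      m x 0 0 * d₁ (π (s+1) : ℂ) * (-(n 0 1)) + m x 0 1 * d₂ (π (s+1) : ℂ) * n 0 0 := by
    rw [hMval]
    simp [Matrix.mul_apply, Fin.sum_univ_two, Matrix.diagonal]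
    rfl
  rw [hM11, hM01]
  field_simp
  linear_combination (d₁ (π (s+1):ℂ) * n 0 1 * m x 0 0 - d₂ (π (s+1):ℂ) * n 0 0 * m x 0 1) * hkernel
    + (- q * d₂ (π (s+1):ℂ) * n 0 0) * hdet_ms
end
end

section
/- In the Lax-pair setup, fix k ≤ s ≤ N−1. For t = s, s+1, s+2 let m_t be the solution of the discrete Riemann–Hilbert problem on {π_0,…,π_{t−1}} with jump matrices w(π_x) = [[0, ω(x)],[0,0]] and asymptotics m_t(ζ)·diag(ζ^{−k},ζ^{k}) → I as ζ → ∞. Let A_s, A_{s+1} be the matrices with A_s² = A_{s+1}² = 0, m_{s+1}(ζ) = (I + (ζ−π_s)^{−1}A_s)·m_s(ζ) and m_{s+2}(ζ) = (I + (ζ−π_{s+1})^{−1}A_{s+1})·m_{s+1}(ζ), and let M_s, M_{s+1} be the entire extensions of ζ ↦ m_s(σζ)·D(ζ)·m_{s+1}(ζ)^{−1} and ζ ↦ m_{s+1}(σζ)·D(ζ)·m_{s+2}(ζ)^{−1}, where D(ζ) = diag(d_1(ζ), d_2(ζ)). Then for every ζ ∈ ℂ with ζ ≠ π_{s+1}: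 (I + (σζ−π_s)^{−1}A_s)·M_s(ζ) = M_{s+1}(ζ)·(I + (ζ−π_{s+1})^{−1}A_{s+1}). -/
open Filter Topology Matrix Polynomial

noncomputable section

/-- the compatibility condition for the Lax pair,
`(I + (σζ−π_s)⁻¹ A_s) M_s(ζ) = M_{s+1}(ζ) (I + (ζ−π_{s+1})⁻¹ A_{s+1})`. -/
theorem stmt8 (N k s : ℕ) (hk1 : 1 ≤ k) (hks : k ≤ s) (hsN : s + 1 ≤ N)
    (π ω : ℕ → ℝ)
    (hπ : ∀ i ≤ N, ∀ j ≤ N, π i = π j → i = j)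
    (hω : ∀ x ≤ N, 0 < ω x)
    (η c₀ : ℂ) (hη : η ≠ 0)
    (σ : ℂ → ℂ) (hσ : ∀ ζ, σ ζ = η * ζ + c₀)
    (hσπ : ∀ x < N, σ (π (x + 1) : ℂ) = (π x : ℂ))
    (d₁ d₂ : ℂ → ℂ) (hd₁ : Differentiable ℂ d₁) (hd₂ : Differentiable ℂ d₂)
    (hd₁0 : d₁ (π 0 : ℂ) = 0)
    (hd : ∀ x, 1 ≤ x → x ≤ N → d₂ (π x : ℂ) ≠ 0 ∧
      (ω (x - 1) : ℂ) / (ω x : ℂ) = η * d₁ (π x : ℂ) / d₂ (π x : ℂ))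
    (w : ℂ → Mat2) (hw : ∀ x ≤ N, w (π x : ℂ) = !![0, (ω x : ℂ); 0, 0])
    (m₀ m₁ m₂ : ℂ → Mat2)
    (hm₀ : SolvesDRHP (Zset π s) w m₀) (hm₀a : AsympId k m₀)
    (hm₁ : SolvesDRHP (Zset π (s + 1)) w m₁) (hm₁a : AsympId k m₁)
    (hm₂ : SolvesDRHP (Zset π (s + 2)) w m₂) (hm₂a : AsympId k m₂)
    (A A' : Mat2) (hA2 : A * A = 0) (hA'2 : A' * A' = 0)
    (hrel : ∀ ζ : ℂ, ζ ∉ (Zset π (s + 1) : Set ℂ) →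
      m₁ ζ = (1 + (ζ - (π s : ℂ))⁻¹ • A) * m₀ ζ)
    (hrel' : ∀ ζ : ℂ, ζ ∉ (Zset π (s + 2) : Set ℂ) →
      m₂ ζ = (1 + (ζ - (π (s + 1) : ℂ))⁻¹ • A') * m₁ ζ)
    (M M' : ℂ → Mat2)
    (hMdiff : ∀ i j, Differentiable ℂ fun ζ => M ζ i j)
    (hMeq : ∀ ζ : ℂ, ζ ∉ (Zset π (s + 1) : Set ℂ) →
      M ζ = m₀ (σ ζ) * Matrix.diagonal ![d₁ ζ, d₂ ζ] * (m₁ ζ)⁻¹)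
    (hM'diff : ∀ i j, Differentiable ℂ fun ζ => M' ζ i j)
    (hM'eq : ∀ ζ : ℂ, ζ ∉ (Zset π (s + 2) : Set ℂ) →
      M' ζ = m₁ (σ ζ) * Matrix.diagonal ![d₁ ζ, d₂ ζ] * (m₂ ζ)⁻¹) :
    ∀ ζ : ℂ, ζ ≠ (π (s + 1) : ℂ) →
      (1 + (σ ζ - (π s : ℂ))⁻¹ • A) * M ζ =
        M' ζ * (1 + (ζ - (π (s + 1) : ℂ))⁻¹ • A') := by
  -- Setup
  set p : ℂ := (π (s+1) : ℂ) with hp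
  have hσp : σ p = (π s : ℂ) := hσπ s (by omega)
  have hσsub : ∀ ζ : ℂ, σ ζ - (π s : ℂ) = η * (ζ - p) := by
    intro ζ
    have h1 := hσ ζ
    have h2 := hσ p
    rw [h1, ← hσp, h2]; ring
  have hσne : ∀ ζ : ℂ, ζ ≠ p → σ ζ - (π s : ℂ) ≠ 0 := by
    intro ζ hζ
    rw [hσsub]
    exact mul_ne_zero hη (sub_ne_zero.2 hζ)
  have hσdiff : Differentiable ℂ σ := by
    have : σ = fun ζ => η * ζ + c₀ := funext hσ
    rw [this]; fun_prop
  set F : ℂ → Mat2 := fun ζ => (1 + (σ ζ - (π s : ℂ))⁻¹ • A) * M ζ with hF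
  set G : ℂ → Mat2 := fun ζ => M' ζ * (1 + (ζ - p)⁻¹ • A') with hG
  set U : Set ℂ := {p}ᶜ with hU
  have hUopen : IsOpen U := isOpen_compl_singleton
  -- the bad finite set
  set S : Set ℂ := (Zset π (s+2) : Set ℂ) ∪ ((fun z : ℂ => (z - c₀) / η) '' (Zset π (s+1) : Set ℂ)) ∪ {p} with hS
  have hSfin : S.Finite := by
    apply Set.Finite.union
    apply Set.Finite.union
    · exact (Zset π (s+2)).finite_toSet
    · exact ((Zset π (s+1)).finite_toSet).image _
    · exact Set.finite_singleton _
  have hsub12 : (Zset π (s+1) : Set ℂ) ⊆ (Zset π (s+2) : Set ℂ) := by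
    intro z hz
    simp only [Zset, Finset.coe_image, Finset.coe_range, Set.mem_image, Set.mem_Iio] at hz ⊢
    obtain ⟨x, hx, rfl⟩ := hz
    exact ⟨x, by omega, rfl⟩
  -- equality off S
  have heq : ∀ ζ : ℂ, ζ ∉ S → F ζ = G ζ := by
    intro ζ hζ
    simp only [hS, Set.mem_union, Set.mem_singleton_iff, not_or] at hζ
    obtain ⟨⟨hz2, hzim⟩, hzp⟩ := hζ
    have hz1 : ζ ∉ (Zset π (s+1) : Set ℂ) := fun h => hz2 (hsub12 h)
    have hσz : σ ζ ∉ (Zset π (s+1) : Set ℂ) := by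
      intro h
      apply hzim
      refine ⟨σ ζ, h, ?_⟩
      rw [hσ ζ]
      field_simp
      ring
    set B : Mat2 := (ζ - p)⁻¹ • A' with hB
    have hB2 : B * B = 0 := by
      rw [hB, Matrix.smul_mul, Matrix.mul_smul, hA'2, smul_zero, smul_zero]
    have hmulBB : (1 - B) * (1 + B) = 1 := by
      have : (1 - B) * (1 + B) = 1 - B * B := by noncomm_ring
      rw [this, hB2, sub_zero]
    have hmulBB' : (1 + B) * (1 - B) = 1 := by
      have : (1 + B) * (1 - B) = 1 - B * B := by noncomm_ring
      rw [this, hB2, sub_zero]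
    have hinvB : (1 + B)⁻¹ = 1 - B := Matrix.inv_eq_right_inv hmulBB'
    set D : Mat2 := Matrix.diagonal ![d₁ ζ, d₂ ζ] with hD
    have hm2inv : (m₂ ζ)⁻¹ = (m₁ ζ)⁻¹ * (1 - B) := by
      rw [hrel' ζ hz2, Matrix.mul_inv_rev, hinvB]
    have hm1σ : m₁ (σ ζ) = (1 + (σ ζ - (π s : ℂ))⁻¹ • A) * m₀ (σ ζ) := hrel (σ ζ) hσz
    calc F ζ = (1 + (σ ζ - (π s : ℂ))⁻¹ • A) * (m₀ (σ ζ) * D * (m₁ ζ)⁻¹) := by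
            simp only [hF]; rw [hMeq ζ hz1]
      _ = ((1 + (σ ζ - (π s : ℂ))⁻¹ • A) * m₀ (σ ζ)) * D * (m₁ ζ)⁻¹ := by
            simp only [mul_assoc]
      _ = m₁ (σ ζ) * D * (m₁ ζ)⁻¹ := by rw [← hm1σ]
      _ = m₁ (σ ζ) * D * ((m₁ ζ)⁻¹ * ((1 - B) * (1 + B))) := by rw [hmulBB, mul_one]
      _ = (m₁ (σ ζ) * D * ((m₁ ζ)⁻¹ * (1 - B))) * (1 + B) := by
            simp only [mul_assoc]
      _ = (m₁ (σ ζ) * D * (m₂ ζ)⁻¹) * (1 + B) := by rw [← hm2inv]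
      _ = G ζ := by simp only [hG]; rw [← hM'eq ζ hz2]
  -- analyticity of entries of F and G on U
  have hcdiff : DifferentiableOn ℂ (fun ζ => (σ ζ - (π s : ℂ))⁻¹) U := by
    apply DifferentiableOn.inv
    · exact ((hσdiff.sub_const _).differentiableOn)
    · intro ζ hζ
      exact hσne ζ hζ
  have hc'diff : DifferentiableOn ℂ (fun ζ => (ζ - p)⁻¹) U := by
    apply DifferentiableOn.inv
    · exact ((differentiable_id.sub_const _).differentiableOn)
    · intro ζ hζ
      exact sub_ne_zero.2 hζ
  have hFan : ∀ i j, AnalyticOnNhd ℂ (fun ζ => F ζ i j) U := by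
    intro i j
    apply DifferentiableOn.analyticOnNhd _ hUopen
    have : (fun ζ => F ζ i j) =
        fun ζ => ∑ l, ((1 : Mat2) i l + (σ ζ - (π s : ℂ))⁻¹ * A i l) * M ζ l j := by
      funext ζ
      simp [hF, Matrix.mul_apply, Matrix.add_apply, Matrix.smul_apply, smul_eq_mul]
    rw [this]
    apply DifferentiableOn.fun_sum
    intro l _
    exact ((differentiableOn_const _).add (hcdiff.mul (differentiableOn_const _))).mul
      ((hMdiff l j).differentiableOn)
  have hGan : ∀ i j, AnalyticOnNhd ℂ (fun ζ => G ζ i j) U := by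
    intro i j
    apply DifferentiableOn.analyticOnNhd _ hUopen
    have : (fun ζ => G ζ i j) =
        fun ζ => ∑ l, M' ζ i l * ((1 : Mat2) l j + (ζ - p)⁻¹ * A' l j) := by
      funext ζ
      simp [hG, Matrix.mul_apply, Matrix.add_apply, Matrix.smul_apply, smul_eq_mul]
    rw [this]
    apply DifferentiableOn.fun_sum
    intro l _
    exact ((hM'diff i l).differentiableOn).mul
      ((differentiableOn_const _).add (hc'diff.mul (differentiableOn_const _)))
  -- connectedness of U
  have hUconn : IsPreconnected U :=
    (isConnected_compl_singleton_of_one_lt_rank (by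
      rw [Complex.rank_real_complex]; norm_num) p).isPreconnected
  -- base point
  obtain ⟨z₀, hz₀⟩ := (hSfin.infinite_compl).nonempty
  have hz₀U : z₀ ∈ U := fun h => hz₀ (Set.mem_union_right _ h)
  have hev : ∀ i j, (fun ζ => F ζ i j) =ᶠ[nhds z₀] (fun ζ => G ζ i j) := by
    intro i j
    have hSc : IsOpen Sᶜ := hSfin.isClosed.isOpen_compl
    filter_upwards [hSc.mem_nhds hz₀] with ζ hζ
    rw [heq ζ hζ]
  -- conclusion
  intro ζ hζ
  have hζU : ζ ∈ U := hζ
  ext i j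
  exact (hFan i j).eqOn_of_preconnected_of_eventuallyEq (hGan i j) hUconn hz₀U (hev i j) hζU
end
end

section
/- (Uniqueness of the solution of the compatibility condition, in the algebraic form used in its proof.) Let π ∈ ℂ, let A, A′ ∈ Mat(2,ℂ) satisfy A² = 0 and A′² = 0, and let M, M′ : ℂ → Mat(2,ℂ) be analytic on all of ℂ with det M′(π) ≠ 0. If M(ζ)·(I + (ζ−π)^{−1}A) = M′(ζ)·(I + (ζ−π)^{−1}A′) for every ζ ∈ ℂ with ζ ≠ π, then A = A′ and M(ζ) = M′(ζ) for every ζ ∈ ℂ. -/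
open Filter Topology Matrix

noncomputable section

/-- If two continuous matrix-valued functions agree away from a point, they agree there too. -/
lemma eq_at_of_eq_off {x₀ : ℂ} {F G : ℂ → Mat2} (hF : Continuous F) (hG : Continuous G)
    (h : ∀ ζ, ζ ≠ x₀ → F ζ = G ζ) : F x₀ = G x₀ := by
  have h1 : Tendsto F (𝓝[≠] x₀) (𝓝 (F x₀)) := (hF.tendsto x₀).mono_left nhdsWithin_le_nhds
  have h2 : Tendsto F (𝓝[≠] x₀) (𝓝 (G x₀)) := by
    refine ((hG.tendsto x₀).mono_left nhdsWithin_le_nhds).congr' ?_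
    filter_upwards [self_mem_nhdsWithin] with ζ hζ using (h ζ hζ).symm
  exact tendsto_nhds_unique h1 h2

/-- uniqueness of the solution of the compatibility condition. -/
theorem stmt9 (x₀ : ℂ) (A A' : Mat2) (hA : A * A = 0) (hA' : A' * A' = 0)
    (M M' : ℂ → Mat2)
    (hM : ∀ i j, Differentiable ℂ fun ζ => M ζ i j)
    (hM' : ∀ i j, Differentiable ℂ fun ζ => M' ζ i j)
    (hdet : (M' x₀).det ≠ 0)
    (heq : ∀ ζ : ℂ, ζ ≠ x₀ →
      M ζ * (1 + (ζ - x₀)⁻¹ • A) = M' ζ * (1 + (ζ - x₀)⁻¹ • A')) :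
    A = A' ∧ ∀ ζ : ℂ, M ζ = M' ζ := by
  have hMc : Continuous M := continuous_matrix fun i j => (hM i j).continuous
  have hM'c : Continuous M' := continuous_matrix fun i j => (hM' i j).continuous
  have hU : IsUnit (M' x₀) := (Matrix.isUnit_iff_isUnit_det _).mpr hdet.isUnit
  obtain ⟨N, hN⟩ := hU.exists_left_inv
  -- For ζ ≠ x₀ :  M ζ = M' ζ * (1 + c•A') * (1 - c•A)
  have e1 : ∀ ζ, ζ ≠ x₀ → M ζ = M' ζ * (1 + (ζ - x₀)⁻¹ • A') * (1 - (ζ - x₀)⁻¹ • A) := by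
    intro ζ hζ
    set c := (ζ - x₀)⁻¹ with hc
    have h1 : (1 + c • A) * (1 - c • A) = 1 := by
      have h2 : (c • A) * (c • A) = (0 : Mat2) := by
        rw [Matrix.smul_mul, Matrix.mul_smul, hA, smul_zero, smul_zero]
      rw [add_mul, mul_sub, mul_sub, one_mul, one_mul, mul_one, h2, sub_zero]
      abel
    calc M ζ = M ζ * ((1 + c • A) * (1 - c • A)) := by rw [h1, mul_one]
      _ = (M ζ * (1 + c • A)) * (1 - c • A) := by rw [mul_assoc]
      _ = M' ζ * (1 + c • A') * (1 - c • A) := by rw [heq ζ hζ]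
  -- expanded identity, multiplied by (ζ-x₀)^2
  have e2 : ∀ ζ, ζ ≠ x₀ →
      (ζ - x₀)^2 • M ζ =
      (ζ - x₀)^2 • M' ζ + (ζ - x₀) • (M' ζ * (A' - A)) - M' ζ * (A' * A) := by
    intro ζ hζ
    have hz : ζ - x₀ ≠ 0 := sub_ne_zero.mpr hζ
    rw [e1 ζ hζ]
    simp only [mul_add, add_mul, mul_sub, sub_mul, mul_one, one_mul,
      Matrix.mul_smul, Matrix.smul_mul, ← mul_assoc]
    match_scalars <;> field_simp <;> ring
  -- At x₀ :  M' x₀ * (A' * A) = 0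
  have e3 : M' x₀ * (A' * A) = 0 := by
    have := eq_at_of_eq_off (x₀ := x₀)
      (F := fun ζ => (ζ - x₀)^2 • M ζ + M' ζ * (A' * A))
      (G := fun ζ => (ζ - x₀)^2 • M' ζ + (ζ - x₀) • (M' ζ * (A' - A)))
      (by fun_prop) (by fun_prop)
      (fun ζ hζ => by
        rw [e2 ζ hζ]; abel)
    simpa using this
  have hAA : A' * A = 0 := by
    calc A' * A = (N * M' x₀) * (A' * A) := by rw [hN, one_mul]
      _ = N * (M' x₀ * (A' * A)) := by rw [mul_assoc]
      _ = 0 := by rw [e3, mul_zero]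
  -- now (ζ-x₀) • M ζ = (ζ-x₀) • M' ζ + M' ζ * (A' - A) away from x₀
  have e4 : ∀ ζ, ζ ≠ x₀ → (ζ - x₀) • M ζ = (ζ - x₀) • M' ζ + M' ζ * (A' - A) := by
    intro ζ hζ
    have hz : ζ - x₀ ≠ 0 := sub_ne_zero.mpr hζ
    have h2 := e2 ζ hζ
    rw [hAA, mul_zero, sub_zero] at h2
    have h3 := congrArg (fun X => (ζ - x₀)⁻¹ • X) h2
    simp only [smul_add, smul_smul] at h3
    rw [show (ζ - x₀)⁻¹ * (ζ - x₀)^2 = ζ - x₀ by field_simp,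
      inv_mul_cancel₀ hz, one_smul] at h3
    exact h3
  have e5 : M' x₀ * (A' - A) = 0 := by
    have := eq_at_of_eq_off (x₀ := x₀)
      (F := fun ζ => (ζ - x₀) • M ζ)
      (G := fun ζ => (ζ - x₀) • M' ζ + M' ζ * (A' - A))
      (by fun_prop) (by fun_prop) e4
    simpa using this.symm
  have hAeq : A = A' := by
    have h0 : A' - A = 0 := by
      calc A' - A = (N * M' x₀) * (A' - A) := by rw [hN, one_mul]
        _ = N * (M' x₀ * (A' - A)) := by rw [mul_assoc]
        _ = 0 := by rw [e5, mul_zero]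
    have := sub_eq_zero.mp h0
    exact this.symm
  refine ⟨hAeq, ?_⟩
  have hMeq : ∀ ζ, ζ ≠ x₀ → M ζ = M' ζ := by
    intro ζ hζ
    have hz : ζ - x₀ ≠ 0 := sub_ne_zero.mpr hζ
    have h4 := e4 ζ hζ
    rw [← hAeq, sub_self, mul_zero, add_zero] at h4
    have := congrArg (fun X => (ζ - x₀)⁻¹ • X) h4
    simpa [smul_smul, inv_mul_cancel₀ hz] using this
  intro ζ
  by_cases hζ : ζ = x₀
  · subst hζ
    exact eq_at_of_eq_off hMc hM'c hMeq
  · exact hMeq ζ hζ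
end
end

section
/- Let π_0,…,π_s be reals that are either strictly increasing or strictly decreasing, let ω(0),…,ω(s) be strictly positive, set w(π_x) = [[0, ω(x)],[0,0]], and fix integers s > k ≥ 1. Let m_s be the solution of the discrete Riemann–Hilbert problem on {π_0,…,π_{s−1}} and m_{s+1} the solution on {π_0,…,π_s}, both with asymptotics m(ζ)·diag(ζ^{−k},ζ^{k}) → I as ζ → ∞, and let A_s = [[p_s, q_s],[r_s, −p_s]] be the matrix with A_s² = 0 and m_{s+1}(ζ) = (I + (ζ−π_s)^{−1}A_s)·m_s(ζ). Then p_s ≠ 0. -/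
open Filter Topology Matrix Polynomial

noncomputable section

namespace Stmt11Aux

open Filter Topology Bornology Polynomial Matrix


lemma ev_notin_cobounded (S : Finset ℂ) : ∀ᶠ ζ in cobounded ℂ, ζ ∉ (S : Set ℂ) :=
  (S.finite_toSet.isBounded).compl

lemma ev_ne_cobounded (c : ℂ) : ∀ᶠ ζ in cobounded ℂ, ζ ≠ c := by
  simpa using ev_notin_cobounded {c}

lemma tendsto_sub_cobounded (c : ℂ) :
    Tendsto (fun ζ : ℂ => ζ - c) (cobounded ℂ) (cobounded ℂ) := by
  rw [← tendsto_norm_atTop_iff_cobounded]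
  have h1 : Tendsto (fun ζ : ℂ => ‖ζ‖ - ‖c‖) (cobounded ℂ) atTop :=
    (tendsto_norm_cobounded_atTop).atTop_add tendsto_const_nhds
  exact tendsto_atTop_mono (fun ζ => norm_sub_norm_le ζ c) h1

lemma tendsto_inv_sub_cobounded (c : ℂ) :
    Tendsto (fun ζ : ℂ => (ζ - c)⁻¹) (cobounded ℂ) (𝓝 0) :=
  tendsto_inv₀_cobounded.comp (tendsto_sub_cobounded c)

lemma tendsto_inv_pow_cobounded (n : ℕ) (hn : n ≠ 0) :
    Tendsto (fun ζ : ℂ => (ζ⁻¹) ^ n) (cobounded ℂ) (𝓝 0) := by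
  have := (tendsto_inv₀_cobounded (α := ℂ)).pow n
  simpa [zero_pow hn] using this

/-- Removable-singularity extension over a finite set. -/
lemma ext_off_finset (S : Finset ℂ) (f : ℂ → ℂ)
    (hd : DifferentiableOn ℂ f ((S : Set ℂ))ᶜ)
    (hres : ∀ x ∈ S, Tendsto (fun ζ => (ζ - x) * f ζ) (𝓝[≠] x) (𝓝 0)) :
    ∃ F : ℂ → ℂ, Differentiable ℂ F ∧ ∀ ζ ∉ (S : Set ℂ), F ζ = f ζ := by
  classical
  induction S using Finset.induction generalizing f with
  | empty =>
      refine ⟨f, ?_, fun ζ _ => rfl⟩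
      rw [← differentiableOn_univ]
      simpa using hd
  | @insert x T hxT ih =>
      -- remove the singularity at x
      have hT : ((T : Set ℂ))ᶜ ∈ 𝓝 x := by
        refine (T.finite_toSet.isClosed.isOpen_compl).mem_nhds (by simpa using hxT)
      have hsd : DifferentiableOn ℂ f (((T : Set ℂ))ᶜ \ {x}) := by
        apply hd.mono
        intro ζ hζ
        simp only [Finset.coe_insert, Set.mem_compl_iff, Set.mem_insert_iff, Set.mem_diff,
          Set.mem_singleton_iff] at *
        tauto
      have ho : (fun z => f z - f x) =o[𝓝[≠] x] fun z => (z - x)⁻¹ := by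
        rw [Asymptotics.isLittleO_iff_tendsto']
        · have h1 : Tendsto (fun ζ => (ζ - x) * f ζ - (ζ - x) * f x) (𝓝[≠] x) (𝓝 0) := by
            have h2 : Tendsto (fun ζ : ℂ => (ζ - x) * f x) (𝓝[≠] x) (𝓝 0) := by
              have h3 : Tendsto (fun ζ : ℂ => ζ - x) (𝓝[≠] x) (𝓝 0) := by
                have h4 : Tendsto (fun ζ : ℂ => ζ - x) (𝓝 x) (𝓝 (x - x)) :=
                  (continuous_id.sub continuous_const).tendsto x
                simpa using h4.mono_left nhdsWithin_le_nhds
              simpa using h3.mul_const (f x)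
            simpa using (hres x (T.mem_insert_self x)).sub h2
          apply h1.congr'
          filter_upwards [self_mem_nhdsWithin] with ζ hζ
          have hne : ζ - x ≠ 0 := sub_ne_zero.2 hζ
          field_simp
        · filter_upwards [self_mem_nhdsWithin] with ζ hζ h
          exact absurd (inv_eq_zero.mp h) (sub_ne_zero.2 hζ)
      have hdF : DifferentiableOn ℂ (Function.update f x (limUnder (𝓝[≠] x) f)) ((T : Set ℂ))ᶜ :=
        Complex.differentiableOn_update_limUnder_of_isLittleO hT hsd ho
      set f₁ := Function.update f x (limUnder (𝓝[≠] x) f) with hf₁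
      have hupd : ∀ ζ, ζ ≠ x → f₁ ζ = f ζ := fun ζ hζ => Function.update_of_ne hζ _ _
      have hres1 : ∀ y ∈ T, Tendsto (fun ζ => (ζ - y) * f₁ ζ) (𝓝[≠] y) (𝓝 0) := by
        intro y hyT
        have hyx : y ≠ x := fun h => hxT (h ▸ hyT)
        have hev : ∀ᶠ ζ in 𝓝[≠] y, (ζ - y) * f₁ ζ = (ζ - y) * f ζ := by
          have : ∀ᶠ ζ in 𝓝 y, ζ ≠ x :=
            (isOpen_compl_singleton).eventually_mem (by simpa using hyx)
          filter_upwards [this.filter_mono nhdsWithin_le_nhds] with ζ hζ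
          rw [hupd ζ hζ]
        exact (hres y (T.mem_insert_of_mem hyT)).congr' (hev.mono fun ζ h => h.symm)
      obtain ⟨F, hF, hFe⟩ := ih f₁ hdF hres1
      refine ⟨F, hF, fun ζ hζ => ?_⟩
      simp only [Finset.coe_insert, Set.mem_insert_iff, not_or] at hζ
      rw [hFe ζ hζ.2, hupd ζ hζ.1]

/-- An entire function with polynomially bounded growth is a polynomial. -/
lemma poly_of_entire : ∀ (n : ℕ) (f : ℂ → ℂ) (c : ℂ), Differentiable ℂ f →
    Tendsto (fun ζ => f ζ * (ζ⁻¹) ^ n) (cobounded ℂ) (𝓝 c) →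
    ∃ P : Polynomial ℂ, P.natDegree ≤ n ∧ P.coeff n = c ∧ ∀ ζ, P.eval ζ = f ζ := by
  intro n
  induction n with
  | zero =>
      intro f c hf hl
      have hl' : Tendsto f (cocompact ℂ) (𝓝 c) := by
        rw [← Metric.cobounded_eq_cocompact]
        simpa using hl
      refine ⟨C c, by simp, by simp, fun ζ => ?_⟩
      rw [eval_C, hf.apply_eq_of_tendsto_cocompact ζ hl']
  | succ n ih =>
      intro f c hf hl
      set g : ℂ → ℂ := fun z => (f z - f 0) * z⁻¹ with hg
      have hgd : DifferentiableOn ℂ g (({0} : Finset ℂ) : Set ℂ)ᶜ := by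
        apply DifferentiableOn.mul
        · exact ((hf.sub_const (f 0)).differentiableOn)
        · apply differentiableOn_inv.mono
          intro ζ; simp
      have hres0 : ∀ x ∈ ({0} : Finset ℂ), Tendsto (fun ζ => (ζ - x) * g ζ) (𝓝[≠] x) (𝓝 0) := by
        intro x hx
        simp only [Finset.mem_singleton] at hx
        subst hx
        have h5 : Tendsto (fun ζ => f ζ - f 0) (𝓝[≠] (0:ℂ)) (𝓝 0) := by
          have h6 : Tendsto f (𝓝 (0:ℂ)) (𝓝 (f 0)) := hf.continuous.tendsto 0
          simpa using (h6.mono_left nhdsWithin_le_nhds).sub_const (f 0)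
        apply h5.congr'
        filter_upwards [self_mem_nhdsWithin] with ζ hζ
        have hζ' : ζ ≠ 0 := hζ
        simp only [hg]
        field_simp
        ring
      obtain ⟨G, hG, hGe⟩ := ext_off_finset {0} g hgd hres0
      have hGl : Tendsto (fun ζ => G ζ * (ζ⁻¹) ^ n) (cobounded ℂ) (𝓝 c) := by
        have h0 : Tendsto (fun ζ : ℂ => f 0 * (ζ⁻¹) ^ (n + 1)) (cobounded ℂ) (𝓝 0) := by
          simpa using (tendsto_inv_pow_cobounded (n + 1) n.succ_ne_zero).const_mul (f 0)
        have h1 : Tendsto (fun ζ => f ζ * (ζ⁻¹) ^ (n + 1) - f 0 * (ζ⁻¹) ^ (n + 1))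
            (cobounded ℂ) (𝓝 c) := by simpa using hl.sub h0
        apply h1.congr'
        filter_upwards [ev_ne_cobounded 0] with ζ hζ
        rw [hGe ζ (by simpa using hζ)]
        simp only [hg]
        rw [pow_succ]
        ring
      obtain ⟨P, hPd, hPc, hPe⟩ := ih G c hG hGl
      refine ⟨C (f 0) + X * P, ?_, ?_, ?_⟩
      · apply (natDegree_add_le _ _).trans
        simp only [natDegree_C, max_le_iff]
        constructor
        · omega
        · exact (natDegree_mul_le).trans (by simp only [natDegree_X]; omega)
      · rw [coeff_add, coeff_C, coeff_X_mul, hPc]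
        simp
      · intro ζ
        rcases eq_or_ne ζ 0 with rfl | hζ
        · simp
        · rw [eval_add, eval_C, eval_mul, eval_X, hPe, hGe ζ (by simpa using hζ)]
          simp only [hg]
          field_simp
          ring


lemma moment_eq (s : ℕ) (π : ℕ → ℝ) (a : ℕ → ℂ) (h : ℂ → ℂ) (S : Finset ℂ)
    (hmem : ∀ t, t < s → ((π t : ℝ) : ℂ) ∈ S)
    (hrep : ∀ ζ, ζ ∉ (S : Set ℂ) → h ζ = ∑ t ∈ Finset.range s, a t * (ζ - (π t : ℂ))⁻¹) :
    ∀ (j : ℕ) (L : ℂ),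
      (∀ i, i < j → ∑ t ∈ Finset.range s, a t * ((π t : ℝ) : ℂ) ^ i = 0) →
      Tendsto (fun ζ => ζ ^ (j + 1) * h ζ) (cobounded ℂ) (𝓝 L) →
      ∑ t ∈ Finset.range s, a t * ((π t : ℝ) : ℂ) ^ j = L := by
  set R : ℕ → ℂ → ℂ := fun j ζ => ∑ t ∈ Finset.range s, a t * ((π t : ℝ) : ℂ) ^ j *
    (ζ - ((π t : ℝ) : ℂ))⁻¹ with hRdef
  have hne : ∀ ζ, ζ ∉ (S : Set ℂ) → ∀ t, t < s → ζ - ((π t : ℝ) : ℂ) ≠ 0 := by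
    intro ζ hζ t ht h0
    exact hζ (by rw [sub_eq_zero] at h0; rw [h0]; exact_mod_cast hmem t ht)
  have hstep : ∀ (j : ℕ) (ζ : ℂ), ζ ∉ (S : Set ℂ) →
      ζ * R j ζ = (∑ t ∈ Finset.range s, a t * ((π t : ℝ) : ℂ) ^ j) + R (j + 1) ζ := by
    intro j ζ hζ
    rw [hRdef]
    simp only
    rw [Finset.mul_sum, ← Finset.sum_add_distrib]
    apply Finset.sum_congr rfl
    intro t ht
    rw [Finset.mem_range] at ht
    have hs : ζ - ((π t : ℝ) : ℂ) ≠ 0 := hne ζ hζ t ht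
    field_simp
    ring
  have hclaim : ∀ (j : ℕ),
      (∀ i, i < j → ∑ t ∈ Finset.range s, a t * ((π t : ℝ) : ℂ) ^ i = 0) →
      ∀ ζ, ζ ∉ (S : Set ℂ) → ζ ^ j * h ζ = R j ζ := by
    intro j
    induction j with
    | zero =>
        intro _ ζ hζ
        simp only [pow_zero, one_mul]
        rw [hrep ζ hζ, hRdef]
        simp
    | succ j ih =>
        intro hcz ζ hζ
        have h1 : ζ ^ j * h ζ = R j ζ := ih (fun i hi => hcz i (hi.trans j.lt_succ_self)) ζ hζ
        have h2 : ζ ^ (j + 1) * h ζ = ζ * (ζ ^ j * h ζ) := by ring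
        rw [h2, h1, hstep j ζ hζ, hcz j j.lt_succ_self, zero_add]
  intro j L hcz hlim
  have hR0 : Tendsto (R (j + 1)) (cobounded ℂ) (𝓝 0) := by
    rw [hRdef]
    have : Tendsto (fun ζ => ∑ t ∈ Finset.range s,
        a t * ((π t : ℝ) : ℂ) ^ (j+1) * (ζ - ((π t : ℝ) : ℂ))⁻¹) (cobounded ℂ)
        (𝓝 (∑ t ∈ Finset.range s, (0 : ℂ))) := by
      apply tendsto_finset_sum
      intro t _
      simpa using (tendsto_inv_sub_cobounded ((π t : ℝ) : ℂ)).const_mul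
        (a t * ((π t : ℝ) : ℂ) ^ (j+1))
    simpa using this
  have hlim2 : Tendsto (fun ζ => ζ ^ (j + 1) * h ζ) (cobounded ℂ)
      (𝓝 ((∑ t ∈ Finset.range s, a t * ((π t : ℝ) : ℂ) ^ j) + 0)) := by
    have := hR0.const_add (∑ t ∈ Finset.range s, a t * ((π t : ℝ) : ℂ) ^ j)
    apply this.congr'
    filter_upwards [ev_notin_cobounded S] with ζ hζ
    rw [← hstep j ζ hζ, ← hclaim j hcz ζ hζ]
    ring
  rw [add_zero] at hlim2
  exact tendsto_nhds_unique hlim2 hlim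

lemma eval_map_conj_real (P : Polynomial ℂ) (x : ℝ) :
    (P.map (starRingEnd ℂ)).eval (x : ℂ) = starRingEnd ℂ (P.eval (x : ℂ)) := by
  rw [eval_map]
  have h1 : ((x : ℂ)) = starRingEnd ℂ (x : ℂ) := (Complex.conj_ofReal x).symm
  conv_lhs => rw [h1]
  exact eval₂_at_apply (starRingEnd ℂ) (x : ℂ)

lemma pairing (s K : ℕ) (π : ℕ → ℝ) (b : ℕ → ℂ)
    (horth : ∀ i, i < K → ∑ t ∈ Finset.range s, b t * ((π t : ℝ) : ℂ) ^ i = 0)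
    (q : Polynomial ℂ) (hq : q.natDegree < K) :
    ∑ t ∈ Finset.range s, b t * q.eval ((π t : ℝ) : ℂ) = 0 := by
  have h1 : ∑ t ∈ Finset.range s, b t * q.eval ((π t : ℝ) : ℂ)
      = ∑ t ∈ Finset.range s, ∑ i ∈ Finset.range K,
        q.coeff i * (b t * ((π t : ℝ) : ℂ) ^ i) := by
    apply Finset.sum_congr rfl
    intro t _
    rw [eval_eq_sum_range' hq, Finset.mul_sum]
    apply Finset.sum_congr rfl
    intro i _
    ring
  rw [h1, Finset.sum_comm]
  apply Finset.sum_eq_zero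
  intro i hi
  rw [Finset.mem_range] at hi
  rw [← Finset.mul_sum, horth i hi, mul_zero]

lemma no_root (s K : ℕ) (π ωf : ℕ → ℝ) (hω : ∀ t, t < s → 0 < ωf t)
    (hz : (∀ t, t < s → π t < π s) ∨ (∀ t, t < s → π s < π t))
    (P : Polynomial ℂ) (hdeg : P.natDegree ≤ K)
    (horth : ∀ i, i < K → ∑ t ∈ Finset.range s,
      ((ωf t : ℂ) * P.eval ((π t : ℝ) : ℂ)) * ((π t : ℝ) : ℂ) ^ i = 0)
    (hnz : ¬ ∀ t, t < s → P.eval ((π t : ℝ) : ℂ) = 0) :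
    P.eval ((π s : ℝ) : ℂ) ≠ 0 := by
  intro hroot
  obtain ⟨R, hR⟩ := dvd_iff_isRoot.2 hroot
  by_cases hR0 : R = 0
  · exact hnz fun t _ => by rw [hR, hR0, mul_zero, eval_zero]
  have hdR : R.natDegree < K := by
    have hXC : (X - C (((π s : ℝ) : ℂ))) ≠ 0 := X_sub_C_ne_zero _
    have h2 := natDegree_mul hXC hR0
    rw [natDegree_X_sub_C] at h2
    rw [hR, h2] at hdeg
    omega
  have hq : (R.map (starRingEnd ℂ)).natDegree < K :=
    lt_of_le_of_lt natDegree_map_le hdR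
  have h0 := pairing s K π (fun t => (ωf t : ℂ) * P.eval ((π t : ℝ) : ℂ)) horth
    (R.map (starRingEnd ℂ)) hq
  have h2 : ∀ t, t < s → ((ωf t : ℂ) * P.eval ((π t : ℝ) : ℂ))
      * (R.map (starRingEnd ℂ)).eval ((π t : ℝ) : ℂ)
      = ((ωf t * (π t - π s) * Complex.normSq (R.eval ((π t : ℝ) : ℂ)) : ℝ) : ℂ) := by
    intro t ht
    rw [eval_map_conj_real, hR, eval_mul, eval_sub, eval_X, eval_C]
    set Rv := R.eval ((π t : ℝ) : ℂ) with hRv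
    have hc : Rv * (starRingEnd ℂ) Rv = (Complex.normSq Rv : ℂ) := Complex.mul_conj Rv
    push_cast
    linear_combination ((ωf t : ℂ) * (((π t : ℝ) : ℂ) - ((π s : ℝ) : ℂ))) * hc
  have h3 : ∑ t ∈ Finset.range s,
      ((ωf t * (π t - π s) * Complex.normSq (R.eval ((π t : ℝ) : ℂ)) : ℝ) : ℂ) = 0 := by
    rw [← h0]
    apply Finset.sum_congr rfl
    intro t ht
    rw [Finset.mem_range] at ht
    exact (h2 t ht).symm
  rw [← Complex.ofReal_sum] at h3
  have h4 : ∑ t ∈ Finset.range s,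
      ωf t * (π t - π s) * Complex.normSq (R.eval ((π t : ℝ) : ℂ)) = 0 := by
    exact_mod_cast h3
  have hRz : ∀ t, t < s → R.eval ((π t : ℝ) : ℂ) = 0 := by
    intro t ht
    rcases hz with hzi | hzi
    · have hterm : ∀ u ∈ Finset.range s,
          ωf u * (π u - π s) * Complex.normSq (R.eval ((π u : ℝ) : ℂ)) ≤ 0 := by
        intro u hu
        rw [Finset.mem_range] at hu
        have h7 : ωf u * (π u - π s) ≤ 0 :=
          mul_nonpos_iff.2 (Or.inl ⟨(hω u hu).le, by linarith [hzi u hu]⟩)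
        exact mul_nonpos_iff.2 (Or.inr ⟨h7, Complex.normSq_nonneg _⟩)
      have h5 := ((Finset.sum_eq_zero_iff_of_nonpos hterm).1 h4) t (Finset.mem_range.2 ht)
      have hfac : ωf t * (π t - π s) < 0 :=
        mul_neg_of_pos_of_neg (hω t ht) (sub_neg.2 (hzi t ht))
      have h6 : Complex.normSq (R.eval ((π t : ℝ) : ℂ)) = 0 := by
        rcases mul_eq_zero.1 h5 with h | h
        · exact absurd h (ne_of_lt hfac)
        · exact h
      exact Complex.normSq_eq_zero.mp h6
    · have hterm : ∀ u ∈ Finset.range s,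
          0 ≤ ωf u * (π u - π s) * Complex.normSq (R.eval ((π u : ℝ) : ℂ)) := by
        intro u hu
        rw [Finset.mem_range] at hu
        exact mul_nonneg (mul_nonneg (hω u hu).le (by linarith [hzi u hu]))
          (Complex.normSq_nonneg _)
      have h5 := ((Finset.sum_eq_zero_iff_of_nonneg hterm).1 h4) t (Finset.mem_range.2 ht)
      have hfac : 0 < ωf t * (π t - π s) :=
        mul_pos (hω t ht) (sub_pos.2 (hzi t ht))
      have h6 : Complex.normSq (R.eval ((π t : ℝ) : ℂ)) = 0 := by
        rcases mul_eq_zero.1 h5 with h | h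
        · exact absurd h (ne_of_gt hfac)
        · exact h
      exact Complex.normSq_eq_zero.mp h6
  apply hnz
  intro t ht
  rw [hR, eval_mul, hRz t ht, mul_zero]

lemma mem_Zset_iff {π : ℕ → ℝ} {s : ℕ} {ζ : ℂ} :
    ζ ∈ Zset π s ↔ ∃ t, t < s ∧ ((π t : ℝ) : ℂ) = ζ := by
  simp [Zset, Finset.mem_image, Finset.mem_range]

lemma mem_Zset_of_lt {π : ℕ → ℝ} {s t : ℕ} (h : t < s) : ((π t : ℝ) : ℂ) ∈ Zset π s :=
  mem_Zset_iff.2 ⟨t, h, rfl⟩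

lemma compl_union_singleton (S : Set ℂ) (x : ℂ) (hx : x ∈ S) :
    Sᶜ ∪ {x} = (S \ {x})ᶜ := by
  ext ζ
  by_cases h : ζ = x <;> simp [Set.mem_diff, h, hx]

lemma ev_avoid (S : Finset ℂ) (x : ℂ) : ∀ᶠ ζ in 𝓝[≠] x, ζ ∉ (S : Set ℂ) \ {x} := by
  have h : ∀ᶠ ζ in 𝓝 x, ζ ∈ ((S : Set ℂ) \ {x})ᶜ :=
    ((S.finite_toSet.diff).isClosed.isOpen_compl).eventually_mem (by simp)
  exact h.filter_mono nhdsWithin_le_nhds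

lemma ev_notin_nhdsNe (S : Finset ℂ) (x : ℂ) : ∀ᶠ ζ in 𝓝[≠] x, ζ ∉ (S : Set ℂ) := by
  filter_upwards [ev_avoid S x, self_mem_nhdsWithin] with ζ h1 h2
  intro hζ
  exact h1 ⟨hζ, h2⟩

/-- The matrix entry projection is continuous. -/
lemma cont_entry (i j : Fin 2) : Continuous (fun A : Mat2 => A i j) :=
  (continuous_apply j).comp (continuous_apply i)



lemma col1_poly (s k : ℕ) (π : ℕ → ℝ) (w : ℂ → Mat2)
    (hw0 : ∀ x ∈ Zset π s, w x 0 0 = 0 ∧ w x 1 0 = 0)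
    (m : ℂ → Mat2) (hm : SolvesDRHP (Zset π s) w m) (i : Fin 2) (e : ℂ)
    (he : Tendsto (fun ζ => m ζ i 0 * (ζ⁻¹) ^ k) (cobounded ℂ) (𝓝 e)) :
    ∃ P : Polynomial ℂ, P.natDegree ≤ k ∧ P.coeff k = e ∧
      ∀ ζ, ζ ∉ (Zset π s : Set ℂ) → P.eval ζ = m ζ i 0 := by
  have hres : ∀ x ∈ Zset π s,
      Tendsto (fun ζ => (ζ - x) * m ζ i 0) (𝓝[≠] x) (𝓝 0) := by
    intro x hx
    obtain ⟨g, hgd, hgeq, hglim⟩ := hm.2 x hx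
    have hU : ((Zset π s : Set ℂ))ᶜ ∪ {x} = ((Zset π s : Set ℂ) \ {x})ᶜ :=
      compl_union_singleton _ _ hx
    have hopen : IsOpen (((Zset π s : Set ℂ)) \ {x})ᶜ :=
      (((Zset π s).finite_toSet.diff).isClosed).isOpen_compl
    have hgdiff : DifferentiableAt ℂ (fun ζ => g ζ i 0) x := by
      have := hgd i 0
      rw [hU] at this
      exact this.differentiableAt (hopen.mem_nhds (by simp))
    -- value of g at x in first column is 0
    have hzero : ∀ ζ, (m ζ * w x) i 0 = 0 := by
      intro ζ
      rw [Matrix.mul_apply, Fin.sum_univ_two, (hw0 x hx).1, (hw0 x hx).2]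
      ring
    have hg0 : g x i 0 = 0 := by
      have h1 : Tendsto (fun ζ => (m ζ * w x) i 0) (𝓝[≠] x) (𝓝 (g x i 0)) :=
        ((cont_entry i 0).tendsto _).comp hglim
      have h2 : Tendsto (fun ζ : ℂ => (0 : ℂ)) (𝓝[≠] x) (𝓝 (g x i 0)) := by
        apply h1.congr
        intro ζ
        rw [hzero ζ]
      exact tendsto_nhds_unique h2 tendsto_const_nhds
    have h3 : Tendsto (fun ζ => g ζ i 0) (𝓝[≠] x) (𝓝 0) := by
      rw [← hg0]
      exact (hgdiff.continuousAt.tendsto).mono_left nhdsWithin_le_nhds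
    apply h3.congr'
    filter_upwards [ev_notin_nhdsNe (Zset π s) x] with ζ hζ
    rw [hgeq ζ hζ, Matrix.smul_apply, smul_eq_mul]
  obtain ⟨F, hF, hFe⟩ := ext_off_finset (Zset π s) (fun ζ => m ζ i 0) (hm.1 i 0) hres
  have hFl : Tendsto (fun ζ => F ζ * (ζ⁻¹) ^ k) (cobounded ℂ) (𝓝 e) := by
    apply he.congr'
    filter_upwards [ev_notin_cobounded (Zset π s)] with ζ hζ
    rw [hFe ζ hζ]
  obtain ⟨P, h1, h2, h3⟩ := poly_of_entire k F e hF hFl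
  exact ⟨P, h1, h2, fun ζ hζ => by rw [h3 ζ, hFe ζ hζ]⟩

lemma col2_rep (s : ℕ) (π ωr : ℕ → ℝ) (w : ℂ → Mat2)
    (hinj : ∀ t u, t < s → u < s → π t = π u → t = u)
    (hw : ∀ t, t < s → w ((π t : ℝ) : ℂ) = !![0, (ωr t : ℂ); 0, 0])
    (m : ℂ → Mat2) (hm : SolvesDRHP (Zset π s) w m) (i : Fin 2)
    (P : Polynomial ℂ) (hP : ∀ ζ, ζ ∉ (Zset π s : Set ℂ) → P.eval ζ = m ζ i 0)
    (hdec : Tendsto (fun ζ => m ζ i 1) (cobounded ℂ) (𝓝 0)) :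
    ∀ ζ, ζ ∉ (Zset π s : Set ℂ) →
      m ζ i 1 = ∑ t ∈ Finset.range s,
        ((ωr t : ℂ) * P.eval ((π t : ℝ) : ℂ)) * (ζ - ((π t : ℝ) : ℂ))⁻¹ := by
  set a : ℕ → ℂ := fun t => (ωr t : ℂ) * P.eval ((π t : ℝ) : ℂ) with ha
  set Ca : ℂ → ℂ := fun ζ => ∑ t ∈ Finset.range s, a t * (ζ - ((π t : ℝ) : ℂ))⁻¹ with hCa
  set e : ℂ → ℂ := fun ζ => m ζ i 1 - Ca ζ with hedef
  have hCd : DifferentiableOn ℂ Ca ((Zset π s : Set ℂ))ᶜ := by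
    apply DifferentiableOn.fun_sum
    intro t ht
    rw [Finset.mem_range] at ht
    apply DifferentiableOn.const_mul
    apply DifferentiableOn.inv
    · exact (differentiableOn_id.sub_const _)
    · intro ζ hζ
      rw [Set.mem_compl_iff] at hζ
      intro h0
      rw [sub_eq_zero] at h0
      exact hζ (by rw [h0]; exact_mod_cast mem_Zset_of_lt ht)
  have hd : DifferentiableOn ℂ e ((Zset π s : Set ℂ))ᶜ := (hm.1 i 1).sub hCd
  have hres : ∀ x ∈ Zset π s, Tendsto (fun ζ => (ζ - x) * e ζ) (𝓝[≠] x) (𝓝 0) := by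
    intro x hx
    obtain ⟨u, hu, hux⟩ := mem_Zset_iff.1 hx
    obtain ⟨g, hgd, hgeq, hglim⟩ := hm.2 x hx
    have hU : ((Zset π s : Set ℂ))ᶜ ∪ {x} = ((Zset π s : Set ℂ) \ {x})ᶜ :=
      compl_union_singleton _ _ hx
    have hopen : IsOpen (((Zset π s : Set ℂ)) \ {x})ᶜ :=
      (((Zset π s).finite_toSet.diff).isClosed).isOpen_compl
    have hgdiff : DifferentiableAt ℂ (fun ζ => g ζ i 1) x := by
      have := hgd i 1
      rw [hU] at this
      exact this.differentiableAt (hopen.mem_nhds (by simp))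
    -- the residue of m at x in the (i,1) entry equals a u
    have hval : ∀ ζ, ζ ∉ (Zset π s : Set ℂ) → (m ζ * w x) i 1 = m ζ i 0 * (ωr u : ℂ) := by
      intro ζ _
      rw [← hux, hw u hu, Matrix.mul_apply, Fin.sum_univ_two]
      simp
    have hg1 : g x i 1 = a u := by
      have h1 : Tendsto (fun ζ => (m ζ * w x) i 1) (𝓝[≠] x) (𝓝 (g x i 1)) :=
        ((cont_entry i 1).tendsto _).comp hglim
      have h2 : Tendsto (fun ζ => P.eval ζ * (ωr u : ℂ)) (𝓝[≠] x) (𝓝 (P.eval x * (ωr u : ℂ))) :=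
        ((P.continuous.tendsto x).mono_left nhdsWithin_le_nhds).mul_const _
      have h3 : Tendsto (fun ζ => (m ζ * w x) i 1) (𝓝[≠] x) (𝓝 (P.eval x * (ωr u : ℂ))) := by
        apply h2.congr'
        filter_upwards [ev_notin_nhdsNe (Zset π s) x] with ζ hζ
        rw [hval ζ hζ, hP ζ hζ]
      rw [tendsto_nhds_unique h1 h3, ha, ← hux, mul_comm]
    -- limit of (ζ - x) * m ζ i 1
    have hT1 : Tendsto (fun ζ => (ζ - x) * m ζ i 1) (𝓝[≠] x) (𝓝 (a u)) := by
      have h3 : Tendsto (fun ζ => g ζ i 1) (𝓝[≠] x) (𝓝 (a u)) := by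
        rw [← hg1]
        exact (hgdiff.continuousAt.tendsto).mono_left nhdsWithin_le_nhds
      apply h3.congr'
      filter_upwards [ev_notin_nhdsNe (Zset π s) x] with ζ hζ
      rw [hgeq ζ hζ, Matrix.smul_apply, smul_eq_mul]
    -- limit of (ζ - x) * Ca ζ
    have hT2 : Tendsto (fun ζ => (ζ - x) * Ca ζ) (𝓝[≠] x) (𝓝 (a u)) := by
      have hsplit : ∀ ζ : ℂ, ζ ≠ x → (ζ - x) * Ca ζ =
          a u + ∑ t ∈ (Finset.range s).erase u, a t * ((ζ - x) * (ζ - ((π t : ℝ) : ℂ))⁻¹) := by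
        intro ζ hζ
        rw [hCa]
        simp only
        rw [Finset.mul_sum, ← Finset.add_sum_erase _ _ (Finset.mem_range.2 hu)]
        congr 1
        · have hne : ζ - ((π u : ℝ) : ℂ) ≠ 0 := by
            rw [hux]; exact sub_ne_zero.2 hζ
          rw [← hux, mul_comm (a u) ((ζ - ((π u : ℝ) : ℂ))⁻¹), ← mul_assoc,
            mul_inv_cancel₀ hne, one_mul]
        · apply Finset.sum_congr rfl
          intro t _
          ring
      have hrest : Tendsto (fun ζ => a u + ∑ t ∈ (Finset.range s).erase u,
          a t * ((ζ - x) * (ζ - ((π t : ℝ) : ℂ))⁻¹)) (𝓝[≠] x) (𝓝 (a u + 0)) := by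
        apply Tendsto.const_add
        have hsum : Tendsto (fun ζ => ∑ t ∈ (Finset.range s).erase u,
            a t * ((ζ - x) * (ζ - ((π t : ℝ) : ℂ))⁻¹)) (𝓝 x)
            (𝓝 (∑ t ∈ (Finset.range s).erase u, (0 : ℂ))) := by
          apply tendsto_finset_sum
          intro t ht
          have ht' := Finset.mem_of_mem_erase ht
          rw [Finset.mem_range] at ht'
          have htu : t ≠ u := Finset.ne_of_mem_erase ht
          have hne : x - ((π t : ℝ) : ℂ) ≠ 0 := by
            rw [← hux, sub_ne_zero]
            intro hh
            have hh2 : π u = π t := by exact_mod_cast hh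
            exact htu (hinj u t hu ht' hh2).symm
          have hc1 : Tendsto (fun ζ : ℂ => ζ - x) (𝓝 x) (𝓝 0) := by
            have := (continuous_id.sub (continuous_const (y := x))).tendsto x
            simpa [Pi.sub_def] using this
          have hc2 : Tendsto (fun ζ : ℂ => (ζ - ((π t : ℝ) : ℂ))⁻¹) (𝓝 x)
              (𝓝 ((x - ((π t : ℝ) : ℂ))⁻¹)) := by
            apply Tendsto.inv₀ _ hne
            have := (continuous_id.sub (continuous_const (y := ((π t : ℝ) : ℂ)))).tendsto x
            simpa [Pi.sub_def] using this
          have := (hc1.mul hc2).const_mul (a t)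
          simpa using this
        have h9 := hsum.mono_left (nhdsWithin_le_nhds : 𝓝[≠] x ≤ 𝓝 x)
        simpa using h9
      rw [add_zero] at hrest
      apply hrest.congr'
      filter_upwards [self_mem_nhdsWithin] with ζ hζ
      exact (hsplit ζ hζ).symm
    have := hT1.sub hT2
    rw [sub_self] at this
    apply this.congr
    intro ζ
    rw [hedef]
    simp only
    ring
  obtain ⟨E, hE, hEe⟩ := ext_off_finset (Zset π s) e hd hres
  have hE0 : Tendsto E (cobounded ℂ) (𝓝 0) := by
    have hCl : Tendsto Ca (cobounded ℂ) (𝓝 (∑ t ∈ Finset.range s, (0 : ℂ))) := by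
      apply tendsto_finset_sum
      intro t _
      simpa using (tendsto_inv_sub_cobounded ((π t : ℝ) : ℂ)).const_mul (a t)
    rw [Finset.sum_const_zero] at hCl
    have := hdec.sub hCl
    rw [sub_zero] at this
    apply this.congr'
    filter_upwards [ev_notin_cobounded (Zset π s)] with ζ hζ
    rw [hEe ζ hζ]
  have hEzero : ∀ ζ, E ζ = 0 := by
    intro ζ
    apply hE.apply_eq_of_tendsto_cocompact ζ
    rwa [← Metric.cobounded_eq_cocompact]
  intro ζ hζ
  have := hEzero ζ
  rw [hEe ζ hζ, hedef] at this
  simp only at this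
  have h2 := sub_eq_zero.1 this
  rw [h2, hCa]

end Stmt11Aux

open Bornology

/-- if the points `π 0, …, π s` are strictly monotone and `s > k ≥ 1`, the
entry `p_s` of the matrix `A_s` of the first Lax equation is nonzero. -/
theorem stmt11 (s k : ℕ) (hk1 : 1 ≤ k) (hks : k < s)
    (π ω : ℕ → ℝ)
    (hmono : (∀ i j, i < j → j ≤ s → π i < π j) ∨ (∀ i j, i < j → j ≤ s → π j < π i))
    (hω : ∀ x ≤ s, 0 < ω x)
    (w : ℂ → Mat2) (hw : ∀ x ≤ s, w (π x : ℂ) = !![0, (ω x : ℂ); 0, 0])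
    (m m' : ℂ → Mat2)
    (hm : SolvesDRHP (Zset π s) w m) (hma : AsympId k m)
    (hm' : SolvesDRHP (Zset π (s + 1)) w m') (hm'a : AsympId k m')
    (p q r : ℂ)
    (hA2 : !![p, q; r, -p] * !![p, q; r, -p] = 0)
    (hrel : ∀ ζ : ℂ, ζ ∉ (Zset π (s + 1) : Set ℂ) →
      m' ζ = (1 + (ζ - (π s : ℂ))⁻¹ • !![p, q; r, -p]) * m ζ) :
    p ≠ 0 := by
  classical
  intro hp
  obtain ⟨K, rfl⟩ : ∃ K, k = K + 1 := ⟨k - 1, by omega⟩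
  -- distinctness of the nodes
  have hπne : ∀ t u, t ≤ s → u ≤ s → t ≠ u → π t ≠ π u := by
    intro t u ht hu htu
    rcases hmono with hmono | hmono
    · rcases lt_or_gt_of_ne htu with h | h
      · exact ne_of_lt (hmono t u h hu)
      · exact (ne_of_lt (hmono u t h ht)).symm
    · rcases lt_or_gt_of_ne htu with h | h
      · exact (ne_of_lt (hmono t u h hu)).symm
      · exact ne_of_lt (hmono u t h ht)
  have hinj : ∀ t u, t < s → u < s → π t = π u → t = u := by
    intro t u ht hu h
    by_contra hne
    exact hπne t u ht.le hu.le hne h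
  have hπsZ : ((π s : ℝ) : ℂ) ∉ (Zset π s : Set ℂ) := by
    intro hmem
    rw [Finset.mem_coe, Stmt11Aux.mem_Zset_iff] at hmem
    obtain ⟨t, ht, hteq⟩ := hmem
    exact hπne t s ht.le le_rfl (Nat.ne_of_lt ht) (by exact_mod_cast hteq)
  have hz : (∀ t, t < s → π t < π s) ∨ (∀ t, t < s → π s < π t) := by
    rcases hmono with hmono | hmono
    · exact Or.inl fun t ht => hmono t s ht le_rfl
    · exact Or.inr fun t ht => hmono t s ht le_rfl
  have hω' : ∀ t, t < s → 0 < ω t := fun t ht => hω t ht.le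
  -- entrywise asymptotics
  have hent : ∀ i j : Fin 2,
      Tendsto (fun ζ => (m ζ * Matrix.diagonal ![ζ⁻¹ ^ (K + 1), ζ ^ (K + 1)]) i j) (cobounded ℂ)
        (𝓝 ((1 : Mat2) i j)) := by
    intro i j
    exact ((Stmt11Aux.cont_entry i j).tendsto _).comp hma
  have hent' : ∀ (i j : Fin 2) (v : ℂ),
      ((1 : Mat2) i j = v) →
      Tendsto (fun ζ => m ζ i j * (![ (ζ:ℂ)⁻¹ ^ (K + 1), ζ ^ (K + 1)] j)) (cobounded ℂ) (𝓝 v) := by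
    intro i j v hv
    have := hent i j
    rw [hv] at this
    apply this.congr
    intro ζ
    rw [Matrix.mul_diagonal]
  have he00 : Tendsto (fun ζ => m ζ 0 0 * (ζ⁻¹) ^ (K + 1)) (cobounded ℂ) (𝓝 1) := by
    have := hent' 0 0 1 (by simp [Matrix.one_apply])
    simpa using this
  have he10 : Tendsto (fun ζ => m ζ 1 0 * (ζ⁻¹) ^ (K + 1)) (cobounded ℂ) (𝓝 0) := by
    have := hent' 1 0 0 (by simp [Matrix.one_apply])
    simpa using this
  have he01 : Tendsto (fun ζ => m ζ 0 1 * ζ ^ (K + 1)) (cobounded ℂ) (𝓝 0) := by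
    have := hent' 0 1 0 (by simp [Matrix.one_apply])
    simpa using this
  have he11 : Tendsto (fun ζ => m ζ 1 1 * ζ ^ (K + 1)) (cobounded ℂ) (𝓝 1) := by
    have := hent' 1 1 1 (by simp [Matrix.one_apply])
    simpa using this
  -- first-column entries of w vanish on the nodes
  have hw0 : ∀ x ∈ Zset π s, w x 0 0 = 0 ∧ w x 1 0 = 0 := by
    intro x hx
    obtain ⟨t, ht, rfl⟩ := Stmt11Aux.mem_Zset_iff.1 hx
    rw [hw t ht.le]
    constructor <;> simp
  -- the first column consists of polynomials
  obtain ⟨P, hPdeg, hPlead, hPev⟩ :=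
    Stmt11Aux.col1_poly s (K + 1) π w hw0 m hm 0 1 he00
  obtain ⟨Q, hQdeg, hQlead, hQev⟩ :=
    Stmt11Aux.col1_poly s (K + 1) π w hw0 m hm 1 0 he10
  -- decay of the second column
  have hdec : ∀ (i : Fin 2) (e : ℂ), Tendsto (fun ζ => m ζ i 1 * ζ ^ (K + 1)) (cobounded ℂ) (𝓝 e) →
      Tendsto (fun ζ => m ζ i 1) (cobounded ℂ) (𝓝 0) := by
    intro i e hi
    have h2 := hi.mul (Stmt11Aux.tendsto_inv_pow_cobounded (K + 1) (by omega))
    rw [mul_zero] at h2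
    apply h2.congr'
    filter_upwards [Stmt11Aux.ev_ne_cobounded 0] with ζ hζ
    field_simp
    rw [one_div, mul_assoc, ← mul_pow, mul_inv_cancel₀ hζ, one_pow, mul_one]
  have hw' : ∀ t, t < s → w ((π t : ℝ) : ℂ) = !![0, (ω t : ℂ); 0, 0] :=
    fun t ht => hw t ht.le
  have hrep0 := Stmt11Aux.col2_rep s π ω w hinj hw' m hm 0 P hPev (hdec 0 0 he01)
  have hrep1 := Stmt11Aux.col2_rep s π ω w hinj hw' m hm 1 Q hQev (hdec 1 1 he11)
  -- limits of ζ^(j+1) * (m ζ i 1)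
  have hjlim : ∀ (f : ℂ → ℂ) (e : ℂ), Tendsto (fun ζ => f ζ * ζ ^ (K + 1)) (cobounded ℂ) (𝓝 e) →
      ∀ j, j + 1 ≤ (K + 1) → Tendsto (fun ζ => ζ ^ (j + 1) * f ζ) (cobounded ℂ)
        (𝓝 (if j + 1 = (K + 1) then e else 0)) := by
    intro f e hf j hj
    have hpow : Tendsto (fun ζ : ℂ => (ζ⁻¹) ^ ((K + 1) - (j + 1))) (cobounded ℂ)
        (𝓝 (if j + 1 = (K + 1) then 1 else 0)) := by
      rcases eq_or_ne (j + 1) (K + 1) with h | h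
      · rw [if_pos h, h, Nat.sub_self]
        simp only [pow_zero]
        exact tendsto_const_nhds
      · rw [if_neg h]
        exact Stmt11Aux.tendsto_inv_pow_cobounded _ (by omega)
    have h2 := hf.mul hpow
    have h3 : e * (if j + 1 = (K + 1) then (1:ℂ) else 0) = (if j + 1 = (K + 1) then e else 0) := by
      split_ifs <;> ring
    rw [h3] at h2
    apply h2.congr'
    filter_upwards [Stmt11Aux.ev_ne_cobounded 0] with ζ hζ
    have hsplit : ζ ^ (K + 1) = ζ ^ (j + 1) * ζ ^ ((K + 1) - (j + 1)) := by
      rw [← pow_add]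
      congr 1
      omega
    rw [hsplit]
    have hzz : ζ ^ ((K + 1) - (j+1)) * (ζ⁻¹) ^ ((K + 1) - (j + 1)) = 1 := by
      rw [← mul_pow, mul_inv_cancel₀ hζ, one_pow]
    linear_combination (f ζ * ζ ^ (j + 1)) * hzz
  -- moments of the first-column polynomials
  have hmom0 : ∀ j, j < (K + 1) → ∑ t ∈ Finset.range s,
      ((ω t : ℂ) * P.eval ((π t : ℝ) : ℂ)) * ((π t : ℝ) : ℂ) ^ j = 0 := by
    intro j
    induction j using Nat.strong_induction_on with
    | _ j ih =>
      intro hjk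
      have hl := hjlim (fun ζ => m ζ 0 1) 0 he01 j (by omega)
      have hl2 : Tendsto (fun ζ => ζ ^ (j + 1) * m ζ 0 1) (cobounded ℂ) (𝓝 0) := by
        rcases eq_or_ne (j + 1) (K + 1) with h | h
        · rw [if_pos h] at hl; exact hl
        · rw [if_neg h] at hl; exact hl
      exact Stmt11Aux.moment_eq s π _ (fun ζ => m ζ 0 1) (Zset π s)
        (fun t ht => Stmt11Aux.mem_Zset_of_lt ht) hrep0 j 0
        (fun i hi => ih i hi (by omega)) hl2
  have hmom1 : ∀ j, j < K → ∑ t ∈ Finset.range s,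
      ((ω t : ℂ) * Q.eval ((π t : ℝ) : ℂ)) * ((π t : ℝ) : ℂ) ^ j = 0 := by
    intro j
    induction j using Nat.strong_induction_on with
    | _ j ih =>
      intro hjk
      have hl := hjlim (fun ζ => m ζ 1 1) 1 he11 j (by omega)
      have hl2 : Tendsto (fun ζ => ζ ^ (j + 1) * m ζ 1 1) (cobounded ℂ) (𝓝 0) := by
        rw [if_neg (by omega)] at hl; exact hl
      exact Stmt11Aux.moment_eq s π _ (fun ζ => m ζ 1 1) (Zset π s)
        (fun t ht => Stmt11Aux.mem_Zset_of_lt ht) hrep1 j 0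
        (fun i hi => ih i hi (by omega)) hl2
  have hmomtop : ∑ t ∈ Finset.range s,
      ((ω t : ℂ) * Q.eval ((π t : ℝ) : ℂ)) * ((π t : ℝ) : ℂ) ^ K = 1 := by
    have hl := hjlim (fun ζ => m ζ 1 1) 1 he11 K (by omega)
    rw [if_pos rfl] at hl
    exact Stmt11Aux.moment_eq s π _ (fun ζ => m ζ 1 1) (Zset π s)
      (fun t ht => Stmt11Aux.mem_Zset_of_lt ht) hrep1 K 1 (fun i hi => hmom1 i hi) hl
  -- the polynomials do not vanish at π s
  have ha : P.eval ((π s : ℝ) : ℂ) ≠ 0 := by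
    apply Stmt11Aux.no_root s (K + 1) π ω hω' hz P hPdeg hmom0
    intro hall
    have hP0 : P = 0 := by
      apply Polynomial.eq_zero_of_natDegree_lt_card_of_eval_eq_zero P
        (f := fun t : Fin s => ((π t : ℝ) : ℂ))
      · intro t u htu
        simp only at htu
        have hh : π (t : ℕ) = π (u : ℕ) := by exact_mod_cast htu
        exact Fin.ext (hinj t u t.isLt u.isLt hh)
      · intro t
        exact hall t t.isLt
      · rw [Fintype.card_fin]
        omega
    rw [hP0] at hPlead
    simp at hPlead
  have hQne : ¬ ∀ t, t < s → Q.eval ((π t : ℝ) : ℂ) = 0 := by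
    intro hall
    have : ∑ t ∈ Finset.range s,
        ((ω t : ℂ) * Q.eval ((π t : ℝ) : ℂ)) * ((π t : ℝ) : ℂ) ^ K = 0 := by
      apply Finset.sum_eq_zero
      intro t ht
      rw [Finset.mem_range] at ht
      rw [hall t ht]
      ring
    rw [hmomtop] at this
    exact one_ne_zero this
  have hQdeg' : Q.natDegree ≤ K := by
    by_cases hQ0 : Q = 0
    · rw [hQ0]; simp
    · have : Q.natDegree ≠ (K + 1) := by
        intro h
        have := Polynomial.leadingCoeff_ne_zero.mpr hQ0
        rw [Polynomial.leadingCoeff, h, hQlead] at this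
        exact this rfl
      omega
  have hc : Q.eval ((π s : ℝ) : ℂ) ≠ 0 :=
    Stmt11Aux.no_root s K π ω hω' hz Q hQdeg' hmom1 hQne
  -- the algebraic relation at π s
  have hqr : q * r = 0 := by
    have h00 := (Matrix.ext_iff.2 hA2) 0 0
    rw [Matrix.mul_apply, Fin.sum_univ_two] at h00
    simp only [Matrix.cons_val', Matrix.cons_val_zero, Matrix.cons_val_one, Matrix.head_cons,
      Matrix.head_fin_const, Matrix.empty_val', Matrix.cons_val_fin_one, Matrix.zero_apply] at h00
    rw [hp] at h00
    simpa using h00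
  -- key residue computation at π s
  have key : ∀ i : Fin 2, (!![p, q; r, -p] : Mat2) i 0 = 0 →
      (!![p, q; r, -p] : Mat2) i 1 = 0 → m ((π s : ℝ) : ℂ) i 0 = 0 := by
    intro i hA0 hA1
    set A : Mat2 := !![p, q; r, -p] with hAdef
    set x : ℂ := ((π s : ℝ) : ℂ) with hxdef
    have hxZ' : x ∈ Zset π (s + 1) := Stmt11Aux.mem_Zset_of_lt (Nat.lt_succ_self s)
    obtain ⟨g, hgd, hgeq, hglim⟩ := hm'.2 x hxZ'
    -- row i of (1 + u • A) * N equals row i of N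
    have hrow : ∀ (u : ℂ) (N : Mat2) (j : Fin 2), ((1 + u • A) * N) i j = N i j := by
      intro u N j
      rw [Matrix.mul_apply, Fin.sum_univ_two, Matrix.add_apply, Matrix.add_apply,
        Matrix.smul_apply, Matrix.smul_apply, hA0, hA1]
      fin_cases i <;> fin_cases j <;>
        simp [Matrix.one_apply]
    -- m is continuous at x
    have hmc : ∀ j : Fin 2, ContinuousAt (fun ζ => m ζ i j) x := by
      intro j
      have hopen : IsOpen ((Zset π s : Set ℂ))ᶜ := (Zset π s).finite_toSet.isClosed.isOpen_compl
      exact ((hm.1 i j).differentiableAt (hopen.mem_nhds hπsZ)).continuousAt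
    -- g is continuous at x
    have hgc : ContinuousAt (fun ζ => g ζ i 1) x := by
      have hU : ((Zset π (s+1) : Set ℂ))ᶜ ∪ {x} = ((Zset π (s+1) : Set ℂ) \ {x})ᶜ :=
        Stmt11Aux.compl_union_singleton _ _ hxZ'
      have hopen : IsOpen (((Zset π (s+1) : Set ℂ)) \ {x})ᶜ :=
        (((Zset π (s+1)).finite_toSet.diff).isClosed).isOpen_compl
      have := hgd i 1
      rw [hU] at this
      exact (this.differentiableAt (hopen.mem_nhds (by simp))).continuousAt
    -- limit 1 : g x i 1 = limit of (m' ζ * w x) i 1 = (ω s) * m x i 0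
    have hwx : w x = !![0, ((ω s : ℝ) : ℂ); 0, 0] := hw s le_rfl
    have hlim1 : g x i 1 = m x i 0 * ((ω s : ℝ) : ℂ) := by
      have h1 : Tendsto (fun ζ => (m' ζ * w x) i 1) (𝓝[≠] x) (𝓝 (g x i 1)) :=
        ((Stmt11Aux.cont_entry i 1).tendsto _).comp hglim
      have h2 : Tendsto (fun ζ => m ζ i 0 * ((ω s : ℝ) : ℂ)) (𝓝[≠] x)
          (𝓝 (m x i 0 * ((ω s : ℝ) : ℂ))) :=
        ((hmc 0).tendsto.mono_left nhdsWithin_le_nhds).mul_const _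
      have h3 : Tendsto (fun ζ => (m' ζ * w x) i 1) (𝓝[≠] x)
          (𝓝 (m x i 0 * ((ω s : ℝ) : ℂ))) := by
        apply h2.congr'
        filter_upwards [Stmt11Aux.ev_notin_nhdsNe (Zset π (s+1)) x] with ζ hζ
        rw [hrel ζ hζ, Matrix.mul_assoc, hrow _ _ 1, hwx, Matrix.mul_apply, Fin.sum_univ_two]
        simp
      exact tendsto_nhds_unique h1 h3
    -- limit 2 : g x i 1 = 0
    have hlim2 : g x i 1 = 0 := by
      have h1 : Tendsto (fun ζ => g ζ i 1) (𝓝[≠] x) (𝓝 (g x i 1)) :=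
        hgc.tendsto.mono_left nhdsWithin_le_nhds
      have h2 : Tendsto (fun ζ => (ζ - x) * m ζ i 1) (𝓝[≠] x) (𝓝 (0 * m x i 1)) := by
        apply Tendsto.mul
        · have := ((continuous_id.sub (continuous_const (y := x))).tendsto x)
          simpa [Pi.sub_def] using this.mono_left nhdsWithin_le_nhds
        · exact (hmc 1).tendsto.mono_left nhdsWithin_le_nhds
      rw [zero_mul] at h2
      have h3 : Tendsto (fun ζ => g ζ i 1) (𝓝[≠] x) (𝓝 0) := by
        apply h2.congr'
        filter_upwards [Stmt11Aux.ev_notin_nhdsNe (Zset π (s+1)) x] with ζ hζ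
        rw [hgeq ζ hζ, Matrix.smul_apply, smul_eq_mul, hrel ζ hζ, hrow _ _ 1]
      exact tendsto_nhds_unique h1 h3
    have hωs : ((ω s : ℝ) : ℂ) ≠ 0 := by
      exact_mod_cast (hω s le_rfl).ne'
    have := hlim1.symm.trans hlim2
    rcases mul_eq_zero.1 this with h | h
    · exact h
    · exact absurd h hωs
  rcases mul_eq_zero.1 hqr with hq0 | hr0
  · have h := key 0 (by simp [hp]) (by simp [hq0])
    rw [← hPev _ hπsZ] at h
    exact ha h
  · have h := key 1 (by simp [hr0]) (by simp [hp])
    rw [← hQev _ hπsZ] at h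
    exact hc h

end
end

section
/- Let k ≥ 1, let π_0,…,π_{k−1} be distinct reals and ω(0),…,ω(k−1) strictly positive reals, and set w(π_x) = [[0, ω(x)],[0,0]] and ρ_m = ω(m)^{−1}·∏_{0≤j≤k−1, j≠m}(π_m−π_j)^{−2} for 0 ≤ m ≤ k−1. Define m_k : ℂ∖{π_0,…,π_{k−1}} → Mat(2,ℂ) by: (1,1) entry (ζ−π_0)⋯(ζ−π_{k−1}); (1,2) entry 0; (2,1) entry (ζ−π_0)⋯(ζ−π_{k−1})·Σ_{m=0}^{k−1} ρ_m/(ζ−π_m); (2,2) entry ((ζ−π_0)⋯(ζ−π_{k−1}))^{−1}. Then m_k is the unique solution of the discrete Riemann–Hilbert problem on {π_0,…,π_{k−1}} with jump matrices w that satisfies m_k(ζ)·diag(ζ^{−k}, ζ^{k}) → I as ζ → ∞. -/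
open Filter Topology Matrix Polynomial

noncomputable section

/-- `Π(ζ) = (ζ−π₀)⋯(ζ−π_{k−1})`. -/
def Pik (k : ℕ) (π : ℕ → ℝ) (ζ : ℂ) : ℂ :=
  ∏ j ∈ Finset.range k, (ζ - (π j : ℂ))

/-- `ρ_m = ω(m)⁻¹ ∏_{0≤j≤k−1, j≠m} (π_m − π_j)⁻²`. -/
def rho (k : ℕ) (π ω : ℕ → ℝ) (m : ℕ) : ℂ :=
  (ω m : ℂ)⁻¹ * ∏ j ∈ (Finset.range k).erase m, (((π m : ℂ) - (π j : ℂ)) ^ 2)⁻¹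

/-- The explicit solution `m_k` of the DRHP on `{π₀,…,π_{k−1}}`. -/
def mkFun (k : ℕ) (π ω : ℕ → ℝ) (ζ : ℂ) : Mat2 :=
  !![Pik k π ζ, 0;
     Pik k π ζ * ∑ m ∈ Finset.range k, rho k π ω m / (ζ - (π m : ℂ)), (Pik k π ζ)⁻¹]
namespace Stmt12
open Bornology

def Qpoly (k : ℕ) (π ω : ℕ → ℝ) (ζ : ℂ) : ℂ :=
  ∑ m ∈ Finset.range k, rho k π ω m * ∏ j ∈ (Finset.range k).erase m, (ζ - (π j : ℂ))

lemma mem_Zset {π : ℕ → ℝ} {s : ℕ} {x : ℂ} :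
    x ∈ Zset π s ↔ ∃ j < s, (π j : ℂ) = x := by
  simp [Zset, Finset.mem_image]

lemma sub_ne_zero_of_not_mem {π : ℕ → ℝ} {k : ℕ} {ζ : ℂ} (h : ζ ∉ (Zset π k : Set ℂ))
    {j : ℕ} (hj : j < k) : ζ - (π j : ℂ) ≠ 0 := by
  rw [sub_ne_zero]
  intro hzj
  exact h (by rw [Finset.mem_coe, mem_Zset]; exact ⟨j, hj, hzj.symm⟩)

lemma diff_Pik (k : ℕ) (π : ℕ → ℝ) : Differentiable ℂ (Pik k π) :=
  Differentiable.fun_finsetProd fun i _ => differentiable_id.sub_const _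

lemma diff_Qpoly (k : ℕ) (π ω : ℕ → ℝ) : Differentiable ℂ (Qpoly k π ω) :=
  fun z => DifferentiableAt.fun_sum fun m _ =>
    ((Differentiable.fun_finsetProd fun i _ => differentiable_id.sub_const _) z).const_mul _

lemma Pik_ne_zero {k : ℕ} {π : ℕ → ℝ} {ζ : ℂ} (h : ζ ∉ (Zset π k : Set ℂ)) :
    Pik k π ζ ≠ 0 :=
  Finset.prod_ne_zero_iff.2 fun j hj =>
    sub_ne_zero_of_not_mem h (Finset.mem_range.1 hj)

lemma Pik_eq_mul {k : ℕ} {π : ℕ → ℝ} {m : ℕ} (hm : m < k) (ζ : ℂ) :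
    Pik k π ζ = (ζ - (π m : ℂ)) * ∏ j ∈ (Finset.range k).erase m, (ζ - (π j : ℂ)) :=
  (Finset.mul_prod_erase _ _ (Finset.mem_range.2 hm)).symm

lemma Pik_mul_sum {k : ℕ} {π ω : ℕ → ℝ} {ζ : ℂ} (h : ζ ∉ (Zset π k : Set ℂ)) :
    Pik k π ζ * ∑ m ∈ Finset.range k, rho k π ω m / (ζ - (π m : ℂ)) = Qpoly k π ω ζ := by
  rw [Finset.mul_sum, Qpoly]
  refine Finset.sum_congr rfl fun m hm => ?_
  have hm' := Finset.mem_range.1 hm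
  rw [Pik_eq_mul hm']
  have h0 := sub_ne_zero_of_not_mem h hm'
  field_simp

lemma injZ {k : ℕ} {π : ℕ → ℝ} (hπ : ∀ i < k, ∀ j < k, π i = π j → i = j)
    {x j : ℕ} (hx : x < k) (hj : j < k) (hne : j ≠ x) : (π x : ℂ) - (π j : ℂ) ≠ 0 := by
  rw [sub_ne_zero]
  intro hc
  exact hne (hπ j hj x hx (by exact_mod_cast hc.symm))

lemma prod_erase_ne_zero {k : ℕ} {π : ℕ → ℝ} (hπ : ∀ i < k, ∀ j < k, π i = π j → i = j)
    {x : ℕ} (hx : x < k) :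
    ∏ j ∈ (Finset.range k).erase x, ((π x : ℂ) - (π j : ℂ)) ≠ 0 :=
  Finset.prod_ne_zero_iff.2 fun j hj =>
    injZ hπ hx (Finset.mem_range.1 (Finset.mem_of_mem_erase hj)) (Finset.ne_of_mem_erase hj)

lemma Qpoly_at {k : ℕ} {π ω : ℕ → ℝ} (hπ : ∀ i < k, ∀ j < k, π i = π j → i = j)
    (hω : ∀ x < k, 0 < ω x) {x : ℕ} (hx : x < k) :
    (ω x : ℂ) * Qpoly k π ω (π x) =
      (∏ j ∈ (Finset.range k).erase x, ((π x : ℂ) - (π j : ℂ)))⁻¹ := by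
  have hsum : Qpoly k π ω (π x)
      = rho k π ω x * ∏ j ∈ (Finset.range k).erase x, ((π x : ℂ) - (π j : ℂ)) := by
    rw [Qpoly]
    rw [Finset.sum_eq_single x]
    · intro m hm hmx
      have hm' := Finset.mem_range.1 hm
      rw [Finset.prod_eq_zero (Finset.mem_erase.2 ⟨fun hc => hmx hc.symm, Finset.mem_range.2 hx⟩) (show ((π x : ℂ) - (π x : ℂ)) = 0 from sub_self _), mul_zero]
    · intro hxx; exact absurd (Finset.mem_range.2 hx) hxx
  rw [hsum, rho]
  have hω0 : (ω x : ℂ) ≠ 0 := by exact_mod_cast (hω x hx).ne'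
  rw [← mul_assoc, ← mul_assoc, mul_inv_cancel₀ hω0, one_mul]
  rw [← Finset.prod_inv_distrib, ← Finset.prod_mul_distrib]
  refine Finset.prod_congr rfl fun j hj => ?_
  have hd := injZ hπ hx (Finset.mem_range.1 (Finset.mem_of_mem_erase hj)) (Finset.ne_of_mem_erase hj)
  field_simp


lemma tendsto_sub_const_cobounded (c : ℂ) :
    Tendsto (fun ζ : ℂ => ζ - c) (cobounded ℂ) (cobounded ℂ) := by
  rw [← comap_norm_atTop (E := ℂ), tendsto_comap_iff]
  exact tendsto_atTop_mono (fun x => by simpa using norm_sub_norm_le x c)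
    (tendsto_atTop_add_const_right _ (-‖c‖) tendsto_comap)

lemma tendsto_inv_sub_const (c : ℂ) :
    Tendsto (fun ζ : ℂ => (ζ - c)⁻¹) (cobounded ℂ) (𝓝 0) :=
  tendsto_inv₀_cobounded.comp (tendsto_sub_const_cobounded c)

lemma entire_tendsto_zero {f : ℂ → ℂ} (hf : Differentiable ℂ f)
    (h : Tendsto f (cobounded ℂ) (𝓝 0)) : ∀ z, f z = 0 := by
  have hb : Bornology.IsBounded (Set.range f) := by
    have h1 : ∀ᶠ ζ in cobounded ℂ, ‖f ζ‖ ≤ 1 := by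
      filter_upwards [h (Metric.closedBall_mem_nhds 0 one_pos)] with ζ hζ
      simpa using hζ
    rw [(Metric.hasBasis_cobounded_compl_closedBall (0 : ℂ)).eventually_iff] at h1
    obtain ⟨R, -, hR⟩ := h1
    obtain ⟨C, hC⟩ := (isCompact_closedBall (0:ℂ) R).exists_bound_of_continuousOn
      hf.continuous.continuousOn
    rw [isBounded_iff_forall_norm_le]
    refine ⟨max C 1, ?_⟩
    rintro x ⟨ζ, rfl⟩
    by_cases hζ : ζ ∈ Metric.closedBall (0:ℂ) R
    · exact le_max_of_le_left (hC ζ hζ)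
    · exact le_max_of_le_right (hR hζ)
  obtain ⟨c, hc⟩ := hf.exists_eq_const_of_bounded hb
  have hc0 : c = 0 := tendsto_nhds_unique
    (show Tendsto (Function.const ℂ c) (cobounded ℂ) (𝓝 c) from tendsto_const_nhds) (hc ▸ h)
  intro z; rw [hc, hc0]; rfl

lemma tendsto_factor (c : ℝ) :
    Tendsto (fun ζ : ℂ => (ζ - (c : ℂ)) * ζ⁻¹) (cobounded ℂ) (𝓝 1) := by
  have h : Tendsto (fun ζ : ℂ => 1 - (c : ℂ) * ζ⁻¹) (cobounded ℂ) (𝓝 1) := by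
    have := (show Tendsto (fun _ : ℂ => (1:ℂ)) (cobounded ℂ) (𝓝 1) from tendsto_const_nhds).sub
      (tendsto_inv₀_cobounded.const_mul (c : ℂ))
    simpa using this
  refine h.congr' ?_
  filter_upwards [eventually_ne_cobounded (0 : ℂ)] with ζ hζ
  field_simp

lemma tendsto_Pik_mul (k : ℕ) (π : ℕ → ℝ) :
    Tendsto (fun ζ : ℂ => Pik k π ζ * ζ⁻¹ ^ k) (cobounded ℂ) (𝓝 1) := by
  have heq : ∀ ζ : ℂ, Pik k π ζ * ζ⁻¹ ^ k = ∏ j ∈ Finset.range k, ((ζ - (π j : ℂ)) * ζ⁻¹) := by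
    intro ζ
    rw [Finset.prod_mul_distrib, Pik, Finset.prod_const, Finset.card_range]
  simp only [heq]
  have := tendsto_finset_prod (Finset.range k)
    (f := fun (j : ℕ) (ζ : ℂ) => (ζ - (π j : ℂ)) * ζ⁻¹) (x := cobounded ℂ)
    (a := fun _ => (1:ℂ)) (fun j _ => tendsto_factor (π j))
  simpa using this

lemma tendsto_Pik_inv (k : ℕ) (π : ℕ → ℝ) :
    Tendsto (fun ζ : ℂ => (Pik k π ζ)⁻¹ * ζ ^ k) (cobounded ℂ) (𝓝 1) := by
  have h := (tendsto_Pik_mul k π).inv₀ one_ne_zero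
  rw [inv_one] at h
  refine h.congr' ?_
  filter_upwards [eventually_ne_cobounded (0 : ℂ)] with ζ hζ
  rw [mul_inv, inv_pow, inv_inv]

lemma diff_dslope {f : ℂ → ℂ} (hf : Differentiable ℂ f) (c : ℂ) :
    Differentiable ℂ (dslope f c) := by
  rw [← differentiableOn_univ] at *
  exact (Complex.differentiableOn_dslope Filter.univ_mem).2 hf

lemma factor_out {f : ℂ → ℂ} (hf : Differentiable ℂ f) (c : ℂ) (h0 : f c = 0) :
    ∃ g : ℂ → ℂ, Differentiable ℂ g ∧ ∀ z, f z = (z - c) * g z := by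
  refine ⟨dslope f c, diff_dslope hf c, fun z => ?_⟩
  have := sub_smul_dslope f c z
  rw [h0, sub_zero] at this
  simpa [smul_eq_mul] using this.symm

lemma factor_prod {f : ℂ → ℂ} (hf : Differentiable ℂ f) (n : ℕ) (p : ℕ → ℂ)
    (hp : ∀ i < n, ∀ j < n, p i = p j → i = j) (h0 : ∀ j < n, f (p j) = 0) :
    ∃ g : ℂ → ℂ, Differentiable ℂ g ∧
      ∀ z, f z = (∏ j ∈ Finset.range n, (z - p j)) * g z := by
  induction n with
  | zero => exact ⟨f, hf, fun z => by simp⟩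
  | succ n ih =>
    obtain ⟨g, hg, hfac⟩ := ih (fun i hi j hj => hp i (hi.trans n.lt_succ_self) j (hj.trans n.lt_succ_self))
      (fun j hj => h0 j (hj.trans n.lt_succ_self))
    have hgp : g (p n) = 0 := by
      have h1 := hfac (p n)
      rw [h0 n n.lt_succ_self] at h1
      have h2 : (∏ j ∈ Finset.range n, (p n - p j)) ≠ 0 :=
        Finset.prod_ne_zero_iff.2 fun j hj => sub_ne_zero.2 fun hc =>
          (Nat.ne_of_gt (Finset.mem_range.1 hj))
            (hp n n.lt_succ_self j ((Finset.mem_range.1 hj).trans n.lt_succ_self) hc)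
      exact (mul_eq_zero.1 h1.symm).resolve_left h2
    obtain ⟨g', hg', hfac'⟩ := factor_out hg (p n) hgp
    refine ⟨g', hg', fun z => ?_⟩
    rw [hfac z, hfac' z, Finset.prod_range_succ]
    ring

lemma entire_poly_vanish {k : ℕ} {π : ℕ → ℝ} (hπ : ∀ i < k, ∀ j < k, π i = π j → i = j)
    {D : ℂ → ℂ} (hD : Differentiable ℂ D)
    (hten : Tendsto (fun ζ : ℂ => D ζ * ζ⁻¹ ^ k) (cobounded ℂ) (𝓝 0))
    (hroots : ∀ j < k, D ((π j : ℂ)) = 0) : ∀ z, D z = 0 := by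
  obtain ⟨g, hg, hfac⟩ := factor_prod hD k (fun j => (π j : ℂ))
    (fun i hi j hj hij => hπ i hi j hj (Complex.ofReal_inj.1 hij)) hroots
  have hgz : ∀ z, g z = 0 := by
    apply entire_tendsto_zero hg
    have h2 : Tendsto (fun ζ : ℂ => (D ζ * ζ⁻¹ ^ k) / (Pik k π ζ * ζ⁻¹ ^ k))
        (cobounded ℂ) (𝓝 0) := by
      simpa [Pi.div_def] using hten.div (tendsto_Pik_mul k π) one_ne_zero
    refine h2.congr' ?_
    filter_upwards [eventually_ne_cobounded (0 : ℂ),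
      (tendsto_Pik_mul k π).eventually_ne one_ne_zero] with ζ hζ hP
    have hPik : Pik k π ζ ≠ 0 := fun hc => hP (by rw [hc, zero_mul])
    have hzk : (ζ : ℂ)⁻¹ ^ k ≠ 0 := pow_ne_zero _ (inv_ne_zero hζ)
    rw [hfac ζ]
    show (Pik k π ζ * g ζ * ζ⁻¹ ^ k) / (Pik k π ζ * ζ⁻¹ ^ k) = g ζ
    field_simp
  intro z
  rw [hfac z, hgz z, mul_zero]

lemma tendsto_entry {F : ℂ → Mat2} {l : Filter ℂ} {A : Mat2} (h : Tendsto F l (𝓝 A))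
    (i j : Fin 2) : Tendsto (fun ζ => F ζ i j) l (𝓝 (A i j)) := by
  have hc : Continuous fun M : Mat2 => M i j := (continuous_apply j).comp (continuous_apply i)
  exact (hc.tendsto A).comp h


lemma U_open (Z : Finset ℂ) (x : ℂ) : IsOpen (((Z : Set ℂ))ᶜ ∪ {x}) := by
  have : ((Z : Set ℂ))ᶜ ∪ {x} = (((Z : Set ℂ)) \ {x})ᶜ := by
    rw [Set.diff_eq, Set.compl_inter, compl_compl]
  rw [this]
  exact ((Z.finite_toSet.subset Set.diff_subset).isClosed).isOpen_compl

lemma U_mem_nhds {Z : Finset ℂ} {x : ℂ} (hx : x ∈ Z) :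
    ((Z : Set ℂ))ᶜ ∪ {x} ∈ 𝓝 x :=
  (U_open Z x).mem_nhds (Or.inr rfl)

lemma Zc_open (Z : Finset ℂ) : IsOpen ((Z : Set ℂ))ᶜ := Z.finite_toSet.isClosed.isOpen_compl

lemma Zc_mem_cobounded (Z : Finset ℂ) : ((Z : Set ℂ))ᶜ ∈ cobounded ℂ :=
  Bornology.le_cofinite ℂ (by rw [Filter.mem_cofinite, compl_compl]; exact Z.finite_toSet)

/-- Eventually in the punctured neighbourhood of `x ∈ Z`, points avoid `Z`. -/
lemma eventually_not_memZ {Z : Finset ℂ} {x : ℂ} (hx : x ∈ Z) :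
    ∀ᶠ ζ in 𝓝[≠] x, ζ ∉ (Z : Set ℂ) := by
  filter_upwards [nhdsWithin_le_nhds (U_mem_nhds hx), self_mem_nhdsWithin] with ζ h1 h2
  rcases h1 with h | h
  · exact h
  · exact absurd h h2

/-- Glue local analytic continuations across the finite set `Z`. -/
lemma extend_glue {Z : Finset ℂ} {u : ℂ → ℂ}
    (hu : DifferentiableOn ℂ u ((Z : Set ℂ))ᶜ)
    (hx : ∀ x ∈ Z, ∃ h : ℂ → ℂ, DifferentiableOn ℂ h (((Z : Set ℂ))ᶜ ∪ {x}) ∧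
      ∀ ζ, ζ ∉ (Z : Set ℂ) → h ζ = u ζ) :
    ∃ D : ℂ → ℂ, Differentiable ℂ D ∧ ∀ ζ, ζ ∉ (Z : Set ℂ) → D ζ = u ζ := by
  classical
  refine ⟨fun ζ => if hz : ζ ∈ Z then Classical.choose (hx ζ hz) ζ else u ζ, ?_, ?_⟩
  · intro z
    by_cases hz : z ∈ Z
    · obtain ⟨hd, heq⟩ := Classical.choose_spec (hx z hz)
      have hdiff : DifferentiableAt ℂ (Classical.choose (hx z hz)) z :=
        hd.differentiableAt (U_mem_nhds hz)
      refine hdiff.congr_of_eventuallyEq ?_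
      filter_upwards [U_mem_nhds hz] with ζ hζ
      rcases hζ with hζ | hζ
      · have hζ' : ζ ∉ Z := fun hc => hζ (Finset.mem_coe.2 hc)
        rw [dif_neg hζ', heq ζ hζ]
      · rw [Set.mem_singleton_iff] at hζ
        subst hζ
        rw [dif_pos hz]
    · have hmem : ((Z : Set ℂ))ᶜ ∈ 𝓝 z := (Zc_open Z).mem_nhds (by simpa using hz)
      have hdiff : DifferentiableAt ℂ u z := hu.differentiableAt hmem
      refine hdiff.congr_of_eventuallyEq ?_
      filter_upwards [hmem] with ζ hζ
      rw [dif_neg (fun hc => hζ (Finset.mem_coe.2 hc))]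
  · intro ζ hζ
    simp only []
    rw [dif_neg (fun hc => hζ (Finset.mem_coe.2 hc))]


lemma tendsto_mat2 {F : ℂ → Mat2} {l : Filter ℂ} {A : Mat2}
    (h : ∀ i j, Tendsto (fun ζ => F ζ i j) l (𝓝 (A i j))) : Tendsto F l (𝓝 A) :=
  tendsto_pi_nhds.2 fun i => tendsto_pi_nhds.2 fun j => h i j

variable {k : ℕ} {π ω : ℕ → ℝ}

lemma entryDiff_mkFun (k : ℕ) (π ω : ℕ → ℝ) :
    EntryDiffOn (mkFun k π ω) ((Zset π k : Set ℂ))ᶜ := by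
  intro i j
  fin_cases i <;> fin_cases j <;> simp only [mkFun, Matrix.cons_val', Matrix.cons_val_zero,
    Matrix.cons_val_one, Matrix.head_cons, Matrix.empty_val', Matrix.cons_val_fin_one,
    Matrix.head_fin_const, Fin.isValue, Matrix.of_apply]
  · exact (diff_Pik k π).differentiableOn
  · exact differentiableOn_const 0
  · refine ((diff_Pik k π).differentiableOn).mul ?_
    refine DifferentiableOn.fun_sum fun m hm => ?_
    refine (differentiableOn_const _).div ((differentiable_id.sub_const _).differentiableOn) ?_
    exact fun ζ hζ => sub_ne_zero_of_not_mem hζ (Finset.mem_range.1 hm)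
  · exact ((diff_Pik k π).differentiableOn).inv fun ζ hζ => Pik_ne_zero hζ

lemma asymp_mkFun (k : ℕ) (π ω : ℕ → ℝ) : AsympId k (mkFun k π ω) := by
  refine tendsto_mat2 fun i j => ?_
  have hsum : Tendsto (fun ζ : ℂ => ∑ m ∈ Finset.range k, rho k π ω m / (ζ - (π m : ℂ)))
      (cobounded ℂ) (𝓝 0) := by
    have := tendsto_finset_sum (Finset.range k)
      (f := fun (m : ℕ) (ζ : ℂ) => rho k π ω m / (ζ - (π m : ℂ))) (x := cobounded ℂ)
      (a := fun _ => (0:ℂ)) (fun m _ => by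
        simpa [div_eq_mul_inv] using (tendsto_inv_sub_const ((π m : ℝ) : ℂ)).const_mul (rho k π ω m))
    simpa using this
  fin_cases i <;> fin_cases j <;>
    simp only [Matrix.mul_diagonal, mkFun, Matrix.cons_val', Matrix.cons_val_zero,
      Matrix.cons_val_one, Matrix.head_cons, Matrix.empty_val', Matrix.cons_val_fin_one,
      Matrix.head_fin_const, Fin.isValue, Matrix.of_apply, Matrix.one_apply_eq,
      Matrix.one_apply_ne, Matrix.cons_val_one]
  · simpa using tendsto_Pik_mul k π
  · show Tendsto (fun ζ : ℂ => 0 * ζ ^ k) (cobounded ℂ) (𝓝 ((1 : Mat2) 0 1))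
    simpa using tendsto_const_nhds
  · show Tendsto (fun ζ : ℂ => (Pik k π ζ * ∑ m ∈ Finset.range k, rho k π ω m / (ζ - (π m : ℂ)))
      * ζ⁻¹ ^ k) (cobounded ℂ) (𝓝 ((1 : Mat2) 1 0))
    have h := (tendsto_Pik_mul k π).mul hsum
    rw [mul_zero] at h
    refine (by simpa using h : Tendsto _ (cobounded ℂ) (𝓝 (0:ℂ))).congr (fun ζ => by ring)
  · simpa using tendsto_Pik_inv k π


lemma solves_mkFun (k : ℕ) (π ω : ℕ → ℝ)
    (hπ : ∀ i < k, ∀ j < k, π i = π j → i = j)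
    (hω : ∀ x < k, 0 < ω x)
    (w : ℂ → Mat2) (hw : ∀ x < k, w (π x : ℂ) = !![0, (ω x : ℂ); 0, 0]) :
    SolvesDRHP (Zset π k) w (mkFun k π ω) := by
  refine ⟨entryDiff_mkFun k π ω, fun x hx => ?_⟩
  obtain ⟨x₀, hx₀k, hx₀⟩ := mem_Zset.1 hx
  set P' : ℂ → ℂ := fun ζ => ∏ j ∈ (Finset.range k).erase x₀, (ζ - (π j : ℂ)) with hP'
  have hP'diff : Differentiable ℂ P' :=
    Differentiable.fun_finsetProd fun _ _ => differentiable_id.sub_const _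
  have hP'ne : ∀ ζ ∈ ((Zset π k : Set ℂ))ᶜ ∪ {x}, P' ζ ≠ 0 := by
    intro ζ hζ
    refine Finset.prod_ne_zero_iff.2 fun j hj => ?_
    rcases hζ with hζ | hζ
    · exact sub_ne_zero_of_not_mem hζ (Finset.mem_range.1 (Finset.mem_of_mem_erase hj))
    · rw [Set.mem_singleton_iff] at hζ
      rw [hζ, ← hx₀]
      exact injZ hπ hx₀k (Finset.mem_range.1 (Finset.mem_of_mem_erase hj))
        (Finset.ne_of_mem_erase hj)
  refine ⟨fun ζ => !![(ζ - x) * Pik k π ζ, 0;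
      (ζ - x) * Qpoly k π ω ζ, (P' ζ)⁻¹], ?_, ?_, ?_⟩
  · intro i j
    fin_cases i <;> fin_cases j <;> simp only [Matrix.cons_val', Matrix.cons_val_zero,
      Matrix.cons_val_one, Matrix.head_cons, Matrix.empty_val', Matrix.cons_val_fin_one,
      Matrix.head_fin_const, Fin.isValue, Matrix.of_apply]
    · exact ((differentiable_id.sub_const _).mul (diff_Pik k π)).differentiableOn
    · exact differentiableOn_const 0
    · exact ((differentiable_id.sub_const _).mul (diff_Qpoly k π ω)).differentiableOn
    · exact hP'diff.differentiableOn.inv hP'ne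
  · intro ζ hζ
    have hsub : ζ - x ≠ 0 := by
      rw [← hx₀]; exact sub_ne_zero_of_not_mem hζ hx₀k
    have hPik : Pik k π ζ = (ζ - x) * P' ζ := by
      rw [← hx₀]; exact Pik_eq_mul hx₀k ζ
    have h2 : P' ζ ≠ 0 := hP'ne ζ (Or.inl hζ)
    ext i j
    fin_cases i <;> fin_cases j
    · simp [mkFun]
    · simp [mkFun]
    · simp [mkFun, Pik_mul_sum hζ]
    · show (P' ζ)⁻¹ = ((ζ - x) • mkFun k π ω ζ) 1 1
      have : ((ζ - x) • mkFun k π ω ζ) 1 1 = (ζ - x) * (Pik k π ζ)⁻¹ := by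
        simp [mkFun]
      rw [this, hPik]
      field_simp
  · have hF : Tendsto (fun ζ => !![(0:ℂ), (ω x₀ : ℂ) * Pik k π ζ;
        0, (ω x₀ : ℂ) * Qpoly k π ω ζ]) (𝓝[≠] x)
        (𝓝 (!![(0:ℂ), (ω x₀ : ℂ) * Pik k π x; 0, (ω x₀ : ℂ) * Qpoly k π ω x])) := by
      refine Tendsto.mono_left (Continuous.tendsto ?_ x) nhdsWithin_le_nhds
      refine continuous_matrix fun i j => ?_
      fin_cases i <;> fin_cases j
      · exact continuous_const
      · exact continuous_const.mul (diff_Pik k π).continuous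
      · exact continuous_const
      · exact continuous_const.mul (diff_Qpoly k π ω).continuous
    have hgx : !![(0:ℂ), (ω x₀ : ℂ) * Pik k π x; 0, (ω x₀ : ℂ) * Qpoly k π ω x]
        = !![(x - x) * Pik k π x, 0; (x - x) * Qpoly k π ω x, (P' x)⁻¹] := by
      have hPik0 : Pik k π x = 0 := by
        rw [← hx₀, Pik_eq_mul hx₀k, sub_self, zero_mul]
      have hQ : (ω x₀ : ℂ) * Qpoly k π ω x = (P' x)⁻¹ := by
        rw [← hx₀]
        exact Qpoly_at hπ hω hx₀k
      rw [hPik0, hQ, sub_self, zero_mul, zero_mul, mul_zero]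
    refine Tendsto.congr' ?_ (hgx ▸ hF)
    filter_upwards [eventually_not_memZ hx] with ζ hζ
    have hwx : w x = !![0, (ω x₀ : ℂ); 0, 0] := by rw [← hx₀, hw x₀ hx₀k]
    rw [hwx]
    ext i j
    fin_cases i <;> fin_cases j <;> rw [Matrix.mul_apply, Fin.sum_univ_two]
    · simp [mkFun]
    · simp [mkFun, mul_comm]
    · simp [mkFun]
    · simp [mkFun, Pik_mul_sum hζ, mul_comm]

lemma uniq (k : ℕ) (π ω : ℕ → ℝ)
    (hπ : ∀ i < k, ∀ j < k, π i = π j → i = j)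
    (hω : ∀ x < k, 0 < ω x)
    (w : ℂ → Mat2) (hw : ∀ x < k, w (π x : ℂ) = !![0, (ω x : ℂ); 0, 0])
    (m : ℂ → Mat2) (hS : SolvesDRHP (Zset π k) w m) (hA : AsympId k m) :
    ∀ ζ ∉ (Zset π k : Set ℂ), m ζ = mkFun k π ω ζ := by
  have hSmk := solves_mkFun k π ω hπ hω w hw
  have hAmk := asymp_mkFun k π ω
  set Z : Finset ℂ := Zset π k with hZ
  set d : ℂ → Mat2 := fun ζ => m ζ - mkFun k π ω ζ with hd
  have hddiff : ∀ i j : Fin 2, DifferentiableOn ℂ (fun ζ => d ζ i j) ((Z : Set ℂ))ᶜ := by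
    intro i j
    have := (hS.1 i j).sub (entryDiff_mkFun k π ω i j)
    refine this.congr fun ζ _ => ?_
    simp [hd, Matrix.sub_apply]
  -- jump data for the difference d
  have hjump : ∀ x ∈ Z, ∃ h : ℂ → Mat2, EntryDiffOn h (((Z : Set ℂ))ᶜ ∪ {x}) ∧
      (∀ ζ, ζ ∉ (Z : Set ℂ) → h ζ = (ζ - x) • d ζ) ∧
      Tendsto (fun ζ => d ζ * w x) (𝓝[≠] x) (𝓝 (h x)) := by
    intro x hx
    obtain ⟨g₁, hg₁d, hg₁e, hg₁t⟩ := hS.2 x hx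
    obtain ⟨g₂, hg₂d, hg₂e, hg₂t⟩ := hSmk.2 x hx
    refine ⟨fun ζ => g₁ ζ - g₂ ζ, ?_, ?_, ?_⟩
    · intro i j
      have := (hg₁d i j).sub (hg₂d i j)
      exact this.congr fun ζ _ => by simp [Matrix.sub_apply]
    · intro ζ hζ
      show g₁ ζ - g₂ ζ = (ζ - x) • d ζ
      rw [hg₁e ζ hζ, hg₂e ζ hζ, ← smul_sub]
    · have := hg₁t.sub hg₂t
      exact this.congr fun ζ => by rw [hd, Matrix.sub_mul]
  -- entrywise asymptotics of d
  have hasym0 : ∀ i : Fin 2, Tendsto (fun ζ : ℂ => d ζ i 0 * ζ⁻¹ ^ k) (cobounded ℂ) (𝓝 0) := by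
    intro i
    have h1 : Tendsto (fun ζ : ℂ => m ζ i 0 * ζ⁻¹ ^ k) (cobounded ℂ) (𝓝 ((1 : Mat2) i 0)) := by
      have := tendsto_entry hA i 0
      refine this.congr fun ζ => ?_
      rw [Matrix.mul_diagonal]
      simp
    have h2 : Tendsto (fun ζ : ℂ => mkFun k π ω ζ i 0 * ζ⁻¹ ^ k) (cobounded ℂ)
        (𝓝 ((1 : Mat2) i 0)) := by
      have := tendsto_entry hAmk i 0
      refine this.congr fun ζ => ?_
      rw [Matrix.mul_diagonal]
      simp
    have := h1.sub h2
    rw [sub_self] at this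
    refine this.congr fun ζ => ?_
    rw [hd]
    simp [Matrix.sub_apply, sub_mul]
  have hasym1 : ∀ i : Fin 2, Tendsto (fun ζ : ℂ => d ζ i 1 * ζ ^ k) (cobounded ℂ) (𝓝 0) := by
    intro i
    have h1 : Tendsto (fun ζ : ℂ => m ζ i 1 * ζ ^ k) (cobounded ℂ) (𝓝 ((1 : Mat2) i 1)) := by
      have := tendsto_entry hA i 1
      refine this.congr fun ζ => ?_
      rw [Matrix.mul_diagonal]
      simp
    have h2 : Tendsto (fun ζ : ℂ => mkFun k π ω ζ i 1 * ζ ^ k) (cobounded ℂ)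
        (𝓝 ((1 : Mat2) i 1)) := by
      have := tendsto_entry hAmk i 1
      refine this.congr fun ζ => ?_
      rw [Matrix.mul_diagonal]
      simp
    have := h1.sub h2
    rw [sub_self] at this
    refine this.congr fun ζ => ?_
    rw [hd]
    simp [Matrix.sub_apply, sub_mul]
  -- column 1 of d vanishes off Z
  have hd1 : ∀ i : Fin 2, ∀ ζ, ζ ∉ (Z : Set ℂ) → d ζ i 1 = 0 := by
    intro i
    have hu : DifferentiableOn ℂ (fun ζ => d ζ i 1 * Pik k π ζ) ((Z : Set ℂ))ᶜ :=
      (hddiff i 1).mul (diff_Pik k π).differentiableOn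
    have hloc : ∀ x ∈ Z, ∃ h' : ℂ → ℂ, DifferentiableOn ℂ h' (((Z : Set ℂ))ᶜ ∪ {x}) ∧
        ∀ ζ, ζ ∉ (Z : Set ℂ) → h' ζ = d ζ i 1 * Pik k π ζ := by
      intro x hx
      obtain ⟨h, hhd, hhe, -⟩ := hjump x hx
      obtain ⟨x₀, hx₀k, hx₀⟩ := mem_Zset.1 hx
      refine ⟨fun ζ => h ζ i 1 * ∏ j ∈ (Finset.range k).erase x₀, (ζ - (π j : ℂ)),
        (hhd i 1).mul (Differentiable.fun_finsetProd fun _ _ =>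
          differentiable_id.sub_const _).differentiableOn, ?_⟩
      intro ζ hζ
      show h ζ i 1 * ∏ j ∈ (Finset.range k).erase x₀, (ζ - (π j : ℂ))
          = d ζ i 1 * Pik k π ζ
      rw [hhe ζ hζ]
      have heg : ((ζ - x) • d ζ) i 1 = (ζ - x) * d ζ i 1 := by
        simp [Matrix.smul_apply]
      rw [heg, Pik_eq_mul hx₀k, hx₀]
      ring
    obtain ⟨E, hE, hEeq⟩ := extend_glue hu hloc
    have hEt : Tendsto E (cobounded ℂ) (𝓝 0) := by
      have base := (hasym1 i).mul (tendsto_Pik_mul k π)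
      rw [zero_mul] at base
      refine base.congr' ?_
      filter_upwards [Zc_mem_cobounded Z, eventually_ne_cobounded (0 : ℂ)] with ζ hζ h0
      rw [hEeq ζ hζ]
      have hkk : (ζ : ℂ) ^ k * ζ⁻¹ ^ k = 1 := by
        rw [inv_pow, mul_inv_cancel₀ (pow_ne_zero _ h0)]
      calc d ζ i 1 * ζ ^ k * (Pik k π ζ * ζ⁻¹ ^ k)
          = d ζ i 1 * Pik k π ζ * (ζ ^ k * ζ⁻¹ ^ k) := by ring
        _ = d ζ i 1 * Pik k π ζ := by rw [hkk, mul_one]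
    have hE0 := entire_tendsto_zero hE hEt
    intro ζ hζ
    have h1 : d ζ i 1 * Pik k π ζ = 0 := by rw [← hEeq ζ hζ]; exact hE0 ζ
    exact (mul_eq_zero.1 h1).resolve_right (Pik_ne_zero hζ)
  -- extension of column 0 of d
  have hD0 : ∀ i : Fin 2, ∃ D : ℂ → ℂ, Differentiable ℂ D ∧
      ∀ ζ, ζ ∉ (Z : Set ℂ) → D ζ = d ζ i 0 := by
    intro i
    refine extend_glue (hddiff i 0) ?_
    intro x hx
    obtain ⟨h, hhd, hhe, hht⟩ := hjump x hx
    obtain ⟨x₀, hx₀k, hx₀⟩ := mem_Zset.1 hx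
    have hwx : w x = !![0, (ω x₀ : ℂ); 0, 0] := by rw [← hx₀, hw x₀ hx₀k]
    have hx00 : h x i 0 = 0 := by
      have ht0 := tendsto_entry hht i 0
      have hzero : ∀ ζ : ℂ, (d ζ * w x) i 0 = 0 := by
        intro ζ
        rw [hwx, Matrix.mul_apply, Fin.sum_univ_two]
        simp
      exact tendsto_nhds_unique (ht0.congr hzero) tendsto_const_nhds
    refine ⟨dslope (fun ζ => h ζ i 0) x,
      (Complex.differentiableOn_dslope (U_mem_nhds hx)).2 (hhd i 0), ?_⟩
    intro ζ hζ
    have hne : ζ ≠ x := fun hc => hζ (hc ▸ (Finset.mem_coe.2 hx))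
    rw [dslope_of_ne _ hne, slope_def_field]
    rw [hhe ζ hζ, hx00]
    have : ((ζ - x) • d ζ) i 0 = (ζ - x) * d ζ i 0 := by simp [Matrix.smul_apply]
    rw [this, sub_zero]
    field_simp [sub_ne_zero.2 hne]
  -- conclude column 0 vanishes
  have hd0 : ∀ i : Fin 2, ∀ ζ, ζ ∉ (Z : Set ℂ) → d ζ i 0 = 0 := by
    intro i
    obtain ⟨D, hDdiff, hDeq⟩ := hD0 i
    have hroots : ∀ j, j < k → D ((π j : ℂ)) = 0 := by
      intro j hj
      set x : ℂ := (π j : ℂ) with hxd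
      have hx : x ∈ Z := mem_Zset.2 ⟨j, hj, rfl⟩
      obtain ⟨h, hhd, hhe, hht⟩ := hjump x hx
      have hwx : w x = !![0, (ω j : ℂ); 0, 0] := hw j hj
      -- h x i 1 = D x * ω j
      have ht1 := tendsto_entry hht i 1
      have hev : ∀ᶠ ζ in 𝓝[≠] x, (d ζ * w x) i 1 = D ζ * (ω j : ℂ) := by
        filter_upwards [eventually_not_memZ hx] with ζ hζ
        rw [hwx, Matrix.mul_apply, Fin.sum_univ_two, hDeq ζ hζ]
        simp
      have ht2 : Tendsto (fun ζ => D ζ * (ω j : ℂ)) (𝓝[≠] x) (𝓝 (D x * (ω j : ℂ))) :=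
        ((hDdiff.continuous.tendsto x).mono_left nhdsWithin_le_nhds).mul_const _
      have hval : h x i 1 = D x * (ω j : ℂ) :=
        tendsto_nhds_unique (ht1.congr' hev) ht2
      -- h x i 1 = 0 since column 1 of d vanishes
      have hcont : Tendsto (fun ζ => h ζ i 1) (𝓝[≠] x) (𝓝 (h x i 1)) := by
        have : ContinuousAt (fun ζ => h ζ i 1) x :=
          ((hhd i 1).continuousOn.continuousAt (U_mem_nhds hx))
        exact this.tendsto.mono_left nhdsWithin_le_nhds
      have hzero : ∀ᶠ ζ in 𝓝[≠] x, (fun ζ => h ζ i 1) ζ = (0 : ℂ) := by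
        filter_upwards [eventually_not_memZ hx] with ζ hζ
        rw [hhe ζ hζ]
        have : ((ζ - x) • d ζ) i 1 = (ζ - x) * d ζ i 1 := by simp [Matrix.smul_apply]
        rw [this, hd1 i ζ hζ, mul_zero]
      have hval0 : h x i 1 = 0 :=
        tendsto_nhds_unique (hcont.congr' hzero) tendsto_const_nhds
      have hωne : (ω j : ℂ) ≠ 0 := by
        exact_mod_cast (hω j hj).ne'
      have := hval0 ▸ hval
      exact (mul_eq_zero.1 this.symm).resolve_right hωne
    have hDt : Tendsto (fun ζ : ℂ => D ζ * ζ⁻¹ ^ k) (cobounded ℂ) (𝓝 0) := by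
      refine (hasym0 i).congr' ?_
      filter_upwards [Zc_mem_cobounded Z] with ζ hζ
      rw [hDeq ζ hζ]
    have hD0' := entire_poly_vanish hπ hDdiff hDt hroots
    intro ζ hζ
    rw [← hDeq ζ hζ]
    exact hD0' ζ
  intro ζ hζ
  have hsub : ∀ i j : Fin 2, d ζ i j = 0 := by
    intro i j
    fin_cases j
    · exact hd0 i ζ hζ
    · exact hd1 i ζ hζ
  ext i j
  have h0 : m ζ i j - mkFun k π ω ζ i j = 0 := by
    simpa [hd, Matrix.sub_apply] using hsub i j
  exact sub_eq_zero.1 h0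

end Stmt12

/-- the explicit matrix `m_k` is the unique solution of the DRHP on
`{π₀,…,π_{k−1}}` with the asymptotics `diag(ζ^k, ζ^{−k})` at infinity. -/
theorem stmt12 (k : ℕ) (hk : 1 ≤ k)
    (π ω : ℕ → ℝ)
    (hπ : ∀ i < k, ∀ j < k, π i = π j → i = j)
    (hω : ∀ x < k, 0 < ω x)
    (w : ℂ → Mat2) (hw : ∀ x < k, w (π x : ℂ) = !![0, (ω x : ℂ); 0, 0]) :
    (SolvesDRHP (Zset π k) w (mkFun k π ω) ∧ AsympId k (mkFun k π ω)) ∧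
    (∀ m : ℂ → Mat2, SolvesDRHP (Zset π k) w m → AsympId k m →
      ∀ ζ ∉ (Zset π k : Set ℂ), m ζ = mkFun k π ω ζ) := by
  refine ⟨⟨Stmt12.solves_mkFun k π ω hπ hω w hw, Stmt12.asymp_mkFun k π ω⟩, ?_⟩
  intro m hS hA
  exact Stmt12.uniq k π ω hπ hω w hw m hS hA
end
end

section
/- Let k ≥ 1, let π_0,…,π_k be distinct reals and ω(0),…,ω(k) strictly positive reals, set w(π_k) = [[0, ω(k)],[0,0]], ρ_m = ω(m)^{−1}·∏_{0≤j≤k−1, j≠m}(π_m−π_j)^{−2} for 0 ≤ m ≤ k−1, and let m_k be the explicit matrix-valued function with entries: (1,1): (ζ−π_0)⋯(ζ−π_{k−1}); (1,2): 0; (2,1): (ζ−π_0)⋯(ζ−π_{k−1})·Σ_{m=0}^{k−1} ρ_m/(ζ−π_m); (2,2): ((ζ−π_0)⋯(ζ−π_{k−1}))^{−1}. Define q_k = (Σ_{m=0}^{k} [ω(m)^{−1}·∏_{0≤j≤k, j≠m}(π_m−π_j)^{−2}])^{−1}, p_k = −q_k·Σ_{m=0}^{k−1} ρ_m/(π_k−π_m),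 r_k = −q_k·(Σ_{m=0}^{k−1} ρ_m/(π_k−π_m))². Then A_k = [[p_k, q_k],[r_k, −p_k]] is the unique 2×2 complex matrix A satisfying both A·m_k(π_k)·w(π_k) = 0 and m_k(π_k)·w(π_k) + A·m_k′(π_k)·w(π_k) = A·m_k(π_k), where m_k′ denotes the derivative of m_k. -/
open Filter Topology Matrix

noncomputable section

/-- The entrywise complex derivative of `m_k`. -/
def mkDeriv (k : ℕ) (π ω : ℕ → ℝ) (ζ : ℂ) : Mat2 :=
  Matrix.of fun i j => deriv (fun z => mkFun k π ω z i j) ζ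

/-- the explicit matrix `A_k` is the unique matrix `A` satisfying
`A·m_k(π_k)·w(π_k) = 0` and `m_k(π_k)·w(π_k) + A·m_k′(π_k)·w(π_k) = A·m_k(π_k)`. -/
theorem stmt13 (k : ℕ) (hk : 1 ≤ k)
    (π ω : ℕ → ℝ)
    (hπ : ∀ i ≤ k, ∀ j ≤ k, π i = π j → i = j)
    (hω : ∀ x ≤ k, 0 < ω x)
    (pk qk rk : ℂ)
    (hqk : qk = (∑ m ∈ Finset.range (k + 1), ((ω m : ℂ)⁻¹ *
        ∏ j ∈ (Finset.range (k + 1)).erase m, (((π m : ℂ) - (π j : ℂ)) ^ 2)⁻¹))⁻¹)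
    (hpk : pk = -qk * ∑ m ∈ Finset.range k, rho k π ω m / ((π k : ℂ) - (π m : ℂ)))
    (hrk : rk = -qk * (∑ m ∈ Finset.range k, rho k π ω m / ((π k : ℂ) - (π m : ℂ))) ^ 2) :
    (!![pk, qk; rk, -pk] * (mkFun k π ω (π k : ℂ) * !![0, (ω k : ℂ); 0, 0]) = 0 ∧
      mkFun k π ω (π k : ℂ) * !![0, (ω k : ℂ); 0, 0] +
          !![pk, qk; rk, -pk] * (mkDeriv k π ω (π k : ℂ) * !![0, (ω k : ℂ); 0, 0]) =
        !![pk, qk; rk, -pk] * mkFun k π ω (π k : ℂ)) ∧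
    (∀ A : Mat2,
      (A * (mkFun k π ω (π k : ℂ) * !![0, (ω k : ℂ); 0, 0]) = 0 ∧
        mkFun k π ω (π k : ℂ) * !![0, (ω k : ℂ); 0, 0] +
            A * (mkDeriv k π ω (π k : ℂ) * !![0, (ω k : ℂ); 0, 0]) =
          A * mkFun k π ω (π k : ℂ)) →
      A = !![pk, qk; rk, -pk]) := by
  have hπne : ∀ i ≤ k, ∀ j ≤ k, i ≠ j → ((π i : ℂ) - (π j : ℂ)) ≠ 0 := by
    intro i hi j hj hij
    rw [sub_ne_zero, Ne, Complex.ofReal_inj]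
    exact fun h => hij (hπ i hi j hj h)
  have hωc : (ω k : ℂ) ≠ 0 := by
    simpa using (hω k le_rfl).ne'
  set ζ₀ : ℂ := ((π k : ℝ) : ℂ) with hζ₀def
  have hsubne : ∀ j ∈ Finset.range k, (ζ₀ - (π j : ℂ)) ≠ 0 := fun j hj =>
    hπne k le_rfl j (Finset.mem_range.1 hj).le (Finset.mem_range.1 hj).ne'
  have ha : Pik k π ζ₀ ≠ 0 := Finset.prod_ne_zero_iff.mpr hsubne
  set a : ℂ := Pik k π ζ₀ with ha_def
  set s : ℂ := ∑ m ∈ Finset.range k, rho k π ω m / (ζ₀ - (π m : ℂ)) with hs_def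
  set T : ℂ := ∑ m ∈ Finset.range k, rho k π ω m / (ζ₀ - (π m : ℂ)) ^ 2 with hT_def
  set d : ℂ := deriv (fun z => Pik k π z) ζ₀ with hd_def
  set f : ℂ := deriv (fun z => (Pik k π z)⁻¹) ζ₀ with hf_def
  subst hpk hrk
  -- value of mkFun at ζ₀
  have hm : mkFun k π ω ζ₀ = !![a, 0; a * s, a⁻¹] := by
    rw [ha_def, hs_def]; rfl
  -- derivatives
  have hS : HasDerivAt (fun z => ∑ m ∈ Finset.range k, rho k π ω m / (z - (π m : ℂ)))
      (-T) ζ₀ := by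
    have h : HasDerivAt (fun z => ∑ m ∈ Finset.range k, rho k π ω m / (z - (π m : ℂ)))
        (∑ m ∈ Finset.range k, -(rho k π ω m / (ζ₀ - (π m : ℂ)) ^ 2)) ζ₀ := by
      apply HasDerivAt.fun_sum
      intro m hm
      have h1 : HasDerivAt (fun z : ℂ => z - (π m : ℂ)) 1 ζ₀ :=
        (hasDerivAt_id ζ₀).sub_const _
      have h2 := (h1.inv (hsubne m hm)).const_mul (rho k π ω m)
      simp only [div_eq_mul_inv]
      refine h2.congr_deriv ?_
      ring
    convert h using 1
    rw [hT_def, ← Finset.sum_neg_distrib]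
  have hPdiff : DifferentiableAt ℂ (fun z => Pik k π z) ζ₀ := by
    unfold Pik
    exact DifferentiableAt.fun_finsetProd fun j _ => differentiableAt_id.sub_const _
  have hP : HasDerivAt (fun z => Pik k π z) d ζ₀ := by
    rw [hd_def]; exact hPdiff.hasDerivAt
  have h10 : HasDerivAt (fun z => Pik k π z * ∑ m ∈ Finset.range k, rho k π ω m / (z - (π m : ℂ)))
      (d * s + a * -T) ζ₀ := by
    have := hP.mul hS
    exact this
  have hm' : mkDeriv k π ω ζ₀ = !![d, 0; d * s + a * -T, f] := by
    ext i j
    fin_cases i <;> fin_cases j <;>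
      simp only [mkDeriv, mkFun, Matrix.of_apply, Matrix.cons_val', Matrix.cons_val_zero,
        Matrix.cons_val_one, Matrix.head_cons, Matrix.head_fin_const, Matrix.empty_val',
        Matrix.cons_val_fin_one, Fin.isValue]
    · exact rfl
    · exact deriv_const _ _
    · exact h10.deriv
    · exact rfl
  -- the sum identity
  have hrange : (Finset.range (k+1)).erase k = Finset.range k := by
    rw [Finset.range_add_one, Finset.erase_insert Finset.notMem_range_self]
  have htermk : ((ω k : ℂ)⁻¹ *
      ∏ j ∈ (Finset.range (k+1)).erase k, (((π k : ℂ) - (π j : ℂ)) ^ 2)⁻¹)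
      = (ω k : ℂ)⁻¹ * (a ^ 2)⁻¹ := by
    rw [hrange, Finset.prod_inv_distrib, Finset.prod_pow, ha_def]
    rfl
  have htermm : ∀ m ∈ Finset.range k,
      ((ω m : ℂ)⁻¹ * ∏ j ∈ (Finset.range (k+1)).erase m, (((π m : ℂ) - (π j : ℂ)) ^ 2)⁻¹)
      = rho k π ω m / (ζ₀ - (π m : ℂ)) ^ 2 := by
    intro m hmk
    have hmlt := Finset.mem_range.1 hmk
    have h1 : (Finset.range (k+1)).erase m = insert k ((Finset.range k).erase m) := by
      rw [Finset.range_add_one, Finset.erase_insert_of_ne hmlt.ne']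
    have h2 : k ∉ (Finset.range k).erase m := by simp
    rw [h1, Finset.prod_insert h2, rho, div_eq_mul_inv]
    have h3 : ((π m : ℂ) - ζ₀) ^ 2 = (ζ₀ - (π m : ℂ)) ^ 2 := by ring
    rw [h3]
    ring
  have hsum : (∑ m ∈ Finset.range (k + 1), ((ω m : ℂ)⁻¹ *
      ∏ j ∈ (Finset.range (k + 1)).erase m, (((π m : ℂ) - (π j : ℂ)) ^ 2)⁻¹))
      = T + (ω k : ℂ)⁻¹ * (a ^ 2)⁻¹ := by
    rw [Finset.sum_range_succ, htermk]
    congr 1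
    exact (Finset.sum_congr rfl htermm).trans hT_def.symm
  have hRpos : (0:ℝ) < ∑ m ∈ Finset.range (k+1), (ω m)⁻¹ *
      ∏ j ∈ (Finset.range (k+1)).erase m, ((π m - π j) ^ 2)⁻¹ := by
    apply Finset.sum_pos
    · intro m hm
      have hmk := Nat.lt_succ_iff.1 (Finset.mem_range.1 hm)
      apply mul_pos (inv_pos.2 (hω m hmk))
      apply Finset.prod_pos
      intro j hj
      have hjk := Nat.lt_succ_iff.1 (Finset.mem_range.1 (Finset.mem_of_mem_erase hj))
      have hpij : π m - π j ≠ 0 :=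
        sub_ne_zero.2 fun h => (Finset.ne_of_mem_erase hj) (hπ m hmk j hjk h).symm
      exact inv_pos.2 (sq_pos_of_ne_zero hpij)
    · exact ⟨0, Finset.mem_range.2 (Nat.succ_pos k)⟩
  have hcast : (∑ m ∈ Finset.range (k + 1), ((ω m : ℂ)⁻¹ *
      ∏ j ∈ (Finset.range (k + 1)).erase m, (((π m : ℂ) - (π j : ℂ)) ^ 2)⁻¹))
      = ((∑ m ∈ Finset.range (k+1), (ω m)⁻¹ *
      ∏ j ∈ (Finset.range (k+1)).erase m, ((π m - π j) ^ 2)⁻¹ : ℝ) : ℂ) := by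
    push_cast
    rfl
  have hsum_ne : T + (ω k : ℂ)⁻¹ * (a ^ 2)⁻¹ ≠ 0 := by
    rw [← hsum, hcast]
    exact_mod_cast hRpos.ne'
  have hqk' : qk = (T + (ω k : ℂ)⁻¹ * (a ^ 2)⁻¹)⁻¹ := by rw [hqk, hsum]
  have hqk_ne : qk ≠ 0 := by rw [hqk']; exact inv_ne_zero hsum_ne
  have hq1 : qk * (T + (ω k : ℂ)⁻¹ * (a ^ 2)⁻¹) = 1 := by
    rw [hqk']; exact inv_mul_cancel₀ hsum_ne
  have hq2 : qk * ((ω k : ℂ) * a ^ 2 * T + 1) = (ω k : ℂ) * a ^ 2 := by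
    field_simp at hq1
    linear_combination hq1
  have hkey : a * (ω k : ℂ) - (ω k : ℂ) * qk * a * T = qk * a⁻¹ := by
    field_simp
    linear_combination -hq2
  have hkeyX : qk * (a⁻¹ + (ω k : ℂ) * a * T) = a * (ω k : ℂ) := by
    linear_combination -hkey
  have hXne : a⁻¹ + (ω k : ℂ) * a * T ≠ 0 := by
    have hX : a⁻¹ + (ω k : ℂ) * a * T = ((ω k : ℂ) * a) * (T + (ω k : ℂ)⁻¹ * (a ^ 2)⁻¹) := by
      field_simp
      ring
    rw [hX]
    exact mul_ne_zero (mul_ne_zero hωc ha) hsum_ne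
  refine ⟨⟨?_, ?_⟩, ?_⟩
  · rw [hm]
    ext i j
    fin_cases i <;> fin_cases j <;>
      simp [Matrix.mul_apply, Fin.sum_univ_two] <;> ring
  · rw [hm, hm']
    ext i j
    fin_cases i <;> fin_cases j <;>
      simp [Matrix.mul_apply, Matrix.add_apply, Fin.sum_univ_two]
    · ring
    · linear_combination hkey
    · ring
    · linear_combination s * hkey
  · rintro A ⟨h1, h2⟩
    rw [hm] at h1 h2
    rw [hm'] at h2
    have e01 := Matrix.ext_iff.2 h1 0 1
    have e11 := Matrix.ext_iff.2 h1 1 1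
    have g01 := Matrix.ext_iff.2 h2 0 1
    have g11 := Matrix.ext_iff.2 h2 1 1
    simp [Matrix.mul_apply, Matrix.add_apply, Fin.sum_univ_two] at e01 e11 g01 g11
    have haω : a * (ω k : ℂ) ≠ 0 := mul_ne_zero ha hωc
    have hA00 : A 0 0 = -s * A 0 1 := by
      have hfac : (A 0 0 + s * A 0 1) * (a * (ω k : ℂ)) = 0 := by linear_combination e01
      rcases mul_eq_zero.1 hfac with h | h
      · linear_combination h
      · exact absurd h haω
    have hA10 : A 1 0 = -s * A 1 1 := by
      have hfac : (A 1 0 + s * A 1 1) * (a * (ω k : ℂ)) = 0 := by linear_combination e11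
      rcases mul_eq_zero.1 hfac with h | h
      · linear_combination h
      · exact absurd h haω
    have hA01 : A 0 1 = qk := by
      apply mul_right_cancel₀ hXne
      rw [hkeyX]
      linear_combination -g01 + d * (ω k : ℂ) * hA00
    have hA11 : A 1 1 = qk * s := by
      apply mul_right_cancel₀ hXne
      have : qk * s * (a⁻¹ + (ω k : ℂ) * a * T) = a * s * (ω k : ℂ) := by
        linear_combination s * hkeyX
      rw [this]
      linear_combination -g11 + d * (ω k : ℂ) * hA10
    ext i j
    fin_cases i <;> fin_cases j <;>
      simp [hA00, hA10, hA01, hA11] <;> ring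
end
end

section
/- Let π_0,…,π_N be distinct reals, ω(0),…,ω(N) strictly positive reals, 1 ≤ k ≤ N, let {P_n}_{n=0}^N be the monic orthogonal polynomials for (f,g)_ω = Σ_{x=0}^N f(π_x)g(π_x)ω(x), let Z = ∏_{i=0}^{k−1}(P_i,P_i)_ω, and let D_s be the determinants defined via the Christoffel–Darboux kernel. Let q_k = (Σ_{m=0}^{k} [ω(m)^{−1}·∏_{0≤j≤k, j≠m}(π_m−π_j)^{−2}])^{−1}. Then D_k = Z^{−1}·∏_{0≤i<j≤k−1}(π_i−π_j)²·∏_{l=0}^{k−1}ω(l), and D_{k+1} = ω(k)·q_k^{−1}·D_k·∏_{l=0}^{k−1}(π_k−π_l)². -/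
open Filter Topology Matrix Polynomial

noncomputable section

/-- The inner product `(f,g)_ω = Σ_{x=0}^{N} f(π x) g(π x) ω x` on complex polynomials,
for real points `π` and real weights `ω`. -/
def ipR (N : ℕ) (π ω : ℕ → ℝ) (f g : Polynomial ℂ) : ℂ :=
  ∑ x ∈ Finset.range (N + 1), f.eval (π x : ℂ) * g.eval (π x : ℂ) * (ω x : ℂ)

/-- The Christoffel–Darboux kernel built from `P = P_k`, `Q = P_{k-1}` and
`c = (P_{k-1},P_{k-1})_ω⁻¹`. -/
def CDker (π ω : ℕ → ℝ) (c : ℂ) (P Q : Polynomial ℂ) (x y : ℕ) : ℂ :=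
  if x = y then
    c * (ω x : ℂ) *
      ((Polynomial.derivative P).eval (π x : ℂ) * Q.eval (π x : ℂ) -
        (Polynomial.derivative Q).eval (π x : ℂ) * P.eval (π x : ℂ))
  else
    c * (Real.sqrt (ω x * ω y) : ℂ) *
      (P.eval (π x : ℂ) * Q.eval (π y : ℂ) - Q.eval (π x : ℂ) * P.eval (π y : ℂ)) /
      ((π x : ℂ) - (π y : ℂ))

/-- The Fredholm determinant `D_s = det(Id - K|_{{s,…,N}×{s,…,N}})`. -/
def Dfred (N s : ℕ) (K : ℕ → ℕ → ℂ) : ℂ :=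
  Matrix.det (1 - Matrix.of fun i j : Fin (N + 1 - s) => K (s + i) (s + j))

namespace Stmt14Aux

variable {N : ℕ} {π ω : ℕ → ℝ} {P : ℕ → Polynomial ℂ}

lemma ipR_symm (f g : Polynomial ℂ) : ipR N π ω f g = ipR N π ω g f :=
  Finset.sum_congr rfl fun x _ => by ring

lemma ipR_sum_right (s : Finset ℕ) (f : Polynomial ℂ) (g : ℕ → Polynomial ℂ) :
    ipR N π ω f (∑ i ∈ s, g i) = ∑ i ∈ s, ipR N π ω f (g i) := by
  simp only [ipR, eval_finset_sum, Finset.mul_sum, Finset.sum_mul]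
  rw [Finset.sum_comm]

lemma ipR_C_mul_right (a : ℂ) (f g : Polynomial ℂ) :
    ipR N π ω f (Polynomial.C a * g) = a * ipR N π ω f g := by
  simp only [ipR, eval_mul, eval_C, Finset.mul_sum]
  exact Finset.sum_congr rfl fun x _ => by ring

lemma ipR_X_mul (f g : Polynomial ℂ) :
    ipR N π ω (Polynomial.X * f) g = ipR N π ω f (Polynomial.X * g) := by
  unfold ipR
  exact Finset.sum_congr rfl fun x _ => by simp only [eval_mul, eval_X]; ring

lemma ipR_sub_left (f g h : Polynomial ℂ) :
    ipR N π ω (f - g) h = ipR N π ω f h - ipR N π ω g h := by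
  simp only [ipR, eval_sub, sub_mul, Finset.sum_sub_distrib]

lemma ipR_add_left (f g h : Polynomial ℂ) :
    ipR N π ω (f + g) h = ipR N π ω f h + ipR N π ω g h := by
  simp only [ipR, eval_add, add_mul, Finset.sum_add_distrib]

lemma span_P (hPm : ∀ n ≤ N, (P n).Monic ∧ (P n).natDegree = n) :
    ∀ d, d ≤ N → ∀ f : Polynomial ℂ, f.degree < ((d + 1 : ℕ) : WithBot ℕ) →
      ∃ c : ℕ → ℂ, f = ∑ i ∈ Finset.range (d + 1), Polynomial.C (c i) * P i := by
  intro d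
  induction d with
  | zero =>
    intro _ f hf
    have hP0 : P 0 = 1 :=
      ((hPm 0 (Nat.zero_le N)).1.natDegree_eq_zero).1 (hPm 0 (Nat.zero_le N)).2
    have hf0 : f = Polynomial.C (f.coeff 0) :=
      f.eq_C_of_degree_le_zero (by exact_mod_cast Nat.WithBot.lt_one_iff_le_zero.1 (by exact_mod_cast hf))
    exact ⟨fun _ => f.coeff 0, by simp [hP0, ← hf0]⟩
  | succ d ih =>
    intro hdN f hf
    have hd : d ≤ N := le_trans (Nat.le_succ d) hdN
    have hm := hPm (d + 1) hdN
    have hg : (f - Polynomial.C (f.coeff (d + 1)) * P (d + 1)).degree < ((d + 1 : ℕ) : WithBot ℕ) := by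
      rw [Polynomial.degree_lt_iff_coeff_zero]
      intro m hm'
      simp only [Polynomial.coeff_sub, Polynomial.coeff_C_mul]
      rcases eq_or_lt_of_le hm' with h | h
      · have h1 : (P (d + 1)).coeff (d + 1) = 1 := by
          have := hm.1.coeff_natDegree
          rwa [hm.2] at this
        rw [← h, h1, mul_one, sub_self]
      · have h1 : f.coeff m = 0 :=
          Polynomial.coeff_eq_zero_of_degree_lt (lt_of_lt_of_le hf (by exact_mod_cast h))
        have h2 : (P (d + 1)).coeff m = 0 :=
          Polynomial.coeff_eq_zero_of_natDegree_lt (by rw [hm.2]; exact h)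
        rw [h1, h2, mul_zero, sub_self]
    obtain ⟨c, hc⟩ := ih hd _ hg
    refine ⟨fun i => if i = d + 1 then f.coeff (d + 1) else c i, ?_⟩
    have he : ∑ i ∈ Finset.range (d + 1), Polynomial.C (if i = d + 1 then f.coeff (d + 1) else c i) * P i
        = ∑ i ∈ Finset.range (d + 1), Polynomial.C (c i) * P i :=
      Finset.sum_congr rfl fun i hi => by
        rw [if_neg (by have := Finset.mem_range.1 hi; omega)]
    rw [Finset.sum_range_succ, he, ← hc]
    simp

lemma ortho_lower (hPm : ∀ n ≤ N, (P n).Monic ∧ (P n).natDegree = n)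
    (hPo : ∀ a ≤ N, ∀ b ≤ N, a ≠ b → ipR N π ω (P a) (P b) = 0) :
    ∀ n ≤ N, ∀ f : Polynomial ℂ, f.degree < (n : WithBot ℕ) → ipR N π ω f (P n) = 0 := by
  intro n hn f hf
  cases n with
  | zero =>
    have hf0 : f = 0 := by
      rw [← Polynomial.degree_eq_bot]
      exact Nat.WithBot.lt_zero_iff.1 (by exact_mod_cast hf)
    simp [hf0, ipR]
  | succ m =>
    obtain ⟨c, hc⟩ := span_P hPm m (le_trans (Nat.le_succ m) hn) f (by exact_mod_cast hf)
    rw [hc, ipR_symm, ipR_sum_right]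
    refine Finset.sum_eq_zero fun i hi => ?_
    rw [ipR_C_mul_right,
      hPo (m + 1) hn i (by have := Finset.mem_range.1 hi; omega) (by have := Finset.mem_range.1 hi; omega),
      mul_zero]

lemma pi_ne (hπ : ∀ i ≤ N, ∀ j ≤ N, π i = π j → i = j) {i j : ℕ} (hi : i ≤ N) (hj : j ≤ N)
    (hij : i ≠ j) : ((π i : ℂ)) - (π j : ℂ) ≠ 0 := by
  rw [sub_ne_zero]
  intro h
  exact hij (hπ i hi j hj (by exact_mod_cast h))

lemma vanish (hπ : ∀ i ≤ N, ∀ j ≤ N, π i = π j → i = j)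
    (hω : ∀ x ≤ N, 0 < ω x)
    (hPm : ∀ n ≤ N, (P n).Monic ∧ (P n).natDegree = n)
    (Q : Polynomial ℂ) (hQd : Q.natDegree ≤ N)
    (h : ∀ m ≤ N, ipR N π ω Q (P m) = 0) : Q = 0 := by
  have key : ∀ f : Polynomial ℂ, f.degree < ((N + 1 : ℕ) : WithBot ℕ) → ipR N π ω Q f = 0 := by
    intro f hf
    obtain ⟨c, hc⟩ := span_P hPm N le_rfl f hf
    rw [hc, ipR_sum_right]
    exact Finset.sum_eq_zero fun i hi => by
      rw [ipR_C_mul_right, h i (by have := Finset.mem_range.1 hi; omega), mul_zero]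
  have hev : ∀ x ∈ Finset.range (N + 1), Q.eval ((π x : ℂ)) = 0 := by
    intro x hx
    have hxN : x ≤ N := by have := Finset.mem_range.1 hx; omega
    set L := Lagrange.nodal ((Finset.range (N + 1)).erase x) (fun y => (π y : ℂ)) with hL
    have hcard : ((Finset.range (N + 1)).erase x).card = N := by
      rw [Finset.card_erase_of_mem hx, Finset.card_range]
      omega
    have hdeg : L.degree < ((N + 1 : ℕ) : WithBot ℕ) := by
      rw [hL, Lagrange.degree_nodal, hcard]
      exact_mod_cast Nat.lt_succ_self N
    have h0 := key L hdeg
    rw [ipR, Finset.sum_eq_single x (fun y hy hyx => by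
      have hyN : y ≤ N := by have := Finset.mem_range.1 hy; omega
      have : L.eval ((π y : ℂ)) = 0 := by
        rw [hL, Lagrange.eval_nodal]
        exact Finset.prod_eq_zero (Finset.mem_erase.2 ⟨hyx, hy⟩) (sub_self _)
      rw [this, mul_zero, zero_mul]) (fun hx' => absurd hx hx')] at h0
    have hLx : L.eval ((π x : ℂ)) ≠ 0 := by
      rw [hL, Lagrange.eval_nodal]
      refine Finset.prod_ne_zero_iff.2 fun y hy => ?_
      have hy' := Finset.mem_erase.1 hy
      exact pi_ne hπ hxN (by have := Finset.mem_range.1 hy'.2; omega) (Ne.symm hy'.1)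
    have hωx : ((ω x : ℂ)) ≠ 0 := by
      exact_mod_cast (hω x hxN).ne'
    rcases mul_eq_zero.1 h0 with h1 | h1
    · rcases mul_eq_zero.1 h1 with h2 | h2
      · exact h2
      · exact absurd h2 hLx
    · exact absurd h1 hωx
  refine Polynomial.eq_zero_of_natDegree_lt_card_of_eval_eq_zero' Q
    ((Finset.range (N + 1)).image (fun x => (π x : ℂ))) ?_ ?_
  · intro i hi
    obtain ⟨x, hx, rfl⟩ := Finset.mem_image.1 hi
    exact hev x hx
  · rw [Finset.card_image_of_injOn, Finset.card_range]
    · omega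
    · intro a ha b hb hab
      exact hπ a (by have := Finset.mem_range.1 ha; omega) b (by have := Finset.mem_range.1 hb; omega)
        (Complex.ofReal_inj.mp hab)

lemma h_ne (hπ : ∀ i ≤ N, ∀ j ≤ N, π i = π j → i = j)
    (hω : ∀ x ≤ N, 0 < ω x)
    (hPm : ∀ n ≤ N, (P n).Monic ∧ (P n).natDegree = n)
    (hPo : ∀ a ≤ N, ∀ b ≤ N, a ≠ b → ipR N π ω (P a) (P b) = 0) :
    ∀ n ≤ N, ipR N π ω (P n) (P n) ≠ 0 := by
  intro n hn h0
  have : P n = 0 := by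
    refine vanish hπ hω hPm (P n) (le_trans (le_of_eq (hPm n hn).2) hn) fun m hm => ?_
    rcases eq_or_ne n m with rfl | hne
    · exact h0
    · exact hPo n hn m hm hne
  exact (hPm n hn).1.ne_zero this


lemma mdeg {p : Polynomial ℂ} (h : p.Monic) : p.degree = (p.natDegree : WithBot ℕ) :=
  Polynomial.degree_eq_natDegree h.ne_zero


section Rec
variable (hπ : ∀ i ≤ N, ∀ j ≤ N, π i = π j → i = j)
    (hω : ∀ x ≤ N, 0 < ω x)
    (hPm : ∀ n ≤ N, (P n).Monic ∧ (P n).natDegree = n)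
    (hPo : ∀ a ≤ N, ∀ b ≤ N, a ≠ b → ipR N π ω (P a) (P b) = 0)

include hπ hω hPm hPo

lemma XP_monic {n : ℕ} (hn : n ≤ N) :
    (Polynomial.X * P n).Monic ∧ (Polynomial.X * P n).natDegree = n + 1 := by
  have h := hPm n hn
  refine ⟨Polynomial.monic_X.mul h.1, ?_⟩
  rw [(Polynomial.monic_X).natDegree_mul h.1, Polynomial.natDegree_X, h.2, add_comm]

omit hπ hω hPo in
lemma deg_XP_sub {n : ℕ} (hn : n + 1 ≤ N) :
    (Polynomial.X * P n - P (n + 1)).degree < ((n + 1 : ℕ) : WithBot ℕ) := by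
  have h1 : (Polynomial.X * P n).Monic ∧ (Polynomial.X * P n).natDegree = n + 1 := by
    have h := hPm n (by omega)
    exact ⟨Polynomial.monic_X.mul h.1, by
      rw [(Polynomial.monic_X).natDegree_mul h.1, Polynomial.natDegree_X, h.2, add_comm]⟩
  have h2 := hPm (n + 1) hn
  have hd : (Polynomial.X * P n).degree = (P (n + 1)).degree := by
    rw [h1|>.1 |> mdeg, h2|>.1 |> mdeg, h1.2, h2.2]
  have := Polynomial.degree_sub_lt hd h1.1.ne_zero (by rw [h1.1.leadingCoeff, h2.1.leadingCoeff])
  rwa [h1|>.1 |> mdeg, h1.2] at this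

lemma rec0 (hN : 1 ≤ N) :
    P 1 = Polynomial.X - Polynomial.C (ipR N π ω (Polynomial.X * P 0) (P 0) / ipR N π ω (P 0) (P 0)) := by
  set a := ipR N π ω (Polynomial.X * P 0) (P 0) / ipR N π ω (P 0) (P 0) with ha
  have hP0 : P 0 = 1 := ((hPm 0 (Nat.zero_le N)).1.natDegree_eq_zero).1 (hPm 0 (Nat.zero_le N)).2
  have h0ne : ipR N π ω (P 0) (P 0) ≠ 0 := h_ne hπ hω hPm hPo 0 (Nat.zero_le N)
  have hQ : Polynomial.X * P 0 - P 1 - Polynomial.C a * P 0 = 0 := by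
    apply vanish hπ hω hPm
    · refine le_trans (Polynomial.natDegree_sub_le _ _) (max_le (le_trans (Polynomial.natDegree_sub_le _ _) (max_le ?_ ?_)) ?_)
      · rw [(XP_monic hπ hω hPm hPo (Nat.zero_le N)).2]; omega
      · rw [(hPm 1 hN).2]; omega
      · exact le_trans (Polynomial.natDegree_C_mul_le _ _) (by rw [(hPm 0 (Nat.zero_le N)).2]; omega)
    · intro m hm
      rw [ipR_sub_left, ipR_sub_left]
      have hCl : ipR N π ω (Polynomial.C a * P 0) (P m) = a * ipR N π ω (P 0) (P m) := by
        rw [ipR_symm, ipR_C_mul_right, ipR_symm]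
      rw [hCl]
      rcases Nat.eq_or_lt_of_le (Nat.zero_le m) with h0 | h0
      · -- m = 0
        rw [← h0, hPo 1 hN 0 (Nat.zero_le N) one_ne_zero, ha, div_mul_cancel₀ _ h0ne]
        ring
      rcases eq_or_ne m 1 with rfl | h1
      · have : ipR N π ω (Polynomial.X * P 0) (P 1) =
            ipR N π ω (Polynomial.X * P 0 - P 1) (P 1) + ipR N π ω (P 1) (P 1) := by
          rw [← ipR_add_left, sub_add_cancel]
        rw [this, ortho_lower hPm hPo 1 hN _ (by exact_mod_cast deg_XP_sub hPm (by omega)),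
          hPo 0 (Nat.zero_le N) 1 hN zero_ne_one]
        ring
      · have hm2 : 2 ≤ m := by omega
        rw [ortho_lower hPm hPo m hm _ (by
            rw [(XP_monic hπ hω hPm hPo (Nat.zero_le N))|>.1 |> mdeg,
              (XP_monic hπ hω hPm hPo (Nat.zero_le N)).2]
            exact_mod_cast by omega),
          hPo 1 hN m hm (by omega), hPo 0 (Nat.zero_le N) m hm (by omega)]
        ring
  have h2 : P 1 = Polynomial.X * P 0 - Polynomial.C a * P 0 := by linear_combination -hQ
  rw [hP0, mul_one, mul_one] at h2
  exact h2

lemma recc {m : ℕ} (hm : m + 2 ≤ N) :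
    Polynomial.X * P (m + 1) = P (m + 2)
      + Polynomial.C (ipR N π ω (Polynomial.X * P (m + 1)) (P (m + 1)) / ipR N π ω (P (m + 1)) (P (m + 1))) * P (m + 1)
      + Polynomial.C (ipR N π ω (P (m + 1)) (P (m + 1)) / ipR N π ω (P m) (P m)) * P m := by
  set a := ipR N π ω (Polynomial.X * P (m + 1)) (P (m + 1)) / ipR N π ω (P (m + 1)) (P (m + 1)) with ha
  set b := ipR N π ω (P (m + 1)) (P (m + 1)) / ipR N π ω (P m) (P m) with hb
  have h1ne : ipR N π ω (P (m + 1)) (P (m + 1)) ≠ 0 := h_ne hπ hω hPm hPo (m + 1) (by omega)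
  have h0ne : ipR N π ω (P m) (P m) ≠ 0 := h_ne hπ hω hPm hPo m (by omega)
  have hQ : Polynomial.X * P (m + 1) - P (m + 2) - Polynomial.C a * P (m + 1) - Polynomial.C b * P m = 0 := by
    apply vanish hπ hω hPm
    · refine le_trans (Polynomial.natDegree_sub_le _ _) (max_le (le_trans (Polynomial.natDegree_sub_le _ _)
        (max_le (le_trans (Polynomial.natDegree_sub_le _ _) (max_le ?_ ?_)) ?_)) ?_)
      · rw [(XP_monic hπ hω hPm hPo (show m + 1 ≤ N by omega)).2]; omega
      · rw [(hPm (m + 2) hm).2]; exact hm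
      · exact le_trans (Polynomial.natDegree_C_mul_le _ _) (by rw [(hPm (m + 1) (by omega)).2]; omega)
      · exact le_trans (Polynomial.natDegree_C_mul_le _ _) (by rw [(hPm m (by omega)).2]; omega)
    · intro t ht
      rw [ipR_sub_left, ipR_sub_left, ipR_sub_left]
      have hCl : ∀ e : ℂ, ∀ f g : Polynomial ℂ, ipR N π ω (Polynomial.C e * f) g = e * ipR N π ω f g := by
        intro e f g; rw [ipR_symm, ipR_C_mul_right, ipR_symm]
      rw [hCl, hCl]
      rcases eq_or_ne t (m + 2) with rfl | ht2
      · have : ipR N π ω (Polynomial.X * P (m + 1)) (P (m + 2)) =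
            ipR N π ω (Polynomial.X * P (m + 1) - P (m + 2)) (P (m + 2)) + ipR N π ω (P (m + 2)) (P (m + 2)) := by
          rw [← ipR_add_left, sub_add_cancel]
        rw [this, ortho_lower hPm hPo (m + 2) hm _ (by exact_mod_cast deg_XP_sub hPm hm),
          hPo (m + 1) (by omega) (m + 2) hm (by omega), hPo m (by omega) (m + 2) hm (by omega)]
        ring
      rcases eq_or_ne t (m + 1) with rfl | ht1
      · rw [hPo (m + 2) hm (m + 1) (by omega) (by omega), hPo m (by omega) (m + 1) (by omega) (by omega),
          ha, div_mul_cancel₀ _ h1ne]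
        ring
      rcases eq_or_ne t m with heq | ht0
      · rw [heq]
        have hstep : ipR N π ω (Polynomial.X * P (m + 1)) (P m) = ipR N π ω (P (m + 1)) (P (m + 1)) := by
          rw [ipR_X_mul, ipR_symm]
          have : ipR N π ω (Polynomial.X * P m) (P (m + 1)) =
              ipR N π ω (Polynomial.X * P m - P (m + 1)) (P (m + 1)) + ipR N π ω (P (m + 1)) (P (m + 1)) := by
            rw [← ipR_add_left, sub_add_cancel]
          rw [this, ortho_lower hPm hPo (m + 1) (by omega) _ (by exact_mod_cast deg_XP_sub hPm (by omega))]
          ring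
        rw [hstep, hPo (m + 2) hm m (by omega) (by omega), hPo (m + 1) (by omega) m (by omega) (by omega),
          hb, div_mul_cancel₀ _ h0ne]
        ring
      · have hA : ipR N π ω (Polynomial.X * P (m + 1)) (P t) = 0 := by
          rcases Nat.lt_or_ge t m with h | h
          · rw [ipR_X_mul, ipR_symm]
            apply ortho_lower hPm hPo (m + 1) (by omega)
            rw [(XP_monic hπ hω hPm hPo (show t ≤ N by omega))|>.1 |> mdeg,
              (XP_monic hπ hω hPm hPo (show t ≤ N by omega)).2]
            exact_mod_cast by omega
          · have h3 : m + 3 ≤ t := by omega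
            apply ortho_lower hPm hPo t ht
            rw [(XP_monic hπ hω hPm hPo (show m + 1 ≤ N by omega))|>.1 |> mdeg,
              (XP_monic hπ hω hPm hPo (show m + 1 ≤ N by omega)).2]
            exact_mod_cast by omega
        rw [hA, hPo (m + 2) hm t ht (by omega), hPo (m + 1) (by omega) t ht (by omega),
          hPo m (by omega) t ht (by omega)]
        ring
  linear_combination hQ

end Rec

section Rec2
variable (hπ : ∀ i ≤ N, ∀ j ≤ N, π i = π j → i = j)
    (hω : ∀ x ≤ N, 0 < ω x)
    (hPm : ∀ n ≤ N, (P n).Monic ∧ (P n).natDegree = n)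
    (hPo : ∀ a ≤ N, ∀ b ≤ N, a ≠ b → ipR N π ω (P a) (P b) = 0)
include hπ hω hPm hPo

lemma CDoff : ∀ t, t + 1 ≤ N → ∀ u v : ℂ,
    (P (t + 1)).eval u * (P t).eval v - (P t).eval u * (P (t + 1)).eval v
      = (ipR N π ω (P t) (P t)) * ∑ n ∈ Finset.range (t + 1),
          ((u - v) * ((P n).eval u * (P n).eval v) * (ipR N π ω (P n) (P n))⁻¹) := by
  intro t
  induction t with
  | zero =>
    intro hN u v
    have hP0 : P 0 = 1 := ((hPm 0 (Nat.zero_le N)).1.natDegree_eq_zero).1 (hPm 0 (Nat.zero_le N)).2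
    have h0ne : ipR N π ω (P 0) (P 0) ≠ 0 := h_ne hπ hω hPm hPo 0 (Nat.zero_le N)
    have h0ne' : ipR N π ω (1 : Polynomial ℂ) 1 ≠ 0 := by rw [← hP0]; exact h0ne
    rw [rec0 hπ hω hPm hPo hN, Finset.sum_range_one, hP0]
    simp only [eval_sub, eval_X, eval_C, eval_one]
    field_simp
    ring
  | succ t ih =>
    intro ht u v
    have ih' := ih (by omega)
    have hrec := recc hπ hω hPm hPo (m := t) ht
    have hu := congrArg (Polynomial.eval u) hrec
    have hv := congrArg (Polynomial.eval v) hrec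
    simp only [eval_mul, eval_add, eval_X, eval_C] at hu hv
    have htne : ipR N π ω (P t) (P t) ≠ 0 := h_ne hπ hω hPm hPo t (by omega)
    have ht1ne : ipR N π ω (P (t + 1)) (P (t + 1)) ≠ 0 := h_ne hπ hω hPm hPo (t + 1) (by omega)
    have hS : ∑ n ∈ Finset.range (t + 1),
          ((u - v) * ((P n).eval u * (P n).eval v) * (ipR N π ω (P n) (P n))⁻¹)
        = (ipR N π ω (P t) (P t))⁻¹ *
          ((P (t + 1)).eval u * (P t).eval v - (P t).eval u * (P (t + 1)).eval v) := by
      rw [ih' u v, ← mul_assoc, inv_mul_cancel₀ htne, one_mul]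
    rw [Finset.sum_range_succ, hS]
    have h2u : (P (t + 2)).eval u = u * (P (t + 1)).eval u
        - (ipR N π ω (Polynomial.X * P (t + 1)) (P (t + 1)) / ipR N π ω (P (t + 1)) (P (t + 1))) * (P (t + 1)).eval u
        - (ipR N π ω (P (t + 1)) (P (t + 1)) / ipR N π ω (P t) (P t)) * (P t).eval u := by
      linear_combination -hu
    have h2v : (P (t + 2)).eval v = v * (P (t + 1)).eval v
        - (ipR N π ω (Polynomial.X * P (t + 1)) (P (t + 1)) / ipR N π ω (P (t + 1)) (P (t + 1))) * (P (t + 1)).eval v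
        - (ipR N π ω (P (t + 1)) (P (t + 1)) / ipR N π ω (P t) (P t)) * (P t).eval v := by
      linear_combination -hv
    rw [show t + 1 + 1 = t + 2 from rfl, h2u, h2v]
    field_simp
    ring

lemma CDdiag : ∀ t, t + 1 ≤ N → ∀ u : ℂ,
    ((Polynomial.derivative (P (t + 1))).eval u * (P t).eval u
      - (Polynomial.derivative (P t)).eval u * (P (t + 1)).eval u)
      = (ipR N π ω (P t) (P t)) * ∑ n ∈ Finset.range (t + 1),
          (((P n).eval u) ^ 2 * (ipR N π ω (P n) (P n))⁻¹) := by
  intro t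
  induction t with
  | zero =>
    intro hN u
    have hP0 : P 0 = 1 := ((hPm 0 (Nat.zero_le N)).1.natDegree_eq_zero).1 (hPm 0 (Nat.zero_le N)).2
    have h0ne : ipR N π ω (P 0) (P 0) ≠ 0 := h_ne hπ hω hPm hPo 0 (Nat.zero_le N)
    have h0ne' : ipR N π ω (1 : Polynomial ℂ) 1 ≠ 0 := by rw [← hP0]; exact h0ne
    rw [rec0 hπ hω hPm hPo hN, Finset.sum_range_one, hP0]
    simp only [derivative_sub, derivative_X, derivative_C, derivative_one, eval_sub, eval_X,
      eval_C, eval_one, eval_zero]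
    field_simp
    ring
  | succ t ih =>
    intro ht u
    have ih' := ih (by omega)
    have hrec := recc hπ hω hPm hPo (m := t) ht
    have hu := congrArg (Polynomial.eval u) hrec
    have hd := congrArg Polynomial.derivative hrec
    simp only [derivative_mul, derivative_X, derivative_C, derivative_add, one_mul, zero_mul,
      zero_add, add_zero] at hd
    have hdu := congrArg (Polynomial.eval u) hd
    simp only [eval_mul, eval_add, eval_X, eval_C] at hu hdu
    have htne : ipR N π ω (P t) (P t) ≠ 0 := h_ne hπ hω hPm hPo t (by omega)
    have ht1ne : ipR N π ω (P (t + 1)) (P (t + 1)) ≠ 0 := h_ne hπ hω hPm hPo (t + 1) (by omega)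
    have hS : ∑ n ∈ Finset.range (t + 1), (((P n).eval u) ^ 2 * (ipR N π ω (P n) (P n))⁻¹)
        = (ipR N π ω (P t) (P t))⁻¹ *
          ((Polynomial.derivative (P (t + 1))).eval u * (P t).eval u
            - (Polynomial.derivative (P t)).eval u * (P (t + 1)).eval u) := by
      rw [ih' u, ← mul_assoc, inv_mul_cancel₀ htne, one_mul]
    rw [Finset.sum_range_succ, hS]
    have h2u : (P (t + 2)).eval u = u * (P (t + 1)).eval u
        - (ipR N π ω (Polynomial.X * P (t + 1)) (P (t + 1)) / ipR N π ω (P (t + 1)) (P (t + 1))) * (P (t + 1)).eval u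
        - (ipR N π ω (P (t + 1)) (P (t + 1)) / ipR N π ω (P t) (P t)) * (P t).eval u := by
      linear_combination -hu
    have h2du : (Polynomial.derivative (P (t + 2))).eval u = (P (t + 1)).eval u
        + u * (Polynomial.derivative (P (t + 1))).eval u
        - (ipR N π ω (Polynomial.X * P (t + 1)) (P (t + 1)) / ipR N π ω (P (t + 1)) (P (t + 1))) * (Polynomial.derivative (P (t + 1))).eval u
        - (ipR N π ω (P (t + 1)) (P (t + 1)) / ipR N π ω (P t) (P t)) * (Polynomial.derivative (P t)).eval u := by
      linear_combination -hdu
    rw [show t + 1 + 1 = t + 2 from rfl, h2u, h2du]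
    field_simp
    ring


lemma kernelEq {t : ℕ} (ht : t + 1 ≤ N) {x y : ℕ} (hx : x ≤ N) (hy : y ≤ N) :
    CDker π ω (ipR N π ω (P t) (P t))⁻¹ (P (t + 1)) (P t) x y
      = (Real.sqrt (ω x) : ℂ) * (Real.sqrt (ω y) : ℂ) *
        ∑ n ∈ Finset.range (t + 1),
          (P n).eval (π x : ℂ) * (P n).eval (π y : ℂ) * (ipR N π ω (P n) (P n))⁻¹ := by
  have htne : ipR N π ω (P t) (P t) ≠ 0 := h_ne hπ hω hPm hPo t (by omega)
  unfold CDker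
  rcases eq_or_ne x y with rfl | hxy
  · rw [if_pos rfl, CDdiag hπ hω hPm hPo t ht (π x : ℂ)]
    have hsq : (Real.sqrt (ω x) : ℂ) * (Real.sqrt (ω x) : ℂ) = (ω x : ℂ) := by
      rw [← Complex.ofReal_mul, Real.mul_self_sqrt (hω x hx).le]
    rw [hsq, show (∑ n ∈ Finset.range (t + 1),
        (P n).eval (π x : ℂ) * (P n).eval (π x : ℂ) * (ipR N π ω (P n) (P n))⁻¹)
      = ∑ n ∈ Finset.range (t + 1), ((P n).eval (π x : ℂ)) ^ 2 * (ipR N π ω (P n) (P n))⁻¹ from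
      Finset.sum_congr rfl fun n _ => by ring]
    field_simp
  · rw [if_neg hxy, CDoff hπ hω hPm hPo t ht (π x : ℂ) (π y : ℂ)]
    have hsq : ((Real.sqrt (ω x * ω y) : ℝ) : ℂ) = (Real.sqrt (ω x) : ℂ) * (Real.sqrt (ω y) : ℂ) := by
      rw [← Complex.ofReal_mul, Real.sqrt_mul (hω x hx).le]
    have hpne : ((π x : ℂ)) - (π y : ℂ) ≠ 0 := pi_ne hπ hx hy hxy
    have hpull : ∑ n ∈ Finset.range (t + 1),
        (((π x : ℂ) - (π y : ℂ)) * ((P n).eval (π x : ℂ) * (P n).eval (π y : ℂ)) * (ipR N π ω (P n) (P n))⁻¹)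
        = ((π x : ℂ) - (π y : ℂ)) * ∑ n ∈ Finset.range (t + 1),
            (P n).eval (π x : ℂ) * (P n).eval (π y : ℂ) * (ipR N π ω (P n) (P n))⁻¹ := by
      rw [Finset.mul_sum]
      exact Finset.sum_congr rfl fun n _ => by ring
    rw [hpull, hsq]
    field_simp

lemma Dfred_eq {t : ℕ} (ht : t + 1 ≤ N) {s : ℕ} (hs1 : t + 1 ≤ s) (hs2 : s ≤ N + 1) :
    Dfred N s (CDker π ω (ipR N π ω (P t) (P t))⁻¹ (P (t + 1)) (P t))
      = (∏ n ∈ Finset.range (t + 1), (ipR N π ω (P n) (P n))⁻¹) *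
        Matrix.det (Matrix.of fun n m : Fin (t + 1) =>
          ∑ x ∈ Finset.range s, (ω x : ℂ) * (P n).eval (π x : ℂ) * (P m).eval (π x : ℂ)) := by
  unfold Dfred
  set A : Matrix (Fin (N + 1 - s)) (Fin (t + 1)) ℂ :=
    Matrix.of fun i n => (Real.sqrt (ω (s + i)) : ℂ) * (P n).eval (π (s + i) : ℂ) with hA
  set B : Matrix (Fin (t + 1)) (Fin (N + 1 - s)) ℂ :=
    Matrix.of fun n j => (ipR N π ω (P n) (P n))⁻¹ * (Real.sqrt (ω (s + j)) : ℂ) * (P n).eval (π (s + j) : ℂ) with hB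
  have hK : (Matrix.of fun i j : Fin (N + 1 - s) =>
      CDker π ω (ipR N π ω (P t) (P t))⁻¹ (P (t + 1)) (P t) (s + i) (s + j)) = A * B := by
    ext i j
    have hiN : s + (i : ℕ) ≤ N := by have := i.isLt; omega
    have hjN : s + (j : ℕ) ≤ N := by have := j.isLt; omega
    rw [Matrix.of_apply, kernelEq hπ hω hPm hPo ht hiN hjN, Matrix.mul_apply]
    rw [show ∀ w z : ℂ, ∀ S : ℂ, w * z * S = S * (w * z) from fun _ _ _ => by ring]
    rw [← Fin.sum_univ_eq_sum_range (fun n => (P n).eval (π (s + i) : ℂ) * (P n).eval (π (s + j) : ℂ) *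
      (ipR N π ω (P n) (P n))⁻¹) (t + 1), Finset.sum_mul]
    exact Finset.sum_congr rfl fun n _ => by simp only [hA, hB, Matrix.of_apply]; ring
  rw [hK, Matrix.det_one_sub_mul_comm]
  have hBA : (1 - B * A) = Matrix.of fun n m : Fin (t + 1) =>
      (ipR N π ω (P n) (P n))⁻¹ * ∑ x ∈ Finset.range s, (ω x : ℂ) * (P n).eval (π x : ℂ) * (P m).eval (π x : ℂ) := by
    ext n m
    have hnN : (n : ℕ) ≤ N := by have := n.isLt; omega
    have hmN : (m : ℕ) ≤ N := by have := m.isLt; omega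
    have claim1 : (B * A) n m = (ipR N π ω (P n) (P n))⁻¹ *
        ∑ x ∈ Finset.range (N + 1 - s), (ω (s + x) : ℂ) * (P n).eval (π (s + x) : ℂ) * (P m).eval (π (s + x) : ℂ) := by
      rw [Matrix.mul_apply, Finset.mul_sum,
        ← Fin.sum_univ_eq_sum_range (fun x => (ipR N π ω (P n) (P n))⁻¹ *
          ((ω (s + x) : ℂ) * (P n).eval (π (s + x) : ℂ) * (P m).eval (π (s + x) : ℂ))) (N + 1 - s)]
      refine Finset.sum_congr rfl fun j _ => ?_
      have hjN : s + (j : ℕ) ≤ N := by have := j.isLt; omega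
      have hsq : (Real.sqrt (ω (s + j)) : ℂ) * (Real.sqrt (ω (s + j)) : ℂ) = (ω (s + j) : ℂ) := by
        rw [← Complex.ofReal_mul, Real.mul_self_sqrt (hω _ hjN).le]
      simp only [hA, hB, Matrix.of_apply]
      rw [show ((ipR N π ω (P n) (P n))⁻¹ * (Real.sqrt (ω (s + j)) : ℂ) * (P n).eval (π (s + j) : ℂ)) *
          ((Real.sqrt (ω (s + j)) : ℂ) * (P m).eval (π (s + j) : ℂ))
        = (ipR N π ω (P n) (P n))⁻¹ * (((Real.sqrt (ω (s + j)) : ℂ) * (Real.sqrt (ω (s + j)) : ℂ)) *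
            (P n).eval (π (s + j) : ℂ) * (P m).eval (π (s + j) : ℂ)) from by ring, hsq]
    have claim2 : (ipR N π ω (P n) (P n))⁻¹ *
        ((∑ x ∈ Finset.range s, (ω x : ℂ) * (P n).eval (π x : ℂ) * (P m).eval (π x : ℂ))
          + ∑ x ∈ Finset.range (N + 1 - s), (ω (s + x) : ℂ) * (P n).eval (π (s + x) : ℂ) * (P m).eval (π (s + x) : ℂ))
        = (1 : Matrix (Fin (t + 1)) (Fin (t + 1)) ℂ) n m := by
      rw [← Finset.sum_range_add (fun x => (ω x : ℂ) * (P n).eval (π x : ℂ) * (P m).eval (π x : ℂ)) s (N + 1 - s)]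
      have hrw : ∑ x ∈ Finset.range (s + (N + 1 - s)), (ω x : ℂ) * (P n).eval (π x : ℂ) * (P m).eval (π x : ℂ)
          = ipR N π ω (P n) (P m) := by
        rw [show s + (N + 1 - s) = N + 1 by omega]
        unfold ipR
        exact Finset.sum_congr rfl fun x _ => by ring
      rw [hrw]
      rcases eq_or_ne n m with rfl | hnm
      · rw [Matrix.one_apply_eq, inv_mul_cancel₀ (h_ne hπ hω hPm hPo n hnN)]
      · rw [Matrix.one_apply_ne hnm, hPo n hnN m hmN (fun h => hnm (Fin.ext h)), mul_zero]
    simp only [Matrix.sub_apply, Matrix.of_apply]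
    rw [claim1]
    linear_combination -claim2
  rw [hBA]
  have hdet := Matrix.det_mul_column (fun n : Fin (t + 1) => (ipR N π ω (P n) (P n))⁻¹)
    (Matrix.of fun n m : Fin (t + 1) =>
      ∑ x ∈ Finset.range s, (ω x : ℂ) * (P n).eval (π x : ℂ) * (P m).eval (π x : ℂ))
  rw [show (Matrix.of fun n m : Fin (t + 1) =>
      (ipR N π ω (P n) (P n))⁻¹ * ∑ x ∈ Finset.range s, (ω x : ℂ) * (P n).eval (π x : ℂ) * (P m).eval (π x : ℂ))
    = (Matrix.of fun n m : Fin (t + 1) => (fun n : Fin (t + 1) => (ipR N π ω (P n) (P n))⁻¹) n *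
        (Matrix.of fun n m : Fin (t + 1) =>
          ∑ x ∈ Finset.range s, (ω x : ℂ) * (P n).eval (π x : ℂ) * (P m).eval (π x : ℂ)) n m) from rfl, hdet]
  congr 1
  rw [← Fin.prod_univ_eq_prod_range (fun n => (ipR N π ω (P n) (P n))⁻¹) (t + 1)]


end Rec2

lemma filter_lt_range (k j : ℕ) (hj : j ≤ k) :
    (Finset.range k).filter (fun i => i < j) = Finset.range j := by
  ext i; simp only [Finset.mem_filter, Finset.mem_range]; omega

lemma ioi_prod (k : ℕ) (f : ℕ → ℕ → ℂ) (i : Fin k) :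
    ∏ j ∈ Finset.Ioi i, f (i : ℕ) (j : ℕ) = ∏ j : Fin k, if (i : ℕ) < (j : ℕ) then f (i : ℕ) (j : ℕ) else 1 := by
  rw [← Finset.prod_filter]
  congr 1
  ext j
  simp only [Finset.mem_Ioi, Finset.mem_filter, Finset.mem_univ, true_and, Fin.lt_def]

lemma sqVandermonde (k : ℕ) (v : ℕ → ℂ) :
    (∏ i : Fin k, ∏ j ∈ Finset.Ioi i, (v (j : ℕ) - v (i : ℕ))) ^ 2
      = ∏ j ∈ Finset.range k, ∏ i ∈ Finset.range j, (v i - v j) ^ 2 := by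
  rw [← Finset.prod_pow]
  have step1 : ∀ i : Fin k, (∏ j ∈ Finset.Ioi i, (v (j : ℕ) - v (i : ℕ))) ^ 2
      = ∏ j : Fin k, if (i : ℕ) < (j : ℕ) then (v (j : ℕ) - v (i : ℕ)) ^ 2 else 1 := by
    intro i
    rw [ioi_prod k (fun a b => v b - v a) i, ← Finset.prod_pow]
    exact Finset.prod_congr rfl fun j _ => by split <;> simp
  rw [Finset.prod_congr rfl fun i _ => step1 i]
  rw [Fin.prod_univ_eq_prod_range (fun i => ∏ j : Fin k, if i < (j : ℕ) then (v (j : ℕ) - v i) ^ 2 else 1) k]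
  rw [Finset.prod_congr rfl fun i _ =>
    Fin.prod_univ_eq_prod_range (fun j => if i < j then (v j - v i) ^ 2 else 1) k]
  rw [Finset.prod_comm]
  refine Finset.prod_congr rfl fun j hj => ?_
  rw [← Finset.prod_filter, filter_lt_range k j (by have := Finset.mem_range.1 hj; omega)]
  exact Finset.prod_congr rfl fun i _ => by ring

lemma detGk (hπ : ∀ i ≤ N, ∀ j ≤ N, π i = π j → i = j)
    (hPm : ∀ n ≤ N, (P n).Monic ∧ (P n).natDegree = n)
    {t : ℕ} (ht : t + 1 ≤ N) :
    Matrix.det (Matrix.of fun n m : Fin (t + 1) =>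
        ∑ x ∈ Finset.range (t + 1), (ω x : ℂ) * (P n).eval (π x : ℂ) * (P m).eval (π x : ℂ))
      = ((∏ j ∈ Finset.range (t + 1), ∏ i ∈ Finset.range j, ((π i : ℂ) - (π j : ℂ)) ^ 2) *
          ∏ l ∈ Finset.range (t + 1), (ω l : ℂ)) := by
  classical
  set V : Matrix (Fin (t + 1)) (Fin (t + 1)) ℂ :=
    Matrix.of fun n x => (P n).eval (π x : ℂ) with hV
  set D : Matrix (Fin (t + 1)) (Fin (t + 1)) ℂ :=
    Matrix.diagonal (fun x : Fin (t + 1) => (ω x : ℂ)) with hD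
  have hG : (Matrix.of fun n m : Fin (t + 1) =>
      ∑ x ∈ Finset.range (t + 1), (ω x : ℂ) * (P n).eval (π x : ℂ) * (P m).eval (π x : ℂ))
      = V * D * V.transpose := by
    ext n m
    rw [Matrix.of_apply, Matrix.mul_apply]
    rw [← Fin.sum_univ_eq_sum_range (fun x => (ω x : ℂ) * (P n).eval (π x : ℂ) * (P m).eval (π x : ℂ)) (t + 1)]
    refine Finset.sum_congr rfl fun x _ => ?_
    rw [Matrix.mul_diagonal, Matrix.transpose_apply]
    simp only [hV, Matrix.of_apply]
    ring
  rw [hG, Matrix.det_mul, Matrix.det_mul, Matrix.det_transpose, Matrix.det_diagonal]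
  -- compute det V
  set L : Matrix (Fin (t + 1)) (Fin (t + 1)) ℂ := Matrix.of fun n j => (P n).coeff j with hL
  have hLW : V = L * (Matrix.vandermonde (fun x : Fin (t + 1) => (π x : ℂ))).transpose := by
    ext n x
    rw [Matrix.mul_apply]
    simp only [hV, hL, Matrix.of_apply, Matrix.transpose_apply, Matrix.vandermonde]
    rw [Polynomial.eval_eq_sum_range' (n := t + 1) (by rw [(hPm n (by have := n.isLt; omega)).2]; exact n.isLt) (π x : ℂ),
      ← Fin.sum_univ_eq_sum_range (fun i => (P n).coeff i * (π x : ℂ) ^ i) (t + 1)]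
  have hLdet : L.det = 1 := by
    have htri : L.BlockTriangular OrderDual.toDual := by
      intro i j hij
      simp only [hL, Matrix.of_apply]
      exact Polynomial.coeff_eq_zero_of_natDegree_lt
        (by rw [(hPm i (by have := i.isLt; omega)).2]; exact hij)
    rw [Matrix.det_of_lowerTriangular L htri]
    refine Finset.prod_eq_one fun i _ => ?_
    simp only [hL, Matrix.of_apply]
    have h := (hPm i (by have := i.isLt; omega))
    have := h.1.coeff_natDegree
    rwa [h.2] at this
  have hVdet : V.det = ∏ i : Fin (t + 1), ∏ j ∈ Finset.Ioi i, ((π (j : ℕ) : ℂ) - (π (i : ℕ) : ℂ)) := by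
    rw [hLW, Matrix.det_mul, hLdet, one_mul, Matrix.det_transpose, Matrix.det_vandermonde]
  rw [hVdet, show ∀ a b : ℂ, a * b * a = a * a * b from fun a b => by ring]
  rw [← sq, sqVandermonde (t + 1) (fun i => (π i : ℂ))]
  rw [Fin.prod_univ_eq_prod_range (fun x => (ω x : ℂ)) (t + 1)]


/-- The Lagrange coefficient vector. -/
def cc (π : ℕ → ℝ) (t : ℕ) (x : ℕ) : ℂ :=
  (Lagrange.basis (Finset.range (t + 1)) (fun y => (π y : ℂ)) x).eval (π (t + 1) : ℂ)

lemma cc_val (t : ℕ) (x : ℕ) :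
    cc π t x = ∏ y ∈ (Finset.range (t + 1)).erase x,
      (((π x : ℂ) - (π y : ℂ))⁻¹ * ((π (t + 1) : ℂ) - (π y : ℂ))) := by
  unfold cc Lagrange.basis
  rw [Polynomial.eval_prod]
  refine Finset.prod_congr rfl fun y _ => ?_
  unfold Lagrange.basisDivisor
  simp only [eval_mul, eval_C, eval_sub, eval_X]

lemma detGk1 (hπ : ∀ i ≤ N, ∀ j ≤ N, π i = π j → i = j)
    (hω : ∀ x ≤ N, 0 < ω x)
    (hPm : ∀ n ≤ N, (P n).Monic ∧ (P n).natDegree = n)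
    {t : ℕ} (ht : t + 2 ≤ N + 1) :
    Matrix.det (Matrix.of fun n m : Fin (t + 1) =>
        ∑ x ∈ Finset.range (t + 2), (ω x : ℂ) * (P n).eval (π x : ℂ) * (P m).eval (π x : ℂ))
      = Matrix.det (Matrix.of fun n m : Fin (t + 1) =>
          ∑ x ∈ Finset.range (t + 1), (ω x : ℂ) * (P n).eval (π x : ℂ) * (P m).eval (π x : ℂ))
        * (1 + (ω (t + 1) : ℂ) * ∑ x ∈ Finset.range (t + 1), (cc π t x) ^ 2 * (ω x : ℂ)⁻¹) := by
  classical
  set V : Matrix (Fin (t + 1)) (Fin (t + 1)) ℂ :=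
    Matrix.of fun n x => (P n).eval (π x : ℂ) with hV
  set D : Matrix (Fin (t + 1)) (Fin (t + 1)) ℂ :=
    Matrix.diagonal (fun x : Fin (t + 1) => (ω x : ℂ)) with hD
  -- decomposition of the small Gram matrix
  have hGsmall : (Matrix.of fun n m : Fin (t + 1) =>
      ∑ x ∈ Finset.range (t + 1), (ω x : ℂ) * (P n).eval (π x : ℂ) * (P m).eval (π x : ℂ))
      = V * D * V.transpose := by
    ext n m
    rw [Matrix.of_apply, Matrix.mul_apply]
    rw [← Fin.sum_univ_eq_sum_range (fun x => (ω x : ℂ) * (P n).eval (π x : ℂ) * (P m).eval (π x : ℂ)) (t + 1)]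
    refine Finset.sum_congr rfl fun x _ => ?_
    rw [Matrix.mul_diagonal, Matrix.transpose_apply]
    simp only [hV, Matrix.of_apply]
    ring
  -- V *ᵥ cc = evaluations at π (t+1)
  set c : Fin (t + 1) → ℂ := fun x => cc π t (x : ℕ) with hc
  have hinj : Set.InjOn (fun y => (π y : ℂ)) (Finset.range (t + 1)) := by
    intro a ha b hb hab
    have haN : a ≤ N := by have := Finset.mem_range.1 ha; omega
    have hbN : b ≤ N := by have := Finset.mem_range.1 hb; omega
    exact hπ a haN b hbN (Complex.ofReal_inj.mp hab)
  have hVc : V.mulVec c = fun n : Fin (t + 1) => (P n).eval (π (t + 1) : ℂ) := by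
    funext n
    have hdeg : (P n).degree < (Finset.range (t + 1)).card := by
      rw [Finset.card_range]
      refine lt_of_le_of_lt (Polynomial.degree_le_natDegree) ?_
      rw [(hPm n (by have := n.isLt; omega)).2]
      exact_mod_cast n.isLt
    have hinterp := Lagrange.eq_interpolate hinj hdeg
    have hev := congrArg (Polynomial.eval ((π (t + 1) : ℝ) : ℂ)) hinterp
    rw [Lagrange.interpolate_apply, Polynomial.eval_finset_sum] at hev
    simp only [eval_mul, eval_C] at hev
    rw [Matrix.mulVec, hev]
    rw [← Fin.sum_univ_eq_sum_range
      (fun i => (P n).eval (π i : ℂ) * (Lagrange.basis (Finset.range (t + 1)) (fun y => (π y : ℂ)) i).eval (π (t + 1) : ℂ))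
      (t + 1)]
    refine Finset.sum_congr rfl fun x _ => ?_
    simp only [hV, Matrix.of_apply, hc, cc, dotProduct]
  -- split big Gram matrix
  have hsplit : (Matrix.of fun n m : Fin (t + 1) =>
      ∑ x ∈ Finset.range (t + 2), (ω x : ℂ) * (P n).eval (π x : ℂ) * (P m).eval (π x : ℂ))
      = V * D * V.transpose + (ω (t + 1) : ℂ) •
          Matrix.vecMulVec (V.mulVec c) (V.mulVec c) := by
    rw [← hGsmall]
    ext n m
    rw [Matrix.add_apply, Matrix.smul_apply, Matrix.vecMulVec_apply, hVc]
    simp only [Matrix.of_apply]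
    rw [Finset.sum_range_succ]
    simp only [smul_eq_mul]
    ring
  rw [hsplit, hGsmall]
  -- pull V and Vᵀ out
  have hmid : V * (Matrix.replicateCol (Fin 1) c * Matrix.replicateRow (Fin 1) c) * V.transpose
      = Matrix.replicateCol (Fin 1) (V.mulVec c) * Matrix.replicateRow (Fin 1) (V.mulVec c) := by
    rw [← Matrix.mul_assoc, Matrix.mul_assoc, ← Matrix.replicateCol_mulVec, ← Matrix.replicateRow_vecMul,
      Matrix.vecMul_transpose]
  have hfact : V * D * V.transpose + (ω (t + 1) : ℂ) • Matrix.vecMulVec (V.mulVec c) (V.mulVec c)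
      = V * (D + (ω (t + 1) : ℂ) • Matrix.vecMulVec c c) * V.transpose := by
    rw [Matrix.mul_add, Matrix.add_mul]
    congr 1
    rw [Matrix.mul_smul, Matrix.smul_mul, Matrix.vecMulVec_eq (Fin 1), Matrix.vecMulVec_eq (Fin 1)]
    exact congrArg _ hmid.symm
  rw [hfact]
  rw [Matrix.det_mul, Matrix.det_mul]
  -- determinant of rank one update of diagonal
  have hDdet : IsUnit D.det := by
    rw [hD, Matrix.det_diagonal]
    refine (Finset.prod_ne_zero_iff.2 fun x _ => ?_).isUnit
    exact_mod_cast (hω x (by have := x.isLt; omega)).ne'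
  have hupdate : (D + (ω (t + 1) : ℂ) • Matrix.vecMulVec c c).det
      = D.det * (1 + (ω (t + 1) : ℂ) * ∑ x : Fin (t + 1), (c x) ^ 2 * (ω (x : ℕ) : ℂ)⁻¹) := by
    rw [Matrix.vecMulVec_eq (Fin 1), ← Matrix.smul_mul, ← Matrix.replicateCol_smul]
    erw [Matrix.det_add_mul (Matrix.replicateCol (Fin 1) ((ω (t + 1) : ℂ) • c)) (Matrix.replicateRow (Fin 1) c) hDdet]
    congr 1
    rw [Matrix.det_fin_one]
    simp only [Matrix.add_apply, Matrix.one_apply_eq, Matrix.mul_apply, Matrix.replicateRow_apply,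
      Matrix.replicateCol_apply, Pi.smul_apply, smul_eq_mul, Finset.univ_unique, Finset.sum_singleton]
    have hDinv : D⁻¹ = Matrix.diagonal (fun x : Fin (t + 1) => (ω (x : ℕ) : ℂ)⁻¹) := by
      apply Matrix.inv_eq_right_inv
      have hone : (fun i : Fin (t + 1) => (ω i : ℂ) * (ω i : ℂ)⁻¹) = fun _ => (1 : ℂ) := by
        funext x
        exact mul_inv_cancel₀ (by exact_mod_cast (hω x (by have := x.isLt; omega)).ne')
      rw [hD, Matrix.diagonal_mul_diagonal, hone, Matrix.diagonal_one]
    rw [hDinv]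
    congr 1
    rw [Finset.mul_sum]
    rw [show ∀ f : Fin (t + 1) → ℂ, ∑ j : Fin (t + 1),
      (∑ x : Fin (t + 1), c x * Matrix.diagonal (fun x : Fin (t + 1) => (ω (x : ℕ) : ℂ)⁻¹) x j) * f j
      = ∑ j : Fin (t + 1), (c j * (ω (j : ℕ) : ℂ)⁻¹) * f j from ?_]
    · refine Finset.sum_congr rfl fun x _ => ?_
      ring
    · intro f
      refine Finset.sum_congr rfl fun j _ => ?_
      congr 1
      rw [Finset.sum_eq_single j]
      · rw [Matrix.diagonal_apply_eq]
      · intro b _ hbj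
        rw [Matrix.diagonal_apply_ne _ hbj, mul_zero]
      · intro hj
        exact absurd (Finset.mem_univ j) hj
  rw [hupdate]
  simp only [hc]
  rw [Fin.sum_univ_eq_sum_range (fun x => (cc π t x) ^ 2 * (ω x : ℂ)⁻¹) (t + 1),
    Matrix.det_mul, Matrix.det_mul]
  ring


lemma scalarId (hπ : ∀ i ≤ N, ∀ j ≤ N, π i = π j → i = j)
    (hω : ∀ x ≤ N, 0 < ω x) {t : ℕ} (ht : t + 1 ≤ N) :
    (ω (t + 1) : ℂ) * (∑ m ∈ Finset.range (t + 2), ((ω m : ℂ)⁻¹ *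
        ∏ j ∈ (Finset.range (t + 2)).erase m, (((π m : ℂ) - (π j : ℂ)) ^ 2)⁻¹))
      * ∏ l ∈ Finset.range (t + 1), ((π (t + 1) : ℂ) - (π l : ℂ)) ^ 2
    = 1 + (ω (t + 1) : ℂ) * ∑ x ∈ Finset.range (t + 1), (cc π t x) ^ 2 * (ω x : ℂ)⁻¹ := by
  rw [Finset.sum_range_succ]
  have hlast : (ω (t + 1) : ℂ) * ((ω (t + 1) : ℂ)⁻¹ *
      ∏ j ∈ (Finset.range (t + 2)).erase (t + 1), (((π (t + 1) : ℂ) - (π j : ℂ)) ^ 2)⁻¹)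
      * ∏ l ∈ Finset.range (t + 1), ((π (t + 1) : ℂ) - (π l : ℂ)) ^ 2 = 1 := by
    rw [show (Finset.range (t + 2)).erase (t + 1) = Finset.range (t + 1) from by
      rw [Finset.range_add_one, Finset.erase_insert (by simp)]]
    have hw : (ω (t + 1) : ℂ) * (ω (t + 1) : ℂ)⁻¹ = 1 :=
      mul_inv_cancel₀ (by exact_mod_cast (hω (t + 1) (by omega)).ne')
    have hAB : (∏ j ∈ Finset.range (t + 1), (((π (t + 1) : ℂ) - (π j : ℂ)) ^ 2)⁻¹)
        * ∏ l ∈ Finset.range (t + 1), ((π (t + 1) : ℂ) - (π l : ℂ)) ^ 2 = 1 := by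
      rw [← Finset.prod_mul_distrib]
      refine Finset.prod_eq_one fun j hj => ?_
      exact inv_mul_cancel₀ (pow_ne_zero 2 (pi_ne hπ (by omega)
        (by have := Finset.mem_range.1 hj; omega) (by have := Finset.mem_range.1 hj; omega)))
    calc (ω (t + 1) : ℂ) * ((ω (t + 1) : ℂ)⁻¹ *
          ∏ j ∈ Finset.range (t + 1), (((π (t + 1) : ℂ) - (π j : ℂ)) ^ 2)⁻¹)
          * ∏ l ∈ Finset.range (t + 1), ((π (t + 1) : ℂ) - (π l : ℂ)) ^ 2
        = ((ω (t + 1) : ℂ) * (ω (t + 1) : ℂ)⁻¹) *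
          ((∏ j ∈ Finset.range (t + 1), (((π (t + 1) : ℂ) - (π j : ℂ)) ^ 2)⁻¹)
            * ∏ l ∈ Finset.range (t + 1), ((π (t + 1) : ℂ) - (π l : ℂ)) ^ 2) := by ring
      _ = 1 := by rw [hw, hAB, one_mul]
  have key : ∀ x ∈ Finset.range (t + 1),
      (ω (t + 1) : ℂ) * ((ω x : ℂ)⁻¹ *
        ∏ j ∈ (Finset.range (t + 2)).erase x, (((π x : ℂ) - (π j : ℂ)) ^ 2)⁻¹)
        * ∏ l ∈ Finset.range (t + 1), ((π (t + 1) : ℂ) - (π l : ℂ)) ^ 2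
      = (ω (t + 1) : ℂ) * ((cc π t x) ^ 2 * (ω x : ℂ)⁻¹) := by
    intro x hx
    have hxt : x ≤ t := by have := Finset.mem_range.1 hx; omega
    have hins : (Finset.range (t + 2)).erase x = insert (t + 1) ((Finset.range (t + 1)).erase x) := by
      ext a
      simp only [Finset.mem_erase, Finset.mem_insert, Finset.mem_range]
      omega
    have hnotmem : (t + 1) ∉ (Finset.range (t + 1)).erase x := by simp
    rw [hins, Finset.prod_insert hnotmem,
      ← Finset.mul_prod_erase (Finset.range (t + 1)) (fun l => ((π (t + 1) : ℂ) - (π l : ℂ)) ^ 2) hx]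
    have hccsq : (cc π t x) ^ 2 = ∏ y ∈ (Finset.range (t + 1)).erase x,
        ((((π x : ℂ) - (π y : ℂ)) ^ 2)⁻¹ * ((π (t + 1) : ℂ) - (π y : ℂ)) ^ 2) := by
      rw [cc_val, ← Finset.prod_pow]
      exact Finset.prod_congr rfl fun y _ => by rw [mul_pow, inv_pow]
    rw [hccsq, Finset.prod_mul_distrib]
    have hcancel : ((((π x : ℂ) - (π (t + 1) : ℂ)) ^ 2)⁻¹) * (((π (t + 1) : ℂ) - (π x : ℂ)) ^ 2) = 1 := by
      rw [show ((π (t + 1) : ℂ) - (π x : ℂ)) ^ 2 = ((π x : ℂ) - (π (t + 1) : ℂ)) ^ 2 from by ring]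
      exact inv_mul_cancel₀ (pow_ne_zero 2 (pi_ne hπ (by omega) (by omega) (by omega)))
    linear_combination ((ω (t + 1) : ℂ) * (ω x : ℂ)⁻¹ *
      (∏ y ∈ (Finset.range (t + 1)).erase x, (((π x : ℂ) - (π y : ℂ)) ^ 2)⁻¹) *
      (∏ y ∈ (Finset.range (t + 1)).erase x, ((π (t + 1) : ℂ) - (π y : ℂ)) ^ 2)) * hcancel
  calc (ω (t + 1) : ℂ) * ((∑ m ∈ Finset.range (t + 1), ((ω m : ℂ)⁻¹ *
          ∏ j ∈ (Finset.range (t + 2)).erase m, (((π m : ℂ) - (π j : ℂ)) ^ 2)⁻¹))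
        + ((ω (t + 1) : ℂ)⁻¹ * ∏ j ∈ (Finset.range (t + 2)).erase (t + 1), (((π (t + 1) : ℂ) - (π j : ℂ)) ^ 2)⁻¹))
        * ∏ l ∈ Finset.range (t + 1), ((π (t + 1) : ℂ) - (π l : ℂ)) ^ 2
      = (∑ m ∈ Finset.range (t + 1), (ω (t + 1) : ℂ) * ((ω m : ℂ)⁻¹ *
          ∏ j ∈ (Finset.range (t + 2)).erase m, (((π m : ℂ) - (π j : ℂ)) ^ 2)⁻¹)
            * ∏ l ∈ Finset.range (t + 1), ((π (t + 1) : ℂ) - (π l : ℂ)) ^ 2)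
        + (ω (t + 1) : ℂ) * ((ω (t + 1) : ℂ)⁻¹ *
            ∏ j ∈ (Finset.range (t + 2)).erase (t + 1), (((π (t + 1) : ℂ) - (π j : ℂ)) ^ 2)⁻¹)
            * ∏ l ∈ Finset.range (t + 1), ((π (t + 1) : ℂ) - (π l : ℂ)) ^ 2 := by
        rw [mul_add, add_mul, Finset.mul_sum, Finset.sum_mul]
    _ = (∑ x ∈ Finset.range (t + 1), (ω (t + 1) : ℂ) * ((cc π t x) ^ 2 * (ω x : ℂ)⁻¹)) + 1 := by
        rw [hlast, Finset.sum_congr rfl key]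
    _ = 1 + (ω (t + 1) : ℂ) * ∑ x ∈ Finset.range (t + 1), (cc π t x) ^ 2 * (ω x : ℂ)⁻¹ := by
        rw [← Finset.mul_sum]
        ring


end Stmt14Aux

/-- the initial values `D_k` and `D_{k+1}` of the Fredholm determinants. -/
theorem stmt14 (N k : ℕ) (hk1 : 1 ≤ k) (hkN : k ≤ N)
    (π ω : ℕ → ℝ)
    (hπ : ∀ i ≤ N, ∀ j ≤ N, π i = π j → i = j)
    (hω : ∀ x ≤ N, 0 < ω x)
    (P : ℕ → Polynomial ℂ)
    (hPm : ∀ n ≤ N, (P n).Monic ∧ (P n).natDegree = n)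
    (hPo : ∀ a ≤ N, ∀ b ≤ N, a ≠ b → ipR N π ω (P a) (P b) = 0)
    (c : ℂ) (hc : c = (ipR N π ω (P (k - 1)) (P (k - 1)))⁻¹)
    (Z qk : ℂ)
    (hZ : Z = ∏ i ∈ Finset.range k, ipR N π ω (P i) (P i))
    (hqk : qk = (∑ m ∈ Finset.range (k + 1), ((ω m : ℂ)⁻¹ *
        ∏ j ∈ (Finset.range (k + 1)).erase m, (((π m : ℂ) - (π j : ℂ)) ^ 2)⁻¹))⁻¹) :
    Dfred N k (CDker π ω c (P k) (P (k - 1))) =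
        Z⁻¹ * (∏ j ∈ Finset.range k, ∏ i ∈ Finset.range j, ((π i : ℂ) - (π j : ℂ)) ^ 2) *
          ∏ l ∈ Finset.range k, (ω l : ℂ) ∧
    Dfred N (k + 1) (CDker π ω c (P k) (P (k - 1))) =
        (ω k : ℂ) * qk⁻¹ * Dfred N k (CDker π ω c (P k) (P (k - 1))) *
          ∏ l ∈ Finset.range k, ((π k : ℂ) - (π l : ℂ)) ^ 2 := by
  obtain ⟨t, rfl⟩ : ∃ t, k = t + 1 := ⟨k - 1, by omega⟩
  have htN : t + 1 ≤ N := hkN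
  simp only [Nat.add_sub_cancel] at hc ⊢
  subst hc
  have hDk : Dfred N (t + 1) (CDker π ω (ipR N π ω (P t) (P t))⁻¹ (P (t + 1)) (P t))
      = Z⁻¹ * (∏ j ∈ Finset.range (t + 1), ∏ i ∈ Finset.range j, ((π i : ℂ) - (π j : ℂ)) ^ 2) *
          ∏ l ∈ Finset.range (t + 1), (ω l : ℂ) := by
    rw [Stmt14Aux.Dfred_eq hπ hω hPm hPo htN le_rfl (by omega),
      Stmt14Aux.detGk hπ hPm htN, hZ, ← Finset.prod_inv_distrib]
    ring
  refine ⟨hDk, ?_⟩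
  rw [show t + 1 + 1 = t + 2 from rfl,
    Stmt14Aux.Dfred_eq hπ hω hPm hPo htN (show t + 1 ≤ t + 2 by omega) (by omega),
    Stmt14Aux.detGk1 hπ hω hPm (by omega), hDk, hqk, inv_inv,
    show (1 + (ω (t + 1) : ℂ) * ∑ x ∈ Finset.range (t + 1), (Stmt14Aux.cc π t x) ^ 2 * (ω x : ℂ)⁻¹)
      = (ω (t + 1) : ℂ) * (∑ m ∈ Finset.range (t + 2), ((ω m : ℂ)⁻¹ *
          ∏ j ∈ (Finset.range (t + 2)).erase m, (((π m : ℂ) - (π j : ℂ)) ^ 2)⁻¹))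
        * ∏ l ∈ Finset.range (t + 1), ((π (t + 1) : ℂ) - (π l : ℂ)) ^ 2
      from (Stmt14Aux.scalarId hπ hω htN).symm,
    Stmt14Aux.detGk hπ hPm htN, hZ, ← Finset.prod_inv_distrib]
  ring
end
end
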